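/- arXiv:2012.06323 — 5 statements merged into one kernel-verified Lean document; each statement's English description precedes it below -/
import Mathlib

section
/- (Cauchy–Bunyakovskii–Gowers–Schwarz inequality.) Let d ≥ 1, C_d = {0,1}^d, and for each c ∈ C_d let f_c : ℤ → ℂ be a finitely supported function. Then |⟨(f_c)_{c ∈ C_d}⟩_{U^d(ℤ)}| ≤ ∏_{c ∈ C_d} (⟨(f_c, …, f_c)⟩_{U^d(ℤ)})^{1/2^d}; in particular, each ⟨(f_c, …, f_c)⟩_{U^d(ℤ)} is a nonnegative real number. -/
open scoped ComplexConjugate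
open Finset

set_option linter.unusedSectionVars false
set_option maxHeartbeats 1000000

section
variable {ι : Type*} [Fintype ι] [DecidableEq ι]

noncomputable def sgn (c : ι → Bool) (z : ℂ) : ℂ :=
  if Even (Finset.univ.filter (fun i => c i = true)).card then z else conj z

def cdot (c : ι → Bool) (h : ι → ℤ) : ℤ := ∑ i, if c i then h i else 0

noncomputable def Pterm (g : (ι → Bool) → ℤ → ℂ) (x : ℤ) (h : ι → ℤ) : ℂ :=
  ∏ c, sgn c (g c (x + cdot c h))

noncomputable def GF (T D : Finset ℤ) (g : (ι → Bool) → ℤ → ℂ) : ℂ :=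
  ∑ x ∈ T, ∑ h ∈ Fintype.piFinset (fun _ : ι => D), Pterm g x h

@[simp] lemma sgn_zero (c : ι → Bool) : sgn c 0 = 0 := by
  unfold sgn; split <;> simp

lemma sgn_eq_zero_iff (c : ι → Bool) (z : ℂ) : sgn c z = 0 ↔ z = 0 := by
  unfold sgn; split <;> simp

lemma cdot_false (h : ι → ℤ) : cdot (fun _ => false) h = 0 := by simp [cdot]

lemma Pterm_eq_zero_left {g : (ι → Bool) → ℤ → ℂ} {T : Finset ℤ}
    (hg : Function.support (g (fun _ => false)) ⊆ (T : Set ℤ)) {x : ℤ} (hx : x ∉ T)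
    (h : ι → ℤ) : Pterm g x h = 0 := by
  apply Finset.prod_eq_zero (Finset.mem_univ (fun _ => false))
  rw [sgn_eq_zero_iff, cdot_false, add_zero]
  by_contra hz
  exact hx (hg hz)

lemma cdot_single (i : ι) (h : ι → ℤ) : cdot (fun i' => decide (i' = i)) h = h i := by
  simp [cdot, Finset.sum_ite_eq']

lemma Pterm_eq_zero_of_not_box {g : (ι → Bool) → ℤ → ℂ} {T D : Finset ℤ}
    (hg : ∀ c, Function.support (g c) ⊆ (T : Set ℤ))
    (hD : ∀ a ∈ T, ∀ b ∈ T, b - a ∈ D) {x : ℤ} {h : ι → ℤ}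
    (hh : h ∉ Fintype.piFinset (fun _ : ι => D)) : Pterm g x h = 0 := by
  by_cases hx : x ∈ T
  · rw [Fintype.mem_piFinset] at hh
    push_neg at hh
    obtain ⟨i, hi⟩ := hh
    apply Finset.prod_eq_zero (Finset.mem_univ (fun i' => decide (i' = i)))
    rw [sgn_eq_zero_iff, cdot_single]
    by_contra hz
    have hmem : x + h i ∈ T := hg _ hz
    have := hD x hx _ hmem
    rw [add_sub_cancel_left] at this; exact hi this
  · exact Pterm_eq_zero_left (hg _) hx h

def extf (j : ι) {α : Type*} (b : α) (c' : {i : ι // i ≠ j} → α) : ι → α :=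
  fun i => if h : i = j then b else c' ⟨i, h⟩

@[simp] lemma extf_self (j : ι) {α : Type*} (b : α) (c' : {i : ι // i ≠ j} → α) :
    extf j b c' j = b := by simp [extf]

@[simp] lemma extf_ne (j : ι) {α : Type*} (b : α) (c' : {i : ι // i ≠ j} → α)
    (i : {i : ι // i ≠ j}) : extf j b c' i.1 = c' i := by simp [extf, i.2]

def splitE (j : ι) (α : Type*) : (ι → α) ≃ α × ({i : ι // i ≠ j} → α) where
  toFun c := (c j, fun i => c i.1)
  invFun p := extf j p.1 p.2
  left_inv c := by
    funext i
    by_cases h : i = j <;> simp [extf, h]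
  right_inv p := by
    ext i <;> simp

lemma update_extf (j : ι) {α : Type*} (b b'' : α) (c' : {i : ι // i ≠ j} → α) :
    Function.update (extf j b c') j b'' = extf j b'' c' := by
  funext i
  by_cases h : i = j <;> simp [Function.update, h, extf]

lemma sum_split {M : Type*} [AddCommMonoid M] (j : ι) (v : ι → M) :
    ∑ i, v i = v j + ∑ i : {i : ι // i ≠ j}, v i.1 := by
  rw [← Finset.sum_erase_add Finset.univ v (Finset.mem_univ j), add_comm]
  congr 1
  exact Finset.sum_subtype _ (by simp) _

lemma cdot_extf (j : ι) (b : Bool) (c' : {i : ι // i ≠ j} → Bool) (h : ι → ℤ) :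
    cdot (extf j b c') h = (if b then h j else 0) + cdot c' (fun i => h i.1) := by
  unfold cdot
  rw [sum_split j]
  simp

lemma card_extf (j : ι) (b : Bool) (c' : {i : ι // i ≠ j} → Bool) :
    (Finset.univ.filter (fun i => extf j b c' i = true)).card
      = (if b then 1 else 0) + (Finset.univ.filter (fun i => c' i = true)).card := by
  rw [Finset.card_filter, Finset.card_filter, sum_split j]
  simp

lemma sgn_extf_false (j : ι) (c' : {i : ι // i ≠ j} → Bool) (z : ℂ) :
    sgn (extf j false c') z = sgn c' z := by
  unfold sgn
  rw [card_extf]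
  simp

lemma sgn_extf_true (j : ι) (c' : {i : ι // i ≠ j} → Bool) (z : ℂ) :
    sgn (extf j true c') z = conj (sgn c' z) := by
  unfold sgn
  rw [card_extf]
  by_cases h : Even (Finset.univ.filter (fun i => c' i = true)).card <;>
    simp [h, Nat.even_add_one, add_comm 1, Nat.even_add_one.mpr]

lemma Pterm_split (j : ι) (g : (ι → Bool) → ℤ → ℂ) (x : ℤ) (h : ι → ℤ) :
    Pterm g x h = Pterm (fun c' => g (extf j false c')) x (fun i => h i.1)
      * conj (Pterm (fun c' => g (extf j true c')) (x + h j) (fun i => h i.1)) := by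
  unfold Pterm
  rw [← Equiv.prod_comp ((splitE j Bool).symm) (fun c => sgn c (g c (x + cdot c h)))]
  rw [Fintype.prod_prod_type (fun p : Bool × ({i : ι // i ≠ j} → Bool) =>
    sgn ((splitE j Bool).symm p) (g ((splitE j Bool).symm p)
      (x + cdot ((splitE j Bool).symm p) h)))]
  rw [Fintype.prod_bool]
  have hsymm : ∀ (b : Bool) (c' : {i : ι // i ≠ j} → Bool),
      (splitE j Bool).symm (b, c') = extf j b c' := fun _ _ => rfl
  rw [mul_comm]
  congr 1
  · apply Finset.prod_congr rfl
    intro c' _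
    rw [hsymm, sgn_extf_false, cdot_extf]
    norm_num
  · rw [map_prod]
    apply Finset.prod_congr rfl
    intro c' _
    rw [hsymm, sgn_extf_true, cdot_extf]
    norm_num [add_assoc]

lemma shift_sum {T D : Finset ℤ} (hD : ∀ a ∈ T, ∀ b ∈ T, b - a ∈ D)
    {W : ℤ → ℂ} (hW : ∀ y, W y ≠ 0 → y ∈ T) {x : ℤ} (hx : x ∈ T) :
    ∑ m ∈ D, W (x + m) = ∑ y ∈ T, W y := by
  rw [← Finset.sum_image (f := W) (g := fun m => x + m) (by intros a _ b _ hab; simpa using hab)]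
  have h1 : ∑ y ∈ D.image (fun m => x + m), W y
      = ∑ y ∈ D.image (fun m => x + m) ∪ T, W y := by
    apply Finset.sum_subset Finset.subset_union_left
    intro y _ hyn
    by_contra hz
    have hyT : y ∈ T := hW y hz
    have : y - x ∈ D := hD x hx y hyT
    exact hyn (Finset.mem_image.mpr ⟨y - x, this, by omega⟩)
  have h2 : ∑ y ∈ T, W y = ∑ y ∈ D.image (fun m => x + m) ∪ T, W y := by
    apply Finset.sum_subset Finset.subset_union_right
    intro y _ hyn
    by_contra hz
    exact hyn (hW y hz)
  rw [h1, ← h2]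

lemma key (T D : Finset ℤ) (g : (ι → Bool) → ℤ → ℂ)
    (hg : ∀ c, Function.support (g c) ⊆ (T : Set ℤ))
    (hD : ∀ a ∈ T, ∀ b ∈ T, b - a ∈ D) (j : ι) :
    GF T D g = ∑ h' ∈ Fintype.piFinset (fun _ : {i : ι // i ≠ j} => D),
      (∑ x ∈ T, Pterm (fun c' => g (extf j false c')) x h') *
        conj (∑ x ∈ T, Pterm (fun c' => g (extf j true c')) x h') := by
  set g0 := fun c' => g (extf j false c') with hg0
  set g1 := fun c' => g (extf j true c') with hg1
  have hW : ∀ (h' : {i : ι // i ≠ j} → ℤ) (y : ℤ), Pterm g1 y h' ≠ 0 → y ∈ T := by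
    intro h' y hz
    by_contra hy
    exact hz (Pterm_eq_zero_left (g := g1) (by rw [hg1]; exact hg _) hy h')
  calc GF T D g
      = ∑ x ∈ T, ∑ h ∈ Fintype.piFinset (fun _ : ι => D),
          Pterm g0 x (fun i => h i.1) * conj (Pterm g1 (x + h j) (fun i => h i.1)) := by
        apply Finset.sum_congr rfl; intro x _
        apply Finset.sum_congr rfl; intro h _
        exact Pterm_split j g x h
    _ = ∑ x ∈ T, ∑ p ∈ (Fintype.piFinset (fun _ : {i : ι // i ≠ j} => D)) ×ˢ D,
          Pterm g0 x p.1 * conj (Pterm g1 (x + p.2) p.1) := by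
        apply Finset.sum_congr rfl; intro x _
        apply Finset.sum_nbij' (fun h => ((fun i => h i.1), h j)) (fun p => extf j p.2 p.1)
        · intro h hh
          rw [Fintype.mem_piFinset] at hh
          rw [Finset.mem_product]
          exact ⟨Fintype.mem_piFinset.mpr (fun i => hh i.1), hh j⟩
        · intro p hp
          rw [Finset.mem_product] at hp
          rw [Fintype.mem_piFinset]
          intro i
          by_cases h : i = j
          · subst h; simpa using hp.2
          · have := Fintype.mem_piFinset.mp hp.1 ⟨i, h⟩
            simpa [extf, h] using this
        · intro h _
          exact (splitE j ℤ).left_inv h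
        · intro p _
          ext <;> simp
        · intro h _
          rfl
    _ = ∑ h' ∈ Fintype.piFinset (fun _ : {i : ι // i ≠ j} => D),
          (∑ x ∈ T, Pterm g0 x h') * conj (∑ x ∈ T, Pterm g1 x h') := by
        rw [Finset.sum_comm]
        rw [Finset.sum_product (f := fun p => ∑ x ∈ T, Pterm g0 x p.1 * conj (Pterm g1 (x + p.2) p.1))]
        apply Finset.sum_congr rfl; intro h' _
        rw [Finset.sum_comm, Finset.sum_mul]
        apply Finset.sum_congr rfl; intro x hx
        rw [← shift_sum hD (hW h') hx, map_sum, Finset.mul_sum]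
  done

lemma GF_flip (T D : Finset ℤ) (g : (ι → Bool) → ℤ → ℂ)
    (hg : ∀ c, Function.support (g c) ⊆ (T : Set ℤ))
    (hD : ∀ a ∈ T, ∀ b ∈ T, b - a ∈ D) (j : ι) (ε : Bool) :
    GF T D (fun c => g (Function.update c j ε))
      = ((∑ h' ∈ Fintype.piFinset (fun _ : {i : ι // i ≠ j} => D),
          Complex.normSq (∑ x ∈ T, Pterm (fun c' => g (extf j ε c')) x h') : ℝ) : ℂ) := by
  rw [key T D _ (fun c => hg _) hD j]
  push_cast
  apply Finset.sum_congr rfl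
  intro h' _
  have e0 : (fun c' => g (Function.update (extf j false c') j ε))
      = fun c' => g (extf j ε c') := by
    funext c'; rw [update_extf]
  have e1 : (fun c' => g (Function.update (extf j true c') j ε))
      = fun c' => g (extf j ε c') := by
    funext c'; rw [update_extf]
  rw [e0, e1, Complex.mul_conj]

lemma GF_flip_re (T D : Finset ℤ) (g : (ι → Bool) → ℤ → ℂ)
    (hg : ∀ c, Function.support (g c) ⊆ (T : Set ℤ))
    (hD : ∀ a ∈ T, ∀ b ∈ T, b - a ∈ D) (j : ι) (ε : Bool) :
    0 ≤ (GF T D (fun c => g (Function.update c j ε))).re ∧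
      (GF T D (fun c => g (Function.update c j ε))).im = 0 ∧
      ‖GF T D (fun c => g (Function.update c j ε))‖
        = (GF T D (fun c => g (Function.update c j ε))).re := by
  rw [GF_flip T D g hg hD j ε]
  have hnn : (0:ℝ) ≤ ∑ h' ∈ Fintype.piFinset (fun _ : {i : ι // i ≠ j} => D),
      Complex.normSq (∑ x ∈ T, Pterm (fun c' => g (extf j ε c')) x h') :=
    Finset.sum_nonneg (fun _ _ => Complex.normSq_nonneg _)
  refine ⟨by simpa using hnn, by simp, ?_⟩
  rw [Complex.norm_real, Real.norm_eq_abs, Complex.ofReal_re, abs_of_nonneg hnn]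

lemma GF_step (T D : Finset ℤ) (g : (ι → Bool) → ℤ → ℂ)
    (hg : ∀ c, Function.support (g c) ⊆ (T : Set ℤ))
    (hD : ∀ a ∈ T, ∀ b ∈ T, b - a ∈ D) (j : ι) :
    ‖GF T D g‖ ^ 2 ≤
      ‖GF T D (fun c => g (Function.update c j false))‖ *
        ‖GF T D (fun c => g (Function.update c j true))‖ := by
  set B := Fintype.piFinset (fun _ : {i : ι // i ≠ j} => D) with hB
  set U0 : ({i : ι // i ≠ j} → ℤ) → ℂ :=
    fun h' => ∑ x ∈ T, Pterm (fun c' => g (extf j false c')) x h' with hU0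
  set U1 : ({i : ι // i ≠ j} → ℤ) → ℂ :=
    fun h' => ∑ x ∈ T, Pterm (fun c' => g (extf j true c')) x h' with hU1
  have h1 : ‖GF T D g‖ ≤ ∑ h' ∈ B, ‖U0 h'‖ * ‖U1 h'‖ := by
    rw [key T D g hg hD j]
    refine le_trans (norm_sum_le _ _) ?_
    apply Finset.sum_le_sum
    intro h' _
    rw [norm_mul, Complex.norm_conj]
  have h2 : (∑ h' ∈ B, ‖U0 h'‖ * ‖U1 h'‖) ^ 2
      ≤ (∑ h' ∈ B, Complex.normSq (U0 h')) * (∑ h' ∈ B, Complex.normSq (U1 h')) := by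
    refine le_trans (Finset.sum_mul_sq_le_sq_mul_sq B _ _) ?_
    apply le_of_eq
    congr 1 <;> (apply Finset.sum_congr rfl; intro h' _; rw [Complex.sq_norm])
  have h3 : ‖GF T D g‖ ^ 2
      ≤ (∑ h' ∈ B, Complex.normSq (U0 h')) * (∑ h' ∈ B, Complex.normSq (U1 h')) :=
    le_trans (pow_le_pow_left₀ (norm_nonneg _) h1 2) h2
  have e0 := GF_flip T D g hg hD j false
  have e1 := GF_flip T D g hg hD j true
  rw [e0, e1, Complex.norm_real, Complex.norm_real, Real.norm_eq_abs, Real.norm_eq_abs,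
    abs_of_nonneg (Finset.sum_nonneg (fun _ _ => Complex.normSq_nonneg _)),
    abs_of_nonneg (Finset.sum_nonneg (fun _ _ => Complex.normSq_nonneg _))]
  exact h3

lemma prod_update (j : ι) {M : Type*} [CommMonoid M] (R : (ι → Bool) → M) (ε : Bool) :
    ∏ b, R (Function.update b j ε) = (∏ c' : {i : ι // i ≠ j} → Bool, R (extf j ε c')) ^ 2 := by
  rw [← Equiv.prod_comp (splitE j Bool).symm (fun b => R (Function.update b j ε))]
  rw [Fintype.prod_prod_type (fun p : Bool × ({i : ι // i ≠ j} → Bool) =>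
    R (Function.update ((splitE j Bool).symm p) j ε))]
  have : ∀ (δ : Bool) (c' : {i : ι // i ≠ j} → Bool),
      Function.update ((splitE j Bool).symm (δ, c')) j ε = extf j ε c' := by
    intro δ c'
    exact update_extf j δ ε c'
  simp only [this]
  rw [Fintype.prod_bool, sq]

lemma prod_all (j : ι) {M : Type*} [CommMonoid M] (R : (ι → Bool) → M) :
    ∏ b, R b = (∏ c' : {i : ι // i ≠ j} → Bool, R (extf j true c'))
      * (∏ c' : {i : ι // i ≠ j} → Bool, R (extf j false c')) := by
  rw [← Equiv.prod_comp (splitE j Bool).symm R]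
  rw [Fintype.prod_prod_type (fun p : Bool × ({i : ι // i ≠ j} → Bool) =>
    R ((splitE j Bool).symm p))]
  rw [Fintype.prod_bool]
  rfl

lemma GF_ind (T D : Finset ℤ) (f : (ι → Bool) → ℤ → ℂ)
    (hg : ∀ c, Function.support (f c) ⊆ (T : Set ℤ))
    (hD : ∀ a ∈ T, ∀ b ∈ T, b - a ∈ D) (S : Finset ι) :
    ‖GF T D f‖ ^ (2 ^ Fintype.card ι) ≤
      ∏ b : ι → Bool,
        ‖GF T D (fun c => f (fun i => if i ∈ S then b i else c i))‖ := by
  classical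
  induction S using Finset.induction_on with
  | empty =>
      have : ∀ b : ι → Bool,
          (fun c => f (fun i => if i ∈ (∅ : Finset ι) then b i else c i)) = f := by
        intro b; funext c; simp
      simp only [this]
      rw [Finset.prod_const, Finset.card_univ, Fintype.card_fun, Fintype.card_bool]
  | @insert j S hj ih =>
      set Q : (ι → Bool) → ℝ := fun b =>
        ‖GF T D (fun c => f (fun i => if i ∈ insert j S then b i else c i))‖
        with hQ
      set P : (ι → Bool) → ℝ := fun b =>
        ‖GF T D (fun c => f (fun i => if i ∈ S then b i else c i))‖
        with hP
      have hstep : ∀ b : ι → Bool, P b ^ 2 ≤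
          Q (Function.update b j false) * Q (Function.update b j true) := by
        intro b
        have hgb : ∀ c : ι → Bool,
            Function.support (f (fun i => if i ∈ S then b i else c i))
            ⊆ (T : Set ℤ) := fun c => hg _
        have hmain := GF_step T D (fun c => f (fun i => if i ∈ S then b i else c i)) hgb hD j
        have hfam : ∀ ε : Bool,
            (fun c => f (fun i => if i ∈ S then b i else (Function.update c j ε) i))
              = (fun c => f (fun i =>
                  if i ∈ insert j S then (Function.update b j ε) i else c i)) := by
          intro ε
          funext c
          have harg : (fun i => if i ∈ S then b i else (Function.update c j ε) i)
              = (fun i => if i ∈ insert j S then (Function.update b j ε) i else c i) := by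
            funext i
            by_cases hij : i = j
            · subst hij
              simp [hj]
            · by_cases hiS : i ∈ S <;>
                simp [Finset.mem_insert, hij, hiS, Function.update_of_ne hij]
          rw [harg]
        rw [hfam false, hfam true] at hmain
        exact hmain
      have hprodQ : ∏ b : ι → Bool,
          (Q (Function.update b j false) * Q (Function.update b j true))
            = (∏ b : ι → Bool, Q b) ^ 2 := by
        rw [Finset.prod_mul_distrib, prod_update j Q false, prod_update j Q true,
          prod_all j Q]
        ring
      have hQnn : ∀ b, 0 ≤ Q b := fun b => norm_nonneg _
      have hPnn : ∀ b, 0 ≤ P b := fun b => norm_nonneg _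
      have h1 : ‖GF T D f‖ ^ (2 ^ Fintype.card ι) ≤ ∏ b : ι → Bool, P b := ih
      have h2 : (∏ b : ι → Bool, P b) ^ 2 ≤ (∏ b : ι → Bool, Q b) ^ 2 := by
        rw [← hprodQ, ← Finset.prod_pow]
        exact Finset.prod_le_prod (fun b _ => sq_nonneg _) (fun b _ => hstep b)
      have h3 : (∏ b : ι → Bool, P b) ≤ ∏ b : ι → Bool, Q b := by
        have := abs_le_abs (by positivity : (0:ℝ) ≤ ∏ b : ι → Bool, Q b)
        nlinarith [Finset.prod_nonneg (fun b (_ : b ∈ Finset.univ) => hPnn b),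
          Finset.prod_nonneg (fun b (_ : b ∈ Finset.univ) => hQnn b)]
      exact le_trans h1 h3

end

/-- The Gowers inner product `⟨(f_c)_{c ∈ {0,1}^d}⟩_{U^d(ℤ)}` of a family of finitely
supported functions `f c : ℤ → ℂ`:
`∑_{x ∈ ℤ} ∑_{h ∈ ℤ^d} ∏_{c ∈ {0,1}^d} 𝒞^{|c|} f_c (x + c·h)`, where `𝒞` is complex
conjugation and `|c|` is the number of ones in `c`. -/
noncomputable def gowersInner (d : ℕ) (f : (Fin d → Bool) → ℤ → ℂ) : ℂ :=
  ∑' x : ℤ, ∑' h : Fin d → ℤ, ∏ c : Fin d → Bool,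
    (if Even (Finset.univ.filter (fun i => c i = true)).card
      then f c (x + ∑ i, if c i then h i else 0)
      else conj (f c (x + ∑ i, if c i then h i else 0)))


lemma gowersInner_eq_GF (d : ℕ) (T D : Finset ℤ) (g : (Fin d → Bool) → ℤ → ℂ)
    (hg : ∀ c, Function.support (g c) ⊆ (T : Set ℤ))
    (hD : ∀ a ∈ T, ∀ b ∈ T, b - a ∈ D) :
    gowersInner d g = GF T D g := by
  have h0 : gowersInner d g = ∑' x : ℤ, ∑' h : Fin d → ℤ, Pterm g x h := rfl
  rw [h0]
  have hin : ∀ x : ℤ, (∑' h : Fin d → ℤ, Pterm g x h)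
      = ∑ h ∈ Fintype.piFinset (fun _ : Fin d => D), Pterm g x h := fun x =>
    tsum_eq_sum (fun h hh => Pterm_eq_zero_of_not_box hg hD hh)
  rw [tsum_congr hin]
  exact tsum_eq_sum (fun x hx =>
    Finset.sum_eq_zero (fun h _ => Pterm_eq_zero_left (hg _) hx h))


/-- Cauchy–Bunyakovskii–Gowers–Schwarz inequality: the Gowers inner product of a
family of finitely supported functions `f_c : ℤ → ℂ` is bounded in absolute value by
`∏_c ⟨(f_c,…,f_c)⟩^{1/2^d}`; in particular each diagonal Gowers inner product
`⟨(f_c,…,f_c)⟩ = ‖f_c‖_{U^d}^{2^d}` is a nonnegative real number. -/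
theorem gowers_cauchy_schwarz (d : ℕ) (hd : 1 ≤ d)
    (f : (Fin d → Bool) → ℤ → ℂ)
    (hf : ∀ c, (Function.support (f c)).Finite) :
    (∀ c : Fin d → Bool,
        0 ≤ (gowersInner d (fun _ => f c)).re ∧ (gowersInner d (fun _ => f c)).im = 0) ∧
    ‖gowersInner d f‖ ≤
      ∏ c : Fin d → Bool, (gowersInner d (fun _ => f c)).re ^ ((1 : ℝ) / 2 ^ d) := by
  classical
  set T : Finset ℤ := Finset.univ.biUnion (fun c : Fin d → Bool => (hf c).toFinset) with hTdef
  set D : Finset ℤ := T.biUnion (fun a => T.image (fun b => b - a)) with hDdef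
  have hT : ∀ c, Function.support (f c) ⊆ (T : Set ℤ) := by
    intro c x hx
    simp only [hTdef, Finset.coe_biUnion, Set.mem_iUnion, Finset.coe_univ, Set.mem_univ,
      Finset.mem_coe]
    exact ⟨c, trivial, by simpa using (hf c).mem_toFinset.mpr hx⟩
  have hD : ∀ a ∈ T, ∀ b ∈ T, b - a ∈ D := by
    intro a ha b hb
    rw [hDdef, Finset.mem_biUnion]
    exact ⟨a, ha, Finset.mem_image.mpr ⟨b, hb, rfl⟩⟩
  have j0 : Fin d := ⟨0, hd⟩
  have hTc : ∀ (c : Fin d → Bool) (c' : Fin d → Bool),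
      Function.support ((fun _ : Fin d → Bool => f c) c') ⊆ (T : Set ℤ) := fun c _ => hT c
  have hdiagGF : ∀ c : Fin d → Bool, gowersInner d (fun _ => f c) = GF T D (fun _ => f c) :=
    fun c => gowersInner_eq_GF d T D _ (hTc c) hD
  have hdiag : ∀ c : Fin d → Bool,
      0 ≤ (GF T D (fun _ : Fin d → Bool => f c)).re ∧
      (GF T D (fun _ : Fin d → Bool => f c)).im = 0 ∧
      ‖GF T D (fun _ : Fin d → Bool => f c)‖
        = (GF T D (fun _ : Fin d → Bool => f c)).re := fun c =>
    GF_flip_re T D (fun _ => f c) (hTc c) hD j0 false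
  constructor
  · intro c
    rw [hdiagGF c]
    exact ⟨(hdiag c).1, (hdiag c).2.1⟩
  · have hmain := GF_ind T D f hT hD Finset.univ
    rw [Fintype.card_fin] at hmain
    have hprod : ∏ b : Fin d → Bool,
        ‖GF T D (fun c => f (fun i => if i ∈ Finset.univ then b i else c i))‖
          = ∏ b : Fin d → Bool, (GF T D (fun _ : Fin d → Bool => f b)).re := by
      apply Finset.prod_congr rfl
      intro b _
      have : (fun c : Fin d → Bool => f (fun i => if i ∈ Finset.univ then b i else c i))
          = (fun _ : Fin d → Bool => f b) := by
        funext c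
        simp
      rw [this, (hdiag b).2.2]
    rw [hprod] at hmain
    -- now hmain : |GF T D f| ^ (2^d) ≤ ∏ b, (GF T D (fun _ => f b)).re
    rw [gowersInner_eq_GF d T D f hT hD]
    have hgoalr : ∏ c : Fin d → Bool, (gowersInner d (fun _ => f c)).re ^ ((1 : ℝ) / 2 ^ d)
        = ∏ c : Fin d → Bool, (GF T D (fun _ : Fin d → Bool => f c)).re ^ ((1 : ℝ) / 2 ^ d) := by
      apply Finset.prod_congr rfl
      intro c _
      rw [hdiagGF c]
    rw [hgoalr]
    set a := ‖GF T D f‖ with ha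
    set N : ℕ := 2 ^ d with hN
    have haN : (0:ℝ) ≤ a := norm_nonneg _
    have hNcast : ((1:ℝ) / 2 ^ d) = ((N:ℝ))⁻¹ := by
      rw [hN]
      push_cast
      rw [one_div]
    have hrnn : ∀ b : Fin d → Bool, 0 ≤ (GF T D (fun _ : Fin d → Bool => f b)).re :=
      fun b => (hdiag b).1
    have h2 : (a ^ N) ^ ((N:ℝ))⁻¹ = a := by
      rw [← Real.rpow_natCast a N, ← Real.rpow_mul haN,
        mul_inv_cancel₀ (by positivity : (N:ℝ) ≠ 0), Real.rpow_one]
    have h3 : (a ^ N) ^ ((N:ℝ))⁻¹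
        ≤ (∏ b : Fin d → Bool, (GF T D (fun _ : Fin d → Bool => f b)).re) ^ ((N:ℝ))⁻¹ :=
      Real.rpow_le_rpow (pow_nonneg haN N) hmain (by positivity)
    rw [h2] at h3
    refine le_trans h3 ?_
    rw [← Real.finset_prod_rpow Finset.univ _ (fun b _ => hrnn b) ((N:ℝ))⁻¹]
    apply le_of_eq
    apply Finset.prod_congr rfl
    intro c _
    rw [hNcast]
end

section
/- Let (X, 𝒜, μ, T) be an ergodic dynamical system and f ∈ L^∞(X, μ). Then for every z ∈ ℂ with |z| = 1 and μ-almost every x ∈ X, limsup_{N→∞} |(1/N) ∑_{n=0}^{N−1} z^{n} f(T^{n} x)| ≤ ‖f‖_{U²}. -/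
open MeasureTheory Filter Finset Function
open scoped ComplexConjugate

set_option linter.unusedSectionVars false

section Helpers
variable {X : Type*} [MeasurableSpace X] {μ : Measure X}

lemma MeasureTheory.Integrable.comp_mp {T : X → X} (hT : MeasurePreserving T μ μ) {g : X → ℝ}
    (hg : Integrable g μ) : Integrable (fun x => g (T x)) μ :=
  (hT.integrable_comp hg.aestronglyMeasurable).mpr hg

/-- Garsia's maximal function recursion. -/
noncomputable def maxFn (T : X → X) (g : X → ℝ) : ℕ → X → ℝ
  | 0 => g
  | n + 1 => fun x => g x + max (maxFn T g n (T x)) 0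

lemma maxFn_measurable {T : X → X} (hT : Measurable T) {g : X → ℝ} (hg : Measurable g) :
    ∀ n, Measurable (maxFn T g n)
  | 0 => hg
  | n + 1 => hg.add (((maxFn_measurable hT hg n).comp hT).max measurable_const)

lemma maxFn_integrable {T : X → X} (hT : MeasurePreserving T μ μ)
    {g : X → ℝ} (hg : Integrable g μ) :
    ∀ n, Integrable (maxFn T g n) μ
  | 0 => hg
  | n + 1 => hg.add ((maxFn_integrable hT hg n).comp_mp hT).pos_part

lemma maxFn_mono (T : X → X) (g : X → ℝ) : ∀ n x, maxFn T g n x ≤ maxFn T g (n + 1) x := by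
  intro n
  induction n with
  | zero => intro x; simp [maxFn, le_add_of_nonneg_right, le_max_right]
  | succ n ih =>
      intro x
      simp only [maxFn]
      gcongr
      exact ih (T x)

theorem maximal_ergodic {T : X → X} (hT : MeasurePreserving T μ μ)
    (hTe : MeasurableEmbedding T)
    {g : X → ℝ} (hgm : Measurable g) (hg : Integrable g μ) (n : ℕ) :
    0 ≤ ∫ x in {y | 0 < maxFn T g n y}, g x ∂μ := by
  induction n with
  | zero =>
      apply setIntegral_nonneg (measurableSet_lt measurable_const hgm)
      intro x hx; exact hx.le
  | succ n _ =>
      set Φ := maxFn T g (n + 1) with hΦ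
      have hΦm : Measurable Φ := maxFn_measurable hTe.measurable hgm _
      have hΦi : Integrable Φ μ := maxFn_integrable hT hg _
      set E : Set X := {y | 0 < Φ y} with hE
      have hEm : MeasurableSet E := measurableSet_lt measurable_const hΦm
      -- On E, g ≥ Φ⁺ - (Φ ∘ T)⁺
      have key : ∀ x ∈ E, max (Φ x) 0 - max (Φ (T x)) 0 ≤ g x := by
        intro x hx
        have h1 : max (Φ x) 0 = Φ x := max_eq_left (le_of_lt hx)
        have h2 : Φ x = g x + max (maxFn T g n (T x)) 0 := rfl
        have h3 : max (maxFn T g n (T x)) 0 ≤ max (Φ (T x)) 0 :=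
          max_le_max (maxFn_mono T g n (T x)) le_rfl
        rw [h1, h2]; linarith
      have hi1 : Integrable (fun x => max (Φ x) 0) μ := hΦi.pos_part
      have hi2 : Integrable (fun x => max (Φ (T x)) 0) μ := (hΦi.comp_mp hT).pos_part
      have hint : Integrable (fun x => max (Φ x) 0 - max (Φ (T x)) 0) μ := hi1.sub hi2
      calc (0:ℝ) = ∫ x, (max (Φ x) 0 - max (Φ (T x)) 0) ∂μ := by
              rw [integral_sub hi1 hi2]
              rw [hT.integral_comp hTe (fun x => max (Φ x) 0)]
              ring
        _ ≤ ∫ x in E, (max (Φ x) 0 - max (Φ (T x)) 0) ∂μ := by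
              rw [← integral_add_compl hEm hint]
              have : ∫ x in Eᶜ, (max (Φ x) 0 - max (Φ (T x)) 0) ∂μ ≤ 0 := by
                apply setIntegral_nonpos hEm.compl
                intro x hx
                have : Φ x ≤ 0 := not_lt.mp hx
                have h1 : max (Φ x) 0 = 0 := max_eq_right this
                rw [h1]
                simp [le_max_right]
              linarith
        _ ≤ ∫ x in E, g x ∂μ :=
              setIntegral_mono_on (hint.integrableOn) (hg.integrableOn) hEm key

lemma sum_le_maxFn (T : X → X) (g : X → ℝ) :
    ∀ n x, (∑ j ∈ range (n + 1), g (T^[j] x)) ≤ maxFn T g n x := by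
  intro n
  induction n with
  | zero => intro x; simp [maxFn]
  | succ n ih =>
      intro x
      have : ∑ j ∈ range (n + 2), g (T^[j] x)
          = (∑ j ∈ range (n + 1), g (T^[j] (T x))) + g x := by
        rw [Finset.sum_range_succ' (fun j => g (T^[j] x)) (n + 1)]
        simp [Function.iterate_succ_apply]
      rw [this]
      have h2 : (∑ j ∈ range (n + 1), g (T^[j] (T x))) ≤ max (maxFn T g n (T x)) 0 :=
        le_trans (ih (T x)) (le_max_left _ _)
      show _ ≤ g x + max (maxFn T g n (T x)) 0
      linarith

theorem eventually_avg_le [IsProbabilityMeasure μ] {T : X → X} (hT : Ergodic T μ)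
    (hTe : MeasurableEmbedding T) {g : X → ℝ} (hgm : Measurable g)
    {C : ℝ} (hC : ∀ x, |g x| ≤ C) {ε : ℝ} (hε : 0 < ε) :
    ∀ᵐ x ∂μ, ∀ᶠ N : ℕ in atTop,
      (1 / (N : ℝ)) * ∑ n ∈ range N, g (T^[n] x) ≤ (∫ y, g y ∂μ) + ε := by
  have hTm : Measurable T := hTe.measurable
  have hTp : MeasurePreserving T μ μ := hT.toMeasurePreserving
  set c : ℝ := (∫ y, g y ∂μ) + ε / 2 with hc
  set h : X → ℝ := fun x => g x - c with hh
  have hhm : Measurable h := hgm.sub measurable_const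
  have hgi : Integrable g μ := by
    refine Integrable.mono' (integrable_const C) hgm.aestronglyMeasurable ?_
    exact Eventually.of_forall (fun x => by simpa using hC x)
  have hhi : Integrable h μ := hgi.sub (integrable_const c)
  -- the increasing sets
  set E : Set X := ⋃ n, {y | 0 < maxFn T h n y} with hEdef
  have hEnm : ∀ n, MeasurableSet {y | 0 < maxFn T h n y} := fun n =>
    measurableSet_lt measurable_const (maxFn_measurable hTm hhm n)
  have hEm : MeasurableSet E := MeasurableSet.iUnion hEnm
  have hmono : Monotone (fun n => {y | 0 < maxFn T h n y}) := by
    apply monotone_nat_of_le_succ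
    intro n x hx
    exact lt_of_lt_of_le hx (maxFn_mono T h n x)
  set A : Set X := ⋂ m, (fun x => T^[m] x) ⁻¹' E with hAdef
  have hAm : MeasurableSet A :=
    MeasurableSet.iInter fun m => hEm.preimage (hTm.iterate m)
  have hAsub : A ⊆ T ⁻¹' A := by
    intro x hx
    simp only [hAdef, Set.mem_iInter, Set.mem_preimage] at hx ⊢
    intro m
    have := hx (m + 1)
    rwa [iterate_succ_apply] at this
  rcases hT.ae_empty_or_univ_of_ae_le_preimage hAm.nullMeasurableSet
      (HasSubset.Subset.eventuallyLE hAsub) with hA0 | hA1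
  · -- μ A = 0 : good case
    have hA0' : μ A = 0 := ae_eq_empty.mp hA0
    rw [ae_iff]
    apply measure_mono_null _ hA0'
    intro x hx
    simp only [Set.mem_setOf_eq] at hx
    -- show x ∈ A
    by_contra hxA
    apply hx
    -- x ∉ A: some iterate escapes E
    simp only [hAdef, Set.mem_iInter, Set.mem_preimage] at hxA
    push_neg at hxA
    obtain ⟨m, hm⟩ := hxA
    have hSm : ∀ k, (∑ j ∈ range k, h (T^[j] (T^[m] x))) ≤ 0 := by
      intro k
      cases k with
      | zero => simp
      | succ k =>
          refine le_trans (sum_le_maxFn T h k _) ?_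
          by_contra hpos
          exact hm (Set.mem_iUnion.mpr ⟨k, not_le.mp hpos⟩)
    -- hence partial sums of h at x are bounded by a constant
    have hB : ∀ N, m ≤ N → (∑ n ∈ range N, h (T^[n] x)) ≤ m * (C + |c|) := by
      intro N hmN
      obtain ⟨k, rfl⟩ := Nat.exists_eq_add_of_le hmN
      have hsplit : (∑ n ∈ range (m + k), h (T^[n] x))
          = (∑ n ∈ range m, h (T^[n] x)) + ∑ j ∈ range k, h (T^[j] (T^[m] x)) := by
        rw [Finset.sum_range_add]
        congr 1
        refine Finset.sum_congr rfl fun j _ => ?_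
        rw [add_comm m j, Function.iterate_add_apply]
      rw [hsplit]
      have h1 : (∑ n ∈ range m, h (T^[n] x)) ≤ m * (C + |c|) := by
        calc (∑ n ∈ range m, h (T^[n] x)) ≤ ∑ n ∈ range m, (C + |c|) := by
              apply Finset.sum_le_sum
              intro i _
              have := hC (T^[i] x)
              have h2 : h (T^[i] x) = g (T^[i] x) - c := rfl
              have := abs_le.mp (hC (T^[i] x))
              have := neg_abs_le c
              simp only [h2]; linarith
          _ = m * (C + |c|) := by rw [Finset.sum_const, Finset.card_range]; ring
      linarith [hSm k]
    -- conclude eventual bound on averages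
    have hten : Tendsto (fun N : ℕ => (m * (C + |c|)) / N) atTop (nhds 0) :=
      tendsto_const_div_atTop_nhds_zero_nat _
    have hev1 : ∀ᶠ N : ℕ in atTop, (m * (C + |c|)) / N < ε / 2 :=
      (hten.eventually (eventually_lt_nhds (by positivity : (0:ℝ) < ε/2)))
    filter_upwards [hev1, eventually_ge_atTop (max m 1)] with N h1 h2
    have hNm : m ≤ N := le_trans (le_max_left _ _) h2
    have hN1 : 1 ≤ N := le_trans (le_max_right _ _) h2
    have hNpos : (0:ℝ) < N := by exact_mod_cast hN1
    have hsum : (∑ n ∈ range N, g (T^[n] x)) = (∑ n ∈ range N, h (T^[n] x)) + N * c := by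
      simp only [hh, Finset.sum_sub_distrib, Finset.sum_const, Finset.card_range,
        nsmul_eq_mul]
      ring
    rw [hsum]
    have := hB N hNm
    rw [one_div, inv_mul_le_iff₀ hNpos]
    calc (∑ n ∈ range N, h (T^[n] x)) + N * c ≤ m * (C + |c|) + N * c := by linarith
      _ ≤ N * (∫ y, g y ∂μ + ε) := by
          have : m * (C + |c|) < (ε / 2) * N := by
            rw [div_lt_iff₀ hNpos] at h1; linarith
          simp only [hc]; nlinarith
  · -- μ A = 1 : contradiction with the maximal ergodic theorem
    exfalso
    have hAuniv : μ Aᶜ = 0 := ae_eq_univ.mp hA1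
    have hAE : A ⊆ E := fun x hx => by
      have := Set.mem_iInter.mp hx 0
      simpa using this
    have hEc : μ Eᶜ = 0 :=
      measure_mono_null (Set.compl_subset_compl.mpr hAE) hAuniv
    have hEint : ∫ y in E, h y ∂μ = ∫ y, h y ∂μ := by
      rw [← integral_add_compl hEm hhi, setIntegral_measure_zero _ hEc, add_zero]
    have hpos : 0 ≤ ∫ y in E, h y ∂μ := by
      have := tendsto_setIntegral_of_monotone hEnm hmono (hhi.integrableOn)
      exact ge_of_tendsto this (Eventually.of_forall fun n =>
        maximal_ergodic hTp hTe hhm hhi n)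
    rw [hEint] at hpos
    have : ∫ y, h y ∂μ = (∫ y, g y ∂μ) - c := by
      rw [integral_sub hgi (integrable_const c), integral_const]
      simp
    rw [this, hc] at hpos
    linarith

theorem birkhoff_real [IsProbabilityMeasure μ] {T : X → X} (hT : Ergodic T μ)
    (hTe : MeasurableEmbedding T) {g : X → ℝ} (hgm : Measurable g)
    {C : ℝ} (hC : ∀ x, |g x| ≤ C) :
    ∀ᵐ x ∂μ, Tendsto (fun N : ℕ => (1 / (N : ℝ)) * ∑ n ∈ range N, g (T^[n] x))
      atTop (nhds (∫ y, g y ∂μ)) := by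
  have hup : ∀ᵐ x ∂μ, ∀ k : ℕ, ∀ᶠ N : ℕ in atTop,
      (1 / (N : ℝ)) * ∑ n ∈ range N, g (T^[n] x) ≤ (∫ y, g y ∂μ) + 1 / (k + 1) := by
    rw [ae_all_iff]
    intro k
    exact eventually_avg_le hT hTe hgm hC (by positivity)
  have hdown : ∀ᵐ x ∂μ, ∀ k : ℕ, ∀ᶠ N : ℕ in atTop,
      (∫ y, g y ∂μ) - 1 / (k + 1) ≤ (1 / (N : ℝ)) * ∑ n ∈ range N, g (T^[n] x) := by
    rw [ae_all_iff]
    intro k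
    have := eventually_avg_le hT hTe (g := fun x => -g x) (hgm.neg)
      (C := C) (fun x => by simpa using hC x) (ε := 1/(k+1)) (by positivity)
    filter_upwards [this] with x hx
    filter_upwards [hx] with N hN
    rw [integral_neg] at hN
    simp only [Finset.sum_neg_distrib, mul_neg] at hN
    linarith
  filter_upwards [hup, hdown] with x h1 h2
  rw [tendsto_order]
  constructor
  · intro b hb
    obtain ⟨k, hk⟩ := exists_nat_one_div_lt (by linarith : 0 < (∫ y, g y ∂μ) - b)
    filter_upwards [h2 k] with N hN
    have : (1:ℝ)/(k+1) < (∫ y, g y ∂μ) - b := by exact_mod_cast hk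
    linarith
  · intro b hb
    obtain ⟨k, hk⟩ := exists_nat_one_div_lt (by linarith : 0 < b - ∫ y, g y ∂μ)
    filter_upwards [h1 k] with N hN
    have : (1:ℝ)/(k+1) < b - ∫ y, g y ∂μ := by exact_mod_cast hk
    linarith

theorem birkhoff_complex [IsProbabilityMeasure μ] {T : X → X} (hT : Ergodic T μ)
    (hTe : MeasurableEmbedding T) {w : X → ℂ} (hwm : Measurable w)
    {C : ℝ} (hC : ∀ x, ‖w x‖ ≤ C) :
    ∀ᵐ x ∂μ, Tendsto (fun N : ℕ => (1 / (N : ℂ)) * ∑ n ∈ range N, w (T^[n] x))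
      atTop (nhds (∫ y, w y ∂μ)) := by
  have hwi : Integrable w μ := by
    refine Integrable.mono' (integrable_const C) hwm.aestronglyMeasurable ?_
    exact Eventually.of_forall hC
  have hre := birkhoff_real hT hTe (Complex.measurable_re.comp hwm)
    (C := C) (fun x => le_trans (Complex.abs_re_le_norm _) (hC x))
  have him := birkhoff_real hT hTe (Complex.measurable_im.comp hwm)
    (C := C) (fun x => le_trans (Complex.abs_im_le_norm _) (hC x))
  filter_upwards [hre, him] with x h1 h2
  have key : ∀ N : ℕ, (((1 / (N : ℝ)) * ∑ n ∈ range N, (w (T^[n] x)).re : ℝ) : ℂ)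
        + (((1 / (N : ℝ)) * ∑ n ∈ range N, (w (T^[n] x)).im : ℝ) : ℂ) * Complex.I
      = (1 / (N : ℂ)) * ∑ n ∈ range N, w (T^[n] x) := by
    intro N
    have : (∑ n ∈ range N, w (T^[n] x))
        = ∑ n ∈ range N, (((w (T^[n] x)).re : ℂ) + ((w (T^[n] x)).im : ℂ) * Complex.I) :=
      Finset.sum_congr rfl fun n _ => (Complex.re_add_im _).symm
    rw [this, Finset.sum_add_distrib, ← Finset.sum_mul]
    push_cast
    ring
  have hlim : Tendsto (fun N : ℕ =>
      (((1 / (N : ℝ)) * ∑ n ∈ range N, (w (T^[n] x)).re : ℝ) : ℂ)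
        + (((1 / (N : ℝ)) * ∑ n ∈ range N, (w (T^[n] x)).im : ℝ) : ℂ) * Complex.I)
      atTop (nhds (((∫ y, (w y).re ∂μ : ℝ) : ℂ) + ((∫ y, (w y).im ∂μ : ℝ) : ℂ) * Complex.I)) := by
    exact (((Complex.continuous_ofReal.tendsto _).comp h1).add
      (((Complex.continuous_ofReal.tendsto _).comp h2).mul_const Complex.I))
  have hval : (((∫ y, (w y).re ∂μ : ℝ) : ℂ) + ((∫ y, (w y).im ∂μ : ℝ) : ℂ) * Complex.I)
      = ∫ y, w y ∂μ := by
    have e1 : ∫ y, (w y).re ∂μ = (∫ y, w y ∂μ).re := by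
      simpa using integral_re (𝕜 := ℂ) hwi
    have e2 : ∫ y, (w y).im ∂μ = (∫ y, w y ∂μ).im := by
      simpa using integral_im (𝕜 := ℂ) hwi
    rw [e1, e2, Complex.re_add_im]
  rw [← hval]
  exact hlim.congr (fun N => key N)

end Helpers

-- square splitting helper
lemma square_split (F : ℕ → ℕ → ℝ) (n : ℕ) :
    ∑ h ∈ range n, ∑ h' ∈ range n, F h h'
      = (∑ h ∈ range n, F h h) + ∑ h ∈ range n, ∑ i ∈ range h, (F h i + F i h) := by
  induction n with
  | zero => simp
  | succ n ih =>
      rw [Finset.sum_range_succ]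
      have e1 : ∑ h ∈ range n, ∑ h' ∈ range (n+1), F h h'
          = (∑ h ∈ range n, ∑ h' ∈ range n, F h h') + ∑ h ∈ range n, F h n := by
        rw [← Finset.sum_add_distrib]
        exact Finset.sum_congr rfl fun h _ => Finset.sum_range_succ _ _
      rw [Finset.sum_range_succ (fun h' => F n h'), e1, ih]
      rw [Finset.sum_range_succ (fun h => F h h), Finset.sum_range_succ
        (fun h => ∑ i ∈ range h, (F h i + F i h)), Finset.sum_add_distrib]
      ring

namespace VDC
variable (a : ℕ → ℂ) (M N : ℕ)

noncomputable def bb : ℕ → ℂ := fun j => if M ≤ j ∧ j < N + M then a (j - M) else 0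

noncomputable def cc : ℕ → ℂ := fun k => ∑ h ∈ range (M + 1), bb a M N (k + h)

noncomputable def GG : ℕ → ℂ :=
  fun d => ∑ j ∈ Ico M (N + M), bb a M N (j + d) * conj (bb a M N j)

lemma bb_supp : ∀ j, (j < M ∨ N + M ≤ j) → bb a M N j = 0 := by
  intro j hj; rw [bb, if_neg]; omega

lemma bb_val : ∀ n, bb a M N (n + M) = if n < N then a n else 0 := by
  intro n
  by_cases h : n < N
  · rw [bb, if_pos (by omega), if_pos h]; congr 1; omega
  · rw [bb, if_neg (by omega), if_neg h]

lemma window_sum (u : ℕ → ℂ) (hsupp : ∀ j, (j < M ∨ N + M ≤ j) → u j = 0)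
    {t K : ℕ} (ht : t ≤ M) (hK : N + M ≤ t + K) :
    ∑ k ∈ range K, u (k + t) = ∑ j ∈ Ico M (N + M), u j := by
  have h1 : ∑ k ∈ range K, u (k + t) = ∑ j ∈ Ico t (t + K), u j := by
    rw [Finset.sum_Ico_eq_sum_range]
    refine Finset.sum_congr (by congr 1; omega) fun k _ => by rw [add_comm]
  rw [h1]
  symm
  apply Finset.sum_subset
  · intro j hj
    simp only [Finset.mem_Ico] at hj ⊢
    omega
  · intro j hj hj2
    simp only [Finset.mem_Ico] at hj hj2
    exact hsupp j (by omega)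

lemma Ico_to_a (v : ℕ → ℂ) :
    ∑ j ∈ Ico M (N + M), v j = ∑ n ∈ range N, v (n + M) := by
  rw [Finset.sum_Ico_eq_sum_range]
  refine Finset.sum_congr (by congr 1; omega) fun k _ => by rw [add_comm]

lemma GG_supp : ∀ d j, (j < M ∨ N + M ≤ j) → bb a M N (j + d) * conj (bb a M N j) = 0 := by
  intro d j hj
  rw [bb_supp a M N j hj]
  simp

lemma GG_val : ∀ d, GG a M N d = ∑ n ∈ range (N - d), a (n + d) * conj (a n) := by
  intro d
  rw [GG, Ico_to_a M N (fun j => bb a M N (j + d) * conj (bb a M N j))]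
  have e1 : ∀ n, bb a M N (n + M + d) * conj (bb a M N (n + M))
      = (if n + d < N then a (n + d) else 0) * conj (if n < N then a n else 0) := by
    intro n
    rw [show n + M + d = (n + d) + M by ring, bb_val, bb_val]
  rw [Finset.sum_congr rfl fun n _ => e1 n]
  rw [← Finset.sum_subset (Finset.range_subset_range.mpr (by omega : N - d ≤ N))
    (fun k hk hk2 => by
      simp only [Finset.mem_range] at hk hk2
      rw [if_neg (by omega)]
      simp)]
  refine Finset.sum_congr rfl fun k hk => ?_
  simp only [Finset.mem_range] at hk
  rw [if_pos (by omega), if_pos (by omega)]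

lemma cc_corr {h h' : ℕ} (hh : h ≤ M) (hh' : h' ≤ h) :
    ∑ k ∈ range (N + M + 1), bb a M N (k + h) * conj (bb a M N (k + h'))
      = GG a M N (h - h') := by
  have e1 : ∀ k, bb a M N (k + h) * conj (bb a M N (k + h'))
      = bb a M N ((k + h') + (h - h')) * conj (bb a M N (k + h')) := by
    intro k; congr 2; omega
  rw [Finset.sum_congr rfl fun k _ => e1 k]
  exact window_sum M N (fun j => bb a M N (j + (h - h')) * conj (bb a M N j))
    (GG_supp a M N (h - h')) (by omega) (by omega)

theorem vdc : ‖∑ n ∈ range N, a n‖^2 * (M + 1)^2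
    ≤ (N + M + 1 : ℝ) * ((M + 1) * ∑ n ∈ range N, ‖a n‖^2
      + 2 * ∑ h ∈ range (M + 1), ∑ i ∈ range h,
          ‖∑ n ∈ range (N - (i+1)), a (n + (i+1)) * conj (a n)‖) := by
  -- Step 1 : sum of cc over range K is (M+1) times the sum of a
  have step1 : ∑ k ∈ range (N + M + 1), cc a M N k = (M + 1 : ℂ) * ∑ n ∈ range N, a n := by
    unfold cc
    rw [Finset.sum_comm]
    have : ∀ h ∈ range (M + 1), (∑ k ∈ range (N + M + 1), bb a M N (k + h))
        = ∑ n ∈ range N, a n := by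
      intro h hh
      simp only [Finset.mem_range] at hh
      rw [window_sum M N (bb a M N) (bb_supp a M N) (by omega) (by omega),
        Ico_to_a M N (bb a M N)]
      exact Finset.sum_congr rfl fun n hn => by
        rw [bb_val, if_pos (Finset.mem_range.mp hn)]
    rw [Finset.sum_congr rfl this, Finset.sum_const, Finset.card_range, nsmul_eq_mul]
    push_cast; ring
  -- Step 2 : Cauchy–Schwarz
  have step2 : ‖∑ n ∈ range N, a n‖^2 * (M + 1)^2
      ≤ (N + M + 1 : ℝ) * ∑ k ∈ range (N + M + 1), ‖cc a M N k‖^2 := by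
    have e1 : ‖∑ k ∈ range (N + M + 1), cc a M N k‖ = ‖∑ n ∈ range N, a n‖ * (M + 1) := by
      rw [step1, norm_mul]
      rw [show ((M:ℂ) + 1) = ((M + 1 : ℕ) : ℂ) by push_cast; ring, Complex.norm_natCast]
      push_cast
      ring
    have e2 : ‖∑ k ∈ range (N + M + 1), cc a M N k‖
        ≤ ∑ k ∈ range (N + M + 1), ‖cc a M N k‖ := norm_sum_le _ _
    have e3 : (∑ k ∈ range (N + M + 1), ‖cc a M N k‖)^2
        ≤ (N + M + 1 : ℝ) * ∑ k ∈ range (N + M + 1), ‖cc a M N k‖^2 := by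
      have := sq_sum_le_card_mul_sum_sq (s := range (N + M + 1))
        (f := fun k => ‖cc a M N k‖)
      simpa [Finset.card_range] using this
    calc ‖∑ n ∈ range N, a n‖^2 * (M + 1)^2
        = (‖∑ k ∈ range (N + M + 1), cc a M N k‖)^2 := by rw [e1]; ring
      _ ≤ (∑ k ∈ range (N + M + 1), ‖cc a M N k‖)^2 :=
            pow_le_pow_left₀ (norm_nonneg _) e2 2
      _ ≤ _ := e3
  -- Step 3 : expand ‖cc k‖² and regroup into correlations
  have step3 : ∑ k ∈ range (N + M + 1), ‖cc a M N k‖^2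
      = ∑ h ∈ range (M+1), ∑ h' ∈ range (M+1),
          (∑ k ∈ range (N + M + 1), bb a M N (k + h) * conj (bb a M N (k + h'))).re := by
    have e1 : ∀ k, ‖cc a M N k‖^2
        = ∑ h ∈ range (M+1), ∑ h' ∈ range (M+1),
            (bb a M N (k + h) * conj (bb a M N (k + h'))).re := by
      intro k
      have e0 : (cc a M N k * conj (cc a M N k)).re = ‖cc a M N k‖^2 := by
        rw [Complex.mul_conj]
        simp [Complex.sq_norm]
      rw [← e0]
      unfold cc
      rw [map_sum, Finset.sum_mul_sum, Complex.re_sum]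
      exact Finset.sum_congr rfl fun h _ => by rw [Complex.re_sum]
    rw [Finset.sum_congr rfl fun k _ => e1 k]
    rw [Finset.sum_comm]
    refine Finset.sum_congr rfl fun h _ => ?_
    rw [Finset.sum_comm]
    refine Finset.sum_congr rfl fun h' _ => ?_
    rw [Complex.re_sum]
  -- Step 4 : analyze the double sum via the square split
  have step4 : ∑ h ∈ range (M+1), ∑ h' ∈ range (M+1),
          (∑ k ∈ range (N + M + 1), bb a M N (k + h) * conj (bb a M N (k + h'))).re
      ≤ (M + 1) * ∑ n ∈ range N, ‖a n‖^2
        + 2 * ∑ h ∈ range (M + 1), ∑ i ∈ range h,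
            ‖∑ n ∈ range (N - (i+1)), a (n + (i+1)) * conj (a n)‖ := by
    rw [square_split]
    have hdiag : ∀ h ∈ range (M+1),
        (∑ k ∈ range (N + M + 1), bb a M N (k + h) * conj (bb a M N (k + h))).re
          = ∑ n ∈ range N, ‖a n‖^2 := by
      intro h hh
      simp only [Finset.mem_range] at hh
      rw [cc_corr a M N (by omega) le_rfl]
      rw [Nat.sub_self, GG_val]
      simp only [Nat.sub_zero, add_zero, Complex.re_sum]
      refine Finset.sum_congr rfl fun n _ => ?_
      rw [Complex.mul_conj]
      simp [Complex.sq_norm]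
    have hoff : ∀ h ∈ range (M+1), ∀ i ∈ range h,
        ((∑ k ∈ range (N + M + 1), bb a M N (k + h) * conj (bb a M N (k + i))).re
          + (∑ k ∈ range (N + M + 1), bb a M N (k + i) * conj (bb a M N (k + h))).re)
          ≤ 2 * ‖GG a M N (h - i)‖ := by
      intro h hh i hi
      simp only [Finset.mem_range] at hh hi
      have ei : ∑ k ∈ range (N + M + 1), bb a M N (k + i) * conj (bb a M N (k + h))
          = conj (∑ k ∈ range (N + M + 1), bb a M N (k + h) * conj (bb a M N (k + i))) := by
        rw [map_sum]
        refine Finset.sum_congr rfl fun k _ => ?_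
        rw [map_mul, Complex.conj_conj]
        ring
      rw [ei, Complex.conj_re, cc_corr a M N (by omega) (by omega)]
      have : (GG a M N (h - i)).re ≤ ‖GG a M N (h - i)‖ := Complex.re_le_norm _
      linarith
    calc (∑ h ∈ range (M+1),
            (∑ k ∈ range (N + M + 1), bb a M N (k + h) * conj (bb a M N (k + h))).re)
          + ∑ h ∈ range (M+1), ∑ i ∈ range h, _
        ≤ (∑ h ∈ range (M+1), ∑ n ∈ range N, ‖a n‖^2)
          + ∑ h ∈ range (M+1), ∑ i ∈ range h, 2 * ‖GG a M N (h - i)‖ := by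
          apply add_le_add
          · exact le_of_eq (Finset.sum_congr rfl hdiag)
          · exact Finset.sum_le_sum fun h hh => Finset.sum_le_sum fun i hi => hoff h hh i hi
      _ = (M + 1) * ∑ n ∈ range N, ‖a n‖^2
          + 2 * ∑ h ∈ range (M + 1), ∑ i ∈ range h,
              ‖∑ n ∈ range (N - (i+1)), a (n + (i+1)) * conj (a n)‖ := by
          rw [Finset.sum_const, Finset.card_range, nsmul_eq_mul]
          congr 1
          · push_cast; ring
          rw [Finset.mul_sum]
          refine Finset.sum_congr rfl fun h _ => ?_
          rw [Finset.mul_sum]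
          rw [show (∑ i ∈ range h, 2 * ‖GG a M N (h - i)‖)
              = ∑ i ∈ range h, (fun j => 2 * ‖GG a M N (j + 1)‖) (h - 1 - i) from
            Finset.sum_congr rfl fun i hi => by
              simp only [Finset.mem_range] at hi
              have : h - i = h - 1 - i + 1 := by omega
              rw [this]]
          rw [Finset.sum_range_reflect (fun j => 2 * ‖GG a M N (j + 1)‖) h]
          exact Finset.sum_congr rfl fun i _ => by rw [GG_val]
  -- combine
  calc ‖∑ n ∈ range N, a n‖^2 * (M + 1)^2
      ≤ (N + M + 1 : ℝ) * ∑ k ∈ range (N + M + 1), ‖cc a M N k‖^2 := step2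
    _ ≤ _ := by
        rw [step3]
        apply mul_le_mul_of_nonneg_left step4 (by positivity)

end VDC

lemma limsup_le_of_le_tendsto {u v : ℕ → ℝ} {l : ℝ}
    (hle : ∀ᶠ n in atTop, u n ≤ v n) (h0 : ∀ᶠ n in atTop, 0 ≤ u n)
    (hv : Tendsto v atTop (nhds l)) : limsup u atTop ≤ l := by
  have hb : IsBoundedUnder (· ≤ ·) atTop v := hv.isBoundedUnder_le
  have hcob : IsCoboundedUnder (· ≤ ·) atTop u :=
    IsBoundedUnder.isCoboundedUnder_le ⟨0, by filter_upwards [h0] with n hn using hn⟩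
  calc limsup u atTop ≤ limsup v atTop := limsup_le_limsup hle hcob hb
    _ = l := hv.limsup_eq

lemma sum_range_id_real (H : ℕ) : ∑ n ∈ range H, (n : ℝ) = H * (H - 1) / 2 := by
  induction H with
  | zero => simp
  | succ H ih =>
      rw [Finset.sum_range_succ, ih]
      push_cast
      ring

lemma weighted_cesaro {r : ℕ → ℝ} {l : ℝ}
    (h : Tendsto (fun n : ℕ => r n / n) atTop (nhds l)) :
    Tendsto (fun H : ℕ => (1 / (H : ℝ)^2) * ∑ n ∈ range H, r n) atTop (nhds (l / 2)) := by
  set e : ℕ → ℝ := fun n => r n - n * l with he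
  have he0 : Tendsto (fun n : ℕ => |e n / n|) atTop (nhds 0) := by
    have h1 : Tendsto (fun n : ℕ => e n / n) atTop (nhds 0) := by
      have h2 := h.sub_const l
      rw [sub_self] at h2
      apply h2.congr'
      filter_upwards [eventually_ge_atTop 1] with n hn
      have hn0 : (n:ℝ) ≠ 0 := by positivity
      field_simp [he]
      rfl
    simpa using h1.abs
  -- Cesàro
  have hces : Tendsto (fun H : ℕ => (1 / (H:ℝ)) * ∑ n ∈ range H, |e n / n|)
      atTop (nhds 0) := by
    have := he0.cesaro
    simpa [smul_eq_mul, one_div] using this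
  have hkey : Tendsto (fun H : ℕ => (1 / (H : ℝ)^2) * ∑ n ∈ range H, e n) atTop (nhds 0) := by
    apply squeeze_zero_norm'
    · filter_upwards [eventually_ge_atTop 1] with H hH
      have hHpos : (0:ℝ) < H := by exact_mod_cast hH
      have hsum : |∑ n ∈ range H, e n| ≤ |e 0| + ∑ n ∈ range H, (H:ℝ) * |e n / n| := by
        refine le_trans (Finset.abs_sum_le_sum_abs _ _) ?_
        have hterm : ∀ n ∈ range H, |e n|
            ≤ (if n = 0 then |e 0| else 0) + (H:ℝ) * |e n / n| := by
          intro n hn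
          simp only [Finset.mem_range] at hn
          by_cases h0 : n = 0
          · subst h0; simp
          · rw [if_neg h0]
            have hn0 : (n:ℝ) ≠ 0 := by
              simp [Nat.pos_of_ne_zero h0, h0]
            have : |e n| = (n:ℝ) * |e n / n| := by
              rw [abs_div, abs_of_nonneg (by positivity : (0:ℝ) ≤ (n:ℝ))]
              field_simp
            rw [this, zero_add]
            have hnH : (n:ℝ) ≤ H := by exact_mod_cast hn.le
            have : (0:ℝ) ≤ |e n / n| := abs_nonneg _
            nlinarith
        refine le_trans (Finset.sum_le_sum hterm) ?_
        rw [Finset.sum_add_distrib]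
        gcongr
        rw [Finset.sum_ite_eq' (range H) 0 (fun _ => |e 0|),
          if_pos (Finset.mem_range.mpr (by omega))]
      calc ‖(1 / (H : ℝ)^2) * ∑ n ∈ range H, e n‖
          = (1 / (H : ℝ)^2) * |∑ n ∈ range H, e n| := by
            rw [Real.norm_eq_abs, abs_mul, abs_of_nonneg (by positivity)]
        _ ≤ (1 / (H : ℝ)^2) * (|e 0| + ∑ n ∈ range H, (H:ℝ) * |e n / n|) := by
            gcongr
        _ = |e 0| / H^2 + (1 / (H:ℝ)) * ∑ n ∈ range H, |e n / n| := by
            rw [← Finset.mul_sum]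
            field_simp
    · have hsq : Tendsto (fun H : ℕ => (H:ℝ)^2) atTop atTop :=
        (tendsto_pow_atTop two_ne_zero).comp tendsto_natCast_atTop_atTop
      have t1 : Tendsto (fun H : ℕ => |e 0| / (H:ℝ)^2) atTop (nhds 0) :=
        tendsto_const_nhds.div_atTop hsq
      simpa using t1.add hces
  -- final assembly
  have hdecomp : ∀ᶠ H : ℕ in atTop, (1 / (H : ℝ)^2) * ∑ n ∈ range H, r n
      = l / 2 * (1 - 1/(H:ℝ)) + (1 / (H : ℝ)^2) * ∑ n ∈ range H, e n := by
    filter_upwards [eventually_ge_atTop 1] with H hH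
    have hHpos : (0:ℝ) < H := by exact_mod_cast hH
    have hsplit : ∑ n ∈ range H, r n = (∑ n ∈ range H, (n:ℝ)) * l + ∑ n ∈ range H, e n := by
      rw [Finset.sum_mul, ← Finset.sum_add_distrib]
      exact Finset.sum_congr rfl fun n _ => by simp only [he]; ring
    rw [hsplit, sum_range_id_real]
    field_simp
  have hlim : Tendsto (fun H : ℕ => l / 2 * (1 - 1/(H:ℝ))
      + (1 / (H : ℝ)^2) * ∑ n ∈ range H, e n) atTop (nhds (l / 2)) := by
    have t2 : Tendsto (fun H : ℕ => l / 2 * (1 - 1/(H:ℝ))) atTop (nhds (l/2)) := by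
      have := (tendsto_const_nhds (x := (1:ℝ)).sub tendsto_one_div_atTop_nhds_zero_nat).const_mul (l/2)
      simpa using this
    simpa using t2.add hkey
  exact hlim.congr' (hdecomp.mono fun H hH => hH.symm)

section Main
variable {X : Type*} [MeasurableSpace X] {μ : Measure X}

set_option maxHeartbeats 1600000 in
theorem main_bounded [IsProbabilityMeasure μ]
    (T : X ≃ᵐ X) (hT : Ergodic (⇑T) μ)
    (g : X → ℂ) (hgm : Measurable g) {C : ℝ} (hC0 : 0 ≤ C) (hC : ∀ x, ‖g x‖ ≤ C)
    (u : ℝ) (hu : 0 ≤ u)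
    (hU : Tendsto (fun H : ℕ => (1 / (H : ℝ)) * ∑ h ∈ Finset.Icc 1 H,
        ‖∫ x, conj (g x) * g ((⇑T)^[h] x) ∂μ‖ ^ 2) atTop (nhds (u ^ 4)))
    (z : ℂ) (hz : ‖z‖ = 1) :
    ∀ᵐ x ∂μ,
      Filter.limsup (fun N : ℕ =>
          ‖(1 / (N : ℂ)) * ∑ n ∈ Finset.range N, z ^ n * g ((⇑T)^[n] x)‖) atTop ≤ u := by
  have hTe : MeasurableEmbedding (⇑T) := T.measurableEmbedding
  have hz1 : z * conj z = 1 := by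
    rw [Complex.mul_conj, Complex.normSq_eq_norm_sq, hz]
    norm_num
  -- correlation functions
  set w : ℕ → X → ℂ := fun d x => conj (g x) * g ((⇑T)^[d] x) with hw
  have hwm : ∀ d, Measurable (w d) :=
    fun d => (continuous_star.measurable.comp hgm).mul (hgm.comp (hTe.measurable.iterate d))
  have hwb : ∀ d x, ‖w d x‖ ≤ C^2 := by
    intro d x
    rw [hw]
    simp only
    rw [norm_mul, RCLike.norm_conj]
    calc ‖g x‖ * ‖g ((⇑T)^[d] x)‖ ≤ C * C :=
          mul_le_mul (hC x) (hC _) (norm_nonneg _) hC0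
      _ = C^2 := by ring
  set γ : ℕ → ℂ := fun d => ∫ y, w d y ∂μ with hγ
  set c : ℕ → ℝ := fun d => ‖γ d‖ with hcd
  have hc0 : ∀ d, 0 ≤ c d := fun d => norm_nonneg _
  -- the x-independent bound L M
  set L : ℕ → ℝ := fun M => (1/((M:ℝ)+1)^2) * (((M:ℝ)+1) * C^2
    + 2 * ∑ h ∈ range (M+1), ∑ i ∈ range h, c (i+1)) with hL
  ------------------------------------------------------------------
  -- PART 2 (x-independent) : ∀ δ > 0, ∃ M, sqrt (L M) ≤ u + δ
  ------------------------------------------------------------------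
  have part2 : ∀ δ : ℝ, 0 < δ → ∃ M : ℕ, Real.sqrt (L M) ≤ u + δ := by
    intro δ hδ
    set Q : ℕ → ℝ := fun H => ∑ h ∈ Finset.Icc 1 H, c h ^ 2 with hQ
    have hQ0 : ∀ H, 0 ≤ Q H := fun H => Finset.sum_nonneg fun i _ => sq_nonneg _
    have hU' : Tendsto (fun H : ℕ => (1 / (H : ℝ)) * Q H) atTop (nhds (u ^ 4)) := hU
    set r : ℕ → ℝ := fun h => Real.sqrt ((h : ℝ) * Q h) with hr
    have hrlim : Tendsto (fun h : ℕ => r h / h) atTop (nhds (u^2)) := by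
      have h1 : Tendsto (fun h : ℕ => Real.sqrt ((1/(h:ℝ)) * Q h)) atTop (nhds (u^2)) := by
        have := hU'.sqrt
        rwa [show Real.sqrt (u^4) = u^2 by
          rw [show u^4 = (u^2)^2 by ring, Real.sqrt_sq (sq_nonneg u)]] at this
      apply h1.congr'
      filter_upwards [eventually_ge_atTop 1] with h hh
      have hh0 : (0:ℝ) < (h:ℝ) := by exact_mod_cast hh
      rw [show (1/(h:ℝ)) * Q h = ((h:ℝ) * Q h) / (h:ℝ)^2 by field_simp]
      rw [Real.sqrt_div (by positivity) , Real.sqrt_sq hh0.le]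
    have hwc := weighted_cesaro hrlim
    -- pointwise domination of the partial sums
    have hP : ∀ h : ℕ, (∑ i ∈ range h, c (i+1)) ≤ r h := by
      intro h
      have h2 : ∑ i ∈ range h, c (i+1)^2 = Q h := by
        simp only [hQ]
        rw [show Finset.Icc 1 h = Finset.Ico 1 (h+1) by rw [Finset.Ico_add_one_right_eq_Icc]]
        rw [Finset.sum_Ico_eq_sum_range]
        simp only [Nat.add_sub_cancel]
        exact Finset.sum_congr rfl fun i _ => by rw [add_comm]
      have h1 : (∑ i ∈ range h, c (i+1))^2 ≤ (h:ℝ) * Q h := by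
        rw [← h2]
        have := sq_sum_le_card_mul_sum_sq (s := range h) (f := fun i => c (i+1))
        simpa [Finset.card_range] using this
      calc (∑ i ∈ range h, c (i+1))
          = Real.sqrt ((∑ i ∈ range h, c (i+1))^2) :=
            (Real.sqrt_sq (Finset.sum_nonneg fun i _ => hc0 _)).symm
        _ ≤ r h := Real.sqrt_le_sqrt h1
    -- L M is eventually below u² + δ²
    have hLtail : ∀ M : ℕ, L M ≤ C^2/((M:ℝ)+1)
        + 2 * ((1/((M:ℝ)+1)^2) * ∑ h ∈ range (M+1), r h) := by
      intro M
      have hM1 : (0:ℝ) < (M:ℝ)+1 := by positivity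
      have hsum : (∑ h ∈ range (M+1), ∑ i ∈ range h, c (i+1))
          ≤ ∑ h ∈ range (M+1), r h := Finset.sum_le_sum fun h _ => hP h
      rw [hL]
      have e1 : (1/((M:ℝ)+1)^2) * (((M:ℝ)+1) * C^2) = C^2/((M:ℝ)+1) := by
        field_simp
      calc (1/((M:ℝ)+1)^2) * (((M:ℝ)+1) * C^2
            + 2 * ∑ h ∈ range (M+1), ∑ i ∈ range h, c (i+1))
          ≤ (1/((M:ℝ)+1)^2) * (((M:ℝ)+1) * C^2 + 2 * ∑ h ∈ range (M+1), r h) := by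
            gcongr
        _ = _ := by rw [mul_add, e1]; ring
    have htail : Tendsto (fun M : ℕ => C^2/((M:ℝ)+1)
        + 2 * ((1/((M:ℝ)+1)^2) * ∑ h ∈ range (M+1), r h)) atTop (nhds (u^2)) := by
      have t1 : Tendsto (fun M : ℕ => C^2/((M:ℝ)+1)) atTop (nhds 0) := by
        have := (tendsto_const_div_atTop_nhds_zero_nat (C^2)).comp
          (tendsto_add_atTop_nat 1)
        apply this.congr
        intro M
        simp only [Function.comp_apply]
        push_cast
        ring_nf
      have t2 : Tendsto (fun M : ℕ => (1/((M:ℝ)+1)^2) * ∑ h ∈ range (M+1), r h)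
          atTop (nhds (u^2/2)) := by
        have := hwc.comp (tendsto_add_atTop_nat 1)
        apply this.congr
        intro M
        simp only [Function.comp_apply]
        push_cast
        ring_nf
      have := t1.add (t2.const_mul 2)
      simp only [zero_add] at this
      convert this using 2
      ring
    have hev : ∀ᶠ M : ℕ in atTop, C^2/((M:ℝ)+1)
        + 2 * ((1/((M:ℝ)+1)^2) * ∑ h ∈ range (M+1), r h) < u^2 + δ^2 :=
      htail.eventually (eventually_lt_nhds (by nlinarith))
    obtain ⟨M, hM⟩ := hev.exists
    refine ⟨M, ?_⟩
    have hLM : L M ≤ u^2 + δ^2 := le_trans (hLtail M) hM.le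
    calc Real.sqrt (L M) ≤ Real.sqrt (u^2 + δ^2) := Real.sqrt_le_sqrt hLM
      _ ≤ Real.sqrt ((u + δ)^2) := Real.sqrt_le_sqrt (by nlinarith)
      _ = u + δ := Real.sqrt_sq (by positivity)
  ------------------------------------------------------------------
  -- PART 1 (pointwise) : a.e. x, ∀ M, limsup ≤ sqrt (L M)
  ------------------------------------------------------------------
  have hae : ∀ᵐ x ∂μ, ∀ d : ℕ, Tendsto
      (fun N : ℕ => (1 / (N : ℂ)) * ∑ n ∈ range N, w d ((⇑T)^[n] x)) atTop (nhds (γ d)) := by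
    rw [ae_all_iff]
    intro d
    exact birkhoff_complex hT hTe (hwm d) (hwb d)
  filter_upwards [hae] with x hx
  set u' : ℕ → ℝ :=
    fun N => ‖(1 / (N : ℂ)) * ∑ n ∈ Finset.range N, z ^ n * g ((⇑T)^[n] x)‖ with hu'
  set a : ℕ → ℂ := fun n => z^n * g ((⇑T)^[n] x) with ha
  set S : ℕ → ℕ → ℝ := fun d m => ‖∑ n ∈ range m, w d ((⇑T)^[n] x)‖ with hS
  -- norms of correlation sums
  have hcorr : ∀ d m : ℕ, ‖∑ n ∈ range m, a (n + d) * conj (a n)‖ = S d m := by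
    intro d m
    have e1 : ∀ n, a (n + d) * conj (a n) = z^d * w d ((⇑T)^[n] x) := by
      intro n
      rw [ha, hw]
      simp only
      rw [map_mul, map_pow]
      have h1 : z^(n+d) * (conj z)^n = z^d := by
        rw [pow_add, mul_comm (z^n) (z^d), mul_assoc, ← mul_pow, hz1, one_pow, mul_one]
      have h2 : (⇑T)^[n + d] x = (⇑T)^[d] ((⇑T)^[n] x) := by
        rw [add_comm n d, Function.iterate_add_apply]
      rw [h2]
      calc z^(n+d) * g ((⇑T)^[d] ((⇑T)^[n] x)) * ((conj z)^n * conj (g ((⇑T)^[n] x)))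
          = (z^(n+d) * (conj z)^n) * (conj (g ((⇑T)^[n] x)) * g ((⇑T)^[d] ((⇑T)^[n] x))) := by
            ring
        _ = z^d * (conj (g ((⇑T)^[n] x)) * g ((⇑T)^[d] ((⇑T)^[n] x))) := by rw [h1]
    rw [Finset.sum_congr rfl fun n _ => e1 n, ← Finset.mul_sum, norm_mul, norm_pow, hz,
      one_pow, one_mul, hS]
  -- Birkhoff limits for the correlation averages
  have hQd : ∀ d, Tendsto (fun m : ℕ => (1/(m:ℝ)) * S d m) atTop (nhds (c d)) := by
    intro d
    have := (hx d).norm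
    apply this.congr
    intro m
    rw [norm_mul, hS]
    congr 1
    rw [norm_div, norm_one, Complex.norm_natCast]
  have hshift : ∀ d : ℕ, Tendsto (fun N : ℕ => (1/(N:ℝ)) * S d (N - d))
      atTop (nhds (c d)) := by
    intro d
    have h1 : Tendsto (fun N : ℕ => (1/((N - d : ℕ):ℝ)) * S d (N - d)) atTop (nhds (c d)) :=
      (hQd d).comp (tendsto_sub_atTop_nat d)
    have hratio : Tendsto (fun N : ℕ => ((N - d : ℕ):ℝ)/(N:ℝ)) atTop (nhds 1) := by
      have h2 : Tendsto (fun N : ℕ => 1 - (d:ℝ)/(N:ℝ)) atTop (nhds 1) := by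
        have := (tendsto_const_div_atTop_nhds_zero_nat (d:ℝ)).const_sub 1
        simpa using this
      apply h2.congr'
      filter_upwards [eventually_ge_atTop (d+1)] with N hN
      have hN0 : (0:ℝ) < (N:ℝ) := by
        have : 1 ≤ N := by omega
        exact_mod_cast Nat.lt_of_lt_of_le Nat.zero_lt_one this
      rw [Nat.cast_sub (by omega)]
      field_simp
    have := hratio.mul h1
    rw [one_mul] at this
    apply this.congr'
    filter_upwards [eventually_ge_atTop (d+1)] with N hN
    have hNd : 1 ≤ N - d := by omega
    have hNd0 : (0:ℝ) < ((N - d : ℕ):ℝ) := by exact_mod_cast hNd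
    have e : ((N - d : ℕ):ℝ)/(N:ℝ) * (1/((N - d : ℕ):ℝ) * S d (N - d))
        = (((N - d : ℕ):ℝ) * (1/((N - d : ℕ):ℝ))) * (1/(N:ℝ) * S d (N - d)) := by ring
    rw [e, mul_one_div_cancel hNd0.ne', one_mul]
  -- the convergent majorant R M N
  have hu'eq : ∀ N : ℕ, u' N = 1/(N:ℝ) * ‖∑ n ∈ range N, a n‖ := by
    intro N
    simp only [hu', ha]
    rw [norm_mul, norm_div, norm_one, Complex.norm_natCast]
  have hu'nn : ∀ N, 0 ≤ u' N := by
    intro N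
    simp only [hu']
    exact norm_nonneg _
  have hstep1 : ∀ M : ℕ, limsup u' atTop ≤ Real.sqrt (L M) := by
    intro M
    set W : ℕ → ℝ := fun N => ∑ h ∈ range (M+1), ∑ i ∈ range h, S (i+1) (N - (i+1)) with hWd
    set R : ℕ → ℝ := fun N => ((N:ℝ) + M + 1)/N
      * ((1/((M:ℝ)+1)^2) * (((M:ℝ)+1) * C^2 + 2 * ((1/(N:ℝ)) * W N))) with hRd
    have hW0 : ∀ N, 0 ≤ W N := fun N =>
      Finset.sum_nonneg fun h _ => Finset.sum_nonneg fun i _ => norm_nonneg _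
    have hPM : (0:ℝ) < (M:ℝ) + 1 := by positivity
    -- the pointwise bound from van der Corput
    have hRb : ∀ N : ℕ, 1 ≤ N → u' N ^ 2 ≤ R N := by
      intro N hN
      have hN0 : (0:ℝ) < (N:ℝ) := by exact_mod_cast hN
      have hsa : ∑ n ∈ range N, ‖a n‖^2 ≤ (N:ℝ) * C^2 := by
        calc ∑ n ∈ range N, ‖a n‖^2 ≤ ∑ n ∈ range N, C^2 := by
              apply Finset.sum_le_sum
              intro n _
              have : ‖a n‖ ≤ C := by
                simp only [ha]
                rw [norm_mul, norm_pow, hz, one_pow, one_mul]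
                exact hC _
              exact pow_le_pow_left₀ (norm_nonneg _) this 2
          _ = (N:ℝ) * C^2 := by rw [Finset.sum_const, Finset.card_range, nsmul_eq_mul]
      have hvdc := VDC.vdc a M N
      have hWn : (∑ h ∈ range (M + 1), ∑ i ∈ range h,
          ‖∑ n ∈ range (N - (i+1)), a (n + (i+1)) * conj (a n)‖) = W N := by
        simp only [hWd]
        exact Finset.sum_congr rfl fun h _ => Finset.sum_congr rfl fun i _ => hcorr (i+1) _
      rw [hWn] at hvdc
      have hvdc2 : ‖∑ n ∈ range N, a n‖^2 * ((M:ℝ) + 1)^2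
          ≤ ((N:ℝ) + M + 1) * (((M:ℝ) + 1) * ((N:ℝ) * C^2) + 2 * W N) := by
        refine le_trans hvdc ?_
        have : (0:ℝ) ≤ (N:ℝ) + M + 1 := by positivity
        gcongr
      rw [← mul_le_mul_iff_of_pos_right (show (0:ℝ) < (N:ℝ)^2 * ((M:ℝ)+1)^2 by positivity)]
      have e1 : u' N ^ 2 * ((N:ℝ)^2 * ((M:ℝ)+1)^2)
          = ‖∑ n ∈ range N, a n‖^2 * ((M:ℝ)+1)^2 := by
        rw [hu'eq]
        field_simp
      have e2 : R N * ((N:ℝ)^2 * ((M:ℝ)+1)^2)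
          = ((N:ℝ) + M + 1) * (((M:ℝ) + 1) * ((N:ℝ) * C^2) + 2 * W N) := by
        simp only [hRd]
        generalize W N = Wv
        have hn : (N:ℝ) ≠ 0 := hN0.ne'
        field_simp
      rw [e1, e2]
      exact hvdc2
    -- convergence of the majorant
    have hRlim : Tendsto R atTop (nhds (L M)) := by
      have t1 : Tendsto (fun N : ℕ => ((N:ℝ) + M + 1)/N) atTop (nhds 1) := by
        have h2 : Tendsto (fun N : ℕ => 1 + ((M:ℝ)+1)/N) atTop (nhds 1) := by
          have := (tendsto_const_div_atTop_nhds_zero_nat ((M:ℝ)+1)).const_add 1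
          simpa using this
        apply h2.congr'
        filter_upwards [eventually_ge_atTop 1] with N hN
        have hN0 : (0:ℝ) < (N:ℝ) := by exact_mod_cast hN
        field_simp
        ring
      have t2 : Tendsto (fun N : ℕ => (1/(N:ℝ)) * W N)
          atTop (nhds (∑ h ∈ range (M+1), ∑ i ∈ range h, c (i+1))) := by
        have h3 : Tendsto (fun N : ℕ => ∑ h ∈ range (M+1), ∑ i ∈ range h,
            (1/(N:ℝ)) * S (i+1) (N - (i+1)))
            atTop (nhds (∑ h ∈ range (M+1), ∑ i ∈ range h, c (i+1))) := by
          apply tendsto_finset_sum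
          intro h _
          apply tendsto_finset_sum
          intro i _
          exact hshift (i+1)
        apply h3.congr
        intro N
        simp only [hWd]
        rw [Finset.mul_sum]
        exact Finset.sum_congr rfl fun h _ => by rw [Finset.mul_sum]
      have := t1.mul (((tendsto_const_nhds (x := ((M:ℝ)+1) * C^2)).add
        (t2.const_mul 2)).const_mul (1/((M:ℝ)+1)^2))
      rw [one_mul] at this
      exact this
    -- conclude with the limsup comparison
    have hfin := limsup_le_of_le_tendsto
      (u := u') (v := fun N => Real.sqrt (R N)) ?_ (Eventually.of_forall hu'nn) hRlim.sqrt
    · exact hfin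
    · filter_upwards [eventually_ge_atTop 1] with N hN
      calc u' N = Real.sqrt (u' N ^ 2) := (Real.sqrt_sq (hu'nn N)).symm
        _ ≤ Real.sqrt (R N) := Real.sqrt_le_sqrt (hRb N hN)
  -- final conclusion
  apply le_of_forall_pos_le_add
  intro δ hδ
  obtain ⟨M, hM⟩ := part2 δ hδ
  exact (hstep1 M).trans hM
end Main

/-- For an ergodic dynamical system `(X, μ, T)`, `f ∈ L^∞(X, μ)`, and `z` on the unit
circle, `limsup_N |(1/N) ∑_{n=0}^{N-1} zⁿ f(Tⁿ x)| ≤ ‖f‖_{U²}` for a.e. `x`; here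
`u = ‖f‖_{U²}` is the nonnegative number with
`u⁴ = lim_H (1/H) ∑_{h=1}^H |∫ conj f · f∘T^h dμ|²`. -/
theorem limsup_weighted_avg_le_gowers_U2
    {X : Type*} [MeasurableSpace X] (μ : Measure X) [IsProbabilityMeasure μ]
    (T : X ≃ᵐ X) (hT : Ergodic (⇑T) μ)
    (f : X → ℂ) (hfm : Measurable f) (hfb : MemLp f ⊤ μ)
    (u : ℝ) (hu : 0 ≤ u)
    (hU : Tendsto (fun H : ℕ => (1 / (H : ℝ)) * ∑ h ∈ Finset.Icc 1 H,
        ‖∫ x, conj (f x) * f ((⇑T)^[h] x) ∂μ‖ ^ 2) atTop (nhds (u ^ 4)))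
    (z : ℂ) (hz : ‖z‖ = 1) :
    ∀ᵐ x ∂μ,
      Filter.limsup (fun N : ℕ =>
          ‖(1 / (N : ℂ)) * ∑ n ∈ Finset.range N, z ^ n * f ((⇑T)^[n] x)‖) atTop ≤ u := by
  set C : ℝ := (eLpNorm f ⊤ μ).toReal with hCdef
  have hC0 : 0 ≤ C := ENNReal.toReal_nonneg
  have hCae : ∀ᵐ x ∂μ, ‖f x‖ ≤ C := by
    have h1 : ∀ᵐ x ∂μ, (‖f x‖₊ : ENNReal) ≤ eLpNormEssSup f μ := ae_le_eLpNormEssSup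
    have hfin : eLpNormEssSup f μ ≠ ⊤ := by
      have := hfb.2
      rw [eLpNorm_exponent_top] at this
      exact this.ne
    filter_upwards [h1] with x hx
    have := ENNReal.toReal_mono hfin hx
    rw [ENNReal.coe_toReal, coe_nnnorm] at this
    rw [hCdef, eLpNorm_exponent_top]
    exact this
  set g : X → ℂ := fun x => if ‖f x‖ ≤ C then f x else 0 with hgdef
  have hgm : Measurable g :=
    Measurable.ite (measurableSet_le hfm.norm measurable_const) hfm measurable_const
  have hgb : ∀ x, ‖g x‖ ≤ C := by
    intro x
    simp only [hgdef]
    by_cases h : ‖f x‖ ≤ C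
    · rwa [if_pos h]
    · rw [if_neg h]; simpa using hC0
  have hfg : f =ᵐ[μ] g := by
    filter_upwards [hCae] with x hx
    simp only [hgdef]
    rw [if_pos hx]
  have hiter_ae : ∀ n : ℕ, (fun x => f ((⇑T)^[n] x)) =ᵐ[μ] (fun x => g ((⇑T)^[n] x)) := by
    intro n
    have hmp : MeasurePreserving ((⇑T)^[n]) μ μ := hT.toMeasurePreserving.iterate n
    have := ae_eq_comp (f := (⇑T)^[n]) (g := f) (g' := g)
      hmp.measurable.aemeasurable (by rwa [hmp.map_eq])
    exact this
  have hint : ∀ h : ℕ, ∫ x, conj (f x) * f ((⇑T)^[h] x) ∂μ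
      = ∫ x, conj (g x) * g ((⇑T)^[h] x) ∂μ := by
    intro h
    apply integral_congr_ae
    filter_upwards [hfg, hiter_ae h] with x h1 h2
    rw [h1, h2]
  have hU' : Tendsto (fun H : ℕ => (1 / (H : ℝ)) * ∑ h ∈ Finset.Icc 1 H,
      ‖∫ x, conj (g x) * g ((⇑T)^[h] x) ∂μ‖ ^ 2) atTop (nhds (u ^ 4)) := by
    apply hU.congr
    intro H
    congr 1
    exact Finset.sum_congr rfl fun h _ => by rw [hint h]
  have horb : ∀ᵐ x ∂μ, ∀ n : ℕ, f ((⇑T)^[n] x) = g ((⇑T)^[n] x) := by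
    rw [ae_all_iff]
    intro n
    exact hiter_ae n
  filter_upwards [main_bounded T hT g hgm hC0 hgb u hu hU' z hz, horb] with x h1 h2
  have : (fun N : ℕ => ‖(1 / (N : ℂ)) * ∑ n ∈ Finset.range N, z ^ n * f ((⇑T)^[n] x)‖)
      = (fun N : ℕ => ‖(1 / (N : ℂ)) * ∑ n ∈ Finset.range N, z ^ n * g ((⇑T)^[n] x)‖) := by
    funext N
    congr 2
    exact Finset.sum_congr rfl fun n _ => by rw [h2 n]
  rw [this]
  exact h1
end

section
/- (Calderón transference, strong type.) Let (a_n)_{n≥1} be a sequence of complex numbers, let P and Q be non-constant polynomials with integer coefficients mapping the natural numbers into the natural numbers, let 1 ≤ p, q, r ≤ ∞ with 1/r = 1/p + 1/q, and let C > 0. Assume that for all finitely supported functions φ, ψ : ℤ → ℂ, ‖ j ↦ sup_{N ≥ 1} |(1/N) ∑_{n=1}^{N} a_n φ(j + P(n)) ψ(j + Q(n))| ‖_{ℓ^r(ℤ)} ≤ C ‖φ‖_{ℓ^p(ℤ)} ‖ψ‖_{ℓ^q(ℤ)}. Then for any dynamical system (X, 𝒜, μ, T), any f ∈ L^p(X,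 μ) and g ∈ L^q(X, μ), ‖ x ↦ sup_{N ≥ 1} |(1/N) ∑_{n=1}^{N} a_n f(T^{P(n)} x) g(T^{Q(n)} x)| ‖_{L^r(μ)} ≤ C ‖f‖_{L^p(μ)} ‖g‖_{L^q(μ)}. -/
open MeasureTheory Filter Finset
open scoped ENNReal NNReal

/-- The `ℓ^r(ℤ)` norm (valued in `ℝ≥0∞`) of an `ℝ≥0∞`-valued function on `ℤ`,
with the sup norm when `r = ∞`. -/
noncomputable def lpNormZ (r : ℝ≥0∞) (u : ℤ → ℝ≥0∞) : ℝ≥0∞ :=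
  if r = ⊤ then ⨆ j : ℤ, u j else (∑' j : ℤ, u j ^ r.toReal) ^ (1 / r.toReal)

/-- The `L^r(μ)` norm (valued in `ℝ≥0∞`) of an `ℝ≥0∞`-valued function,
with the essential sup norm when `r = ∞`. -/
noncomputable def lpNormMeasure {X : Type*} [MeasurableSpace X] (μ : Measure X)
    (r : ℝ≥0∞) (u : X → ℝ≥0∞) : ℝ≥0∞ :=
  if r = ⊤ then essSup u μ else (∫⁻ x, u x ^ r.toReal ∂μ) ^ (1 / r.toReal)

namespace Calderon

variable {X : Type*} [MeasurableSpace X]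

lemma lintegral_iterate (μ : Measure X) (T : X ≃ᵐ X) (hT : MeasurePreserving (⇑T) μ μ)
    (h : X → ℝ≥0∞) : ∀ i : ℕ, ∫⁻ x, h ((⇑T)^[i] x) ∂μ = ∫⁻ x, h x ∂μ := by
  intro i
  induction i with
  | zero => simp
  | succ i ih =>
    have hs : ∀ x : X, (⇑T)^[i+1] x = (⇑T)^[i] (T x) := fun x =>
      Function.iterate_succ_apply (⇑T) i x
    simp_rw [hs]
    rw [← ih]
    have h2 : ∫⁻ y, h ((⇑T)^[i] y) ∂(Measure.map (⇑T) μ) = ∫⁻ x, h ((⇑T)^[i] (T x)) ∂μ :=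
      lintegral_map_equiv (fun y => h ((⇑T)^[i] y)) T
    rw [hT.map_eq] at h2
    exact h2.symm

lemma ae_iterate (μ : Measure X) {T : X → X} (hT : MeasurePreserving T μ μ)
    {prop : X → Prop} (h : ∀ᵐ x ∂μ, prop x) (i : ℕ) : ∀ᵐ x ∂μ, prop (T^[i] x) :=
  ((hT.iterate i).quasiMeasurePreserving.tendsto_ae).eventually h

lemma toReal_pos' {p : ℝ≥0∞} (hp : 1 ≤ p) (hp' : p ≠ ⊤) : 0 < p.toReal :=
  ENNReal.toReal_pos (by intro h; simp [h] at hp) hp'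

def natEmb : ℕ ↪ ℤ := ⟨(Nat.cast : ℕ → ℤ), Nat.cast_injective⟩

variable (T : X ≃ᵐ X) (a : ℕ → ℂ) (P Q : Polynomial ℤ) (f g : X → ℂ)

noncomputable def Sfun (x : X) (N : ℕ) : ℝ≥0∞ :=
  (‖(1 / (N : ℂ)) * ∑ n ∈ Finset.Icc 1 N,
      a n * f ((⇑T)^[(P.eval (n : ℤ)).toNat] x) * g ((⇑T)^[(Q.eval (n : ℤ)).toNat] x)‖₊ : ℝ≥0∞)

noncomputable def Dfun (φ ψ : ℤ → ℂ) (j : ℤ) : ℝ≥0∞ :=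
  ⨆ N : ℕ, ⨆ _ : 1 ≤ N,
    (‖(1 / (N : ℂ)) * ∑ n ∈ Finset.Icc 1 N,
        a n * φ (j + P.eval (n : ℤ)) * ψ (j + Q.eval (n : ℤ))‖₊ : ℝ≥0∞)

noncomputable def EM (M : ℕ) (x : X) : ℝ≥0∞ :=
  ⨆ N ∈ Finset.Icc 1 M, Sfun T a P Q f g x N

noncomputable def win (x : X) (L : ℕ) (j : ℤ) : ℂ :=
  if 0 ≤ j ∧ j < (L : ℤ) then f ((⇑T)^[j.toNat] x) else 0

lemma win_support_finite (x : X) (L : ℕ) : (Function.support (win T f x L)).Finite := by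
  refine Set.Finite.subset (Set.finite_Icc (0 : ℤ) (L - 1)) fun j hj => ?_
  rw [Function.mem_support, win] at hj
  by_contra hj'
  rw [Set.mem_Icc] at hj'
  exact hj (if_neg (by omega))

lemma win_eval (x : X) (L : ℕ) (i : ℕ) (m : ℤ) (hm : 0 ≤ m) (hL : (i : ℤ) + m < L) :
    win T f x L ((i : ℤ) + m) = f ((⇑T)^[m.toNat] ((⇑T)^[i] x)) := by
  rw [win, if_pos ⟨by omega, hL⟩]
  have h1 : ((i : ℤ) + m).toNat = m.toNat + i := by omega
  rw [h1, Function.iterate_add_apply]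

lemma win_eval_nat (x : X) (L : ℕ) (i : ℕ) (hi : i < L) :
    win T f x L (i : ℤ) = f ((⇑T)^[i] x) := by
  rw [win, if_pos ⟨by omega, by exact_mod_cast hi⟩]
  simp

lemma EM_le_D (x : X) {M J : ℕ} (A : ℕ)
    (hA : ∀ n ∈ Finset.Icc 1 M, (P.eval (n : ℤ)).toNat ≤ A ∧ (Q.eval (n : ℤ)).toNat ≤ A)
    (hPnat : ∀ n : ℕ, 0 ≤ P.eval (n : ℤ)) (hQnat : ∀ n : ℕ, 0 ≤ Q.eval (n : ℤ))
    {i : ℕ} (hi : i ≤ J) :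
    EM T a P Q f g M ((⇑T)^[i] x)
      ≤ Dfun a P Q (win T f x (J + A + 1)) (win T g x (J + A + 1)) (i : ℤ) := by
  rw [EM]
  refine iSup₂_le fun N hN => ?_
  rw [Finset.mem_Icc] at hN
  have key : Sfun T a P Q f g ((⇑T)^[i] x) N =
      (‖(1 / (N : ℂ)) * ∑ n ∈ Finset.Icc 1 N,
          a n * win T f x (J + A + 1) ((i : ℤ) + P.eval (n : ℤ))
            * win T g x (J + A + 1) ((i : ℤ) + Q.eval (n : ℤ))‖₊ : ℝ≥0∞) := by
    rw [Sfun]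
    congr 3
    refine Finset.sum_congr rfl fun n hn => ?_
    rw [Finset.mem_Icc] at hn
    have hnM : n ∈ Finset.Icc 1 M := Finset.mem_Icc.mpr ⟨hn.1, hn.2.trans hN.2⟩
    obtain ⟨hPA, hQA⟩ := hA n hnM
    have hP0 := hPnat n
    have hQ0 := hQnat n
    rw [win_eval T f x (J + A + 1) i _ hP0 (by push_cast; omega),
      win_eval T g x (J + A + 1) i _ hQ0 (by push_cast; omega)]
  rw [key]
  exact le_iSup₂_of_le N hN.1 le_rfl

lemma lpNormZ_win_finite {p : ℝ≥0∞} (hp : 1 ≤ p) (hp' : p ≠ ⊤) (x : X) (L : ℕ) :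
    lpNormZ p (fun j => (‖win T f x L j‖₊ : ℝ≥0∞)) =
      (∑ i ∈ Finset.range L, (‖f ((⇑T)^[i] x)‖₊ : ℝ≥0∞) ^ p.toReal) ^ (1 / p.toReal) := by
  have hptR : 0 < p.toReal := toReal_pos' hp hp'
  rw [lpNormZ, if_neg hp']
  congr 1
  rw [tsum_eq_sum (s := (Finset.range L).map natEmb) ?_]
  · rw [Finset.sum_map]
    refine Finset.sum_congr rfl fun i hi => ?_
    rw [Finset.mem_range] at hi
    simp only [natEmb, Function.Embedding.coeFn_mk]
    rw [win_eval_nat T f x L i hi]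
  · intro j hj
    have hw : win T f x L j = 0 := by
      rw [win, if_neg]
      rintro ⟨h1, h2⟩
      exact hj (Finset.mem_map.mpr ⟨j.toNat, Finset.mem_range.mpr (by omega),
        by simp [natEmb]; omega⟩)
    rw [hw]
    simp [ENNReal.zero_rpow_of_pos hptR]

lemma lpNormZ_win_top (x : X) (L : ℕ) (B : ℝ≥0∞)
    (hB : ∀ i, i < L → (‖f ((⇑T)^[i] x)‖₊ : ℝ≥0∞) ≤ B) :
    lpNormZ ⊤ (fun j => (‖win T f x L j‖₊ : ℝ≥0∞)) ≤ B := by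
  rw [lpNormZ, if_pos rfl]
  refine iSup_le fun j => ?_
  rw [win]
  split_ifs with h
  · exact hB j.toNat (by omega)
  · simp

lemma aemeas_comp (μ : Measure X) (hT : MeasurePreserving (⇑T) μ μ) {f : X → ℂ}
    (hf : AEMeasurable f μ) (m : ℕ) : AEMeasurable (fun x => f ((⇑T)^[m] x)) μ :=
  hf.comp_quasiMeasurePreserving (hT.iterate m).quasiMeasurePreserving

lemma aemeas_Sfun (μ : Measure X) (hT : MeasurePreserving (⇑T) μ μ)
    (hf : AEMeasurable f μ) (hg : AEMeasurable g μ) (N : ℕ) :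
    AEMeasurable (fun x => Sfun T a P Q f g x N) μ := by
  unfold Sfun
  refine (AEMeasurable.nnnorm ?_).coe_nnreal_ennreal
  refine AEMeasurable.const_mul ?_ _
  refine Finset.aemeasurable_fun_sum _ fun n _ => ?_
  exact ((aemeasurable_const.mul (aemeas_comp T μ hT hf _)).mul (aemeas_comp T μ hT hg _))

lemma aemeas_EM (μ : Measure X) (hT : MeasurePreserving (⇑T) μ μ)
    (hf : AEMeasurable f μ) (hg : AEMeasurable g μ) (M : ℕ) :
    AEMeasurable (EM T a P Q f g M) μ := by
  unfold EM
  exact AEMeasurable.iSup fun N => AEMeasurable.iSup fun _ =>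
    aemeas_Sfun T a P Q f g μ hT hf hg N

lemma aemeas_winsum (μ : Measure X) (hT : MeasurePreserving (⇑T) μ μ) {f : X → ℂ}
    (hf : AEMeasurable f μ) (L : ℕ) (c : ℝ) :
    AEMeasurable (fun x => ∑ i ∈ Finset.range L, (‖f ((⇑T)^[i] x)‖₊ : ℝ≥0∞) ^ c) μ :=
  Finset.aemeasurable_fun_sum _ fun i _ =>
    ((aemeas_comp T μ hT hf i).nnnorm.coe_nnreal_ennreal).pow_const c

lemma le_of_grows (I K : ℝ≥0∞) (A : ℕ) (hK : K ≠ ⊤)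
    (h : ∀ J : ℕ, ((J : ℝ≥0∞) + 1) * I ≤ K * ((J : ℝ≥0∞) + (A : ℝ≥0∞) + 1)) : I ≤ K := by
  apply ENNReal.le_of_forall_pos_le_add
  intro ε hε _
  have hεn : (ε : ℝ≥0∞) ≠ 0 := by exact_mod_cast hε.ne'
  have hKA : K * (A : ℝ≥0∞) ≠ ⊤ := ENNReal.mul_ne_top hK (by simp)
  have hdiv : K * (A : ℝ≥0∞) / (ε : ℝ≥0∞) < ⊤ := ENNReal.div_lt_top hKA hεn
  obtain ⟨J, hJ⟩ := ENNReal.exists_nat_gt hdiv.ne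
  have h1 : K * (A : ℝ≥0∞) ≤ ((J : ℝ≥0∞) + 1) * (ε : ℝ≥0∞) := by
    have h2 := (ENNReal.div_lt_iff (Or.inl hεn) (Or.inl ENNReal.coe_ne_top)).mp hJ
    calc K * (A : ℝ≥0∞) ≤ (J : ℝ≥0∞) * (ε : ℝ≥0∞) := h2.le
      _ ≤ ((J : ℝ≥0∞) + 1) * (ε : ℝ≥0∞) := by gcongr; exact le_self_add
  have h3 : ((J : ℝ≥0∞) + 1) * I ≤ ((J : ℝ≥0∞) + 1) * (K + (ε : ℝ≥0∞)) := by
    calc ((J : ℝ≥0∞) + 1) * I ≤ K * ((J : ℝ≥0∞) + (A : ℝ≥0∞) + 1) := h J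
      _ = K * ((J : ℝ≥0∞) + 1) + K * (A : ℝ≥0∞) := by ring
      _ ≤ K * ((J : ℝ≥0∞) + 1) + ((J : ℝ≥0∞) + 1) * (ε : ℝ≥0∞) := by gcongr
      _ = ((J : ℝ≥0∞) + 1) * (K + (ε : ℝ≥0∞)) := by ring
  exact (ENNReal.mul_le_mul_iff_right (by simp) (by simp)).mp h3

lemma sum_rpow_le {r : ℝ≥0∞} (hr : 1 ≤ r) (hr' : r ≠ ⊤) (D : ℤ → ℝ≥0∞) (s : Finset ℕ) :
    ∑ i ∈ s, D (i : ℤ) ^ r.toReal ≤ lpNormZ r D ^ r.toReal := by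
  have hρ : 0 < r.toReal := toReal_pos' hr hr'
  rw [lpNormZ, if_neg hr', ← ENNReal.rpow_mul, one_div, inv_mul_cancel₀ hρ.ne',
    ENNReal.rpow_one]
  calc ∑ i ∈ s, D (i : ℤ) ^ r.toReal
      = ∑ j ∈ s.map natEmb, D j ^ r.toReal := by
        rw [Finset.sum_map]; rfl
    _ ≤ ∑' j : ℤ, D j ^ r.toReal := ENNReal.sum_le_tsum _

lemma lintegral_rpow_eq (μ : Measure X)
    {p : ℝ≥0∞} (hp : 1 ≤ p) (hp' : p ≠ ⊤) (f : X → ℂ) :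
    ∫⁻ x, (‖f x‖₊ : ℝ≥0∞) ^ p.toReal ∂μ = eLpNorm f p μ ^ p.toReal := by
  have hρ : 0 < p.toReal := toReal_pos' hp hp'
  rw [eLpNorm_eq_lintegral_rpow_enorm_toReal (by intro h; simp [h] at hp) hp',
    ← ENNReal.rpow_mul, one_div, inv_mul_cancel₀ hρ.ne', ENNReal.rpow_one]
  rfl

lemma lintegral_winsum (μ : Measure X) (hT : MeasurePreserving (⇑T) μ μ) {f : X → ℂ}
    (hf : AEMeasurable f μ) (L : ℕ) (c : ℝ) :
    ∫⁻ x, ∑ i ∈ Finset.range L, (‖f ((⇑T)^[i] x)‖₊ : ℝ≥0∞) ^ c ∂μ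
      = (L : ℝ≥0∞) * ∫⁻ x, (‖f x‖₊ : ℝ≥0∞) ^ c ∂μ := by
  rw [lintegral_finset_sum' _ fun i _ =>
    ((aemeas_comp T μ hT hf i).nnnorm.coe_nnreal_ennreal).pow_const c]
  have h1 : ∀ i ∈ Finset.range L, ∫⁻ x, (‖f ((⇑T)^[i] x)‖₊ : ℝ≥0∞) ^ c ∂μ
      = ∫⁻ x, (‖f x‖₊ : ℝ≥0∞) ^ c ∂μ := fun i _ =>
    lintegral_iterate μ T hT (fun y => (‖f y‖₊ : ℝ≥0∞) ^ c) i
  rw [Finset.sum_congr rfl h1, Finset.sum_const, Finset.card_range, nsmul_eq_mul]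

lemma conj_facts {p q r : ℝ≥0∞} (hp : 1 ≤ p) (hq : 1 ≤ q) (hr : 1 ≤ r)
    (hp' : p ≠ ⊤) (hq' : q ≠ ⊤) (hr' : r ≠ ⊤) (hpqr : 1 / r = 1 / p + 1 / q) :
    Real.HolderConjugate (p.toReal / r.toReal) (q.toReal / r.toReal) := by
  have hpR : 0 < p.toReal := toReal_pos' hp hp'
  have hqR : 0 < q.toReal := toReal_pos' hq hq'
  have hrR : 0 < r.toReal := toReal_pos' hr hr'
  have hp0 : p ≠ 0 := by intro h; simp [h] at hp
  have hq0 : q ≠ 0 := by intro h; simp [h] at hq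
  have hinv : r.toReal⁻¹ = p.toReal⁻¹ + q.toReal⁻¹ := by
    have h1 := congrArg ENNReal.toReal hpqr
    rw [one_div, one_div, one_div,
      ENNReal.toReal_add (ENNReal.inv_ne_top.mpr hp0) (ENNReal.inv_ne_top.mpr hq0),
      ENNReal.toReal_inv, ENNReal.toReal_inv, ENNReal.toReal_inv] at h1
    exact h1
  have hrp : r.toReal < p.toReal := by
    have h2 : p.toReal⁻¹ < r.toReal⁻¹ := by
      rw [hinv]; exact lt_add_of_pos_right _ (by positivity)
    rwa [inv_lt_inv₀ hpR hrR] at h2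
  rw [Real.holderConjugate_iff]
  constructor
  · exact (one_lt_div hrR).mpr hrp
  · rw [inv_div, inv_div, div_eq_mul_inv, div_eq_mul_inv, ← mul_add, ← hinv,
      mul_inv_cancel₀ hrR.ne']

lemma winint_bound (μ : Measure X) (hT : MeasurePreserving (⇑T) μ μ)
    (f g : X → ℂ) {p q r : ℝ≥0∞} (hp : 1 ≤ p) (hq : 1 ≤ q) (hr : 1 ≤ r) (hrtop : r ≠ ⊤)
    (hpqr : 1 / r = 1 / p + 1 / q)
    (hf : MemLp f p μ) (hg : MemLp g q μ) (L : ℕ) (hL : L ≠ 0) :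
    ∫⁻ x, (lpNormZ p (fun j => (‖win T f x L j‖₊ : ℝ≥0∞))) ^ r.toReal
        * (lpNormZ q (fun j => (‖win T g x L j‖₊ : ℝ≥0∞))) ^ r.toReal ∂μ
      ≤ (L : ℝ≥0∞) * eLpNorm f p μ ^ r.toReal * eLpNorm g q μ ^ r.toReal := by
  have hfm : AEMeasurable f μ := hf.1.aemeasurable
  have hgm : AEMeasurable g μ := hg.1.aemeasurable
  have hrR : 0 < r.toReal := toReal_pos' hr hrtop
  have hLne : (L : ℝ≥0∞) ≠ 0 := by exact_mod_cast hL
  have hLtop : (L : ℝ≥0∞) ≠ ⊤ := ENNReal.natCast_ne_top L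
  set Nf := eLpNorm f p μ with hNfdef
  set Ng := eLpNorm g q μ with hNgdef
  by_cases hptop : p = ⊤
  · -- p = ∞, q = r
    have hqtop : q ≠ ⊤ := by
      intro hqt
      rw [hptop, hqt] at hpqr
      simp at hpqr
      exact hrtop hpqr
    have hqr : q = r := by
      rw [hptop] at hpqr
      simp only [ENNReal.div_top, zero_add, one_div] at hpqr
      have := congrArg (·⁻¹) hpqr
      simpa using this.symm
    have hqR : q.toReal = r.toReal := by rw [hqr]
    have hNf_top : Nf ≠ ⊤ := hf.eLpNorm_lt_top.ne
    have base : ∀ᵐ y ∂μ, (‖f y‖₊ : ℝ≥0∞) ≤ Nf := by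
      rw [hNfdef, hptop, eLpNorm_exponent_top]
      exact ae_le_eLpNormEssSup
    have hall : ∀ᵐ x ∂μ, ∀ i : ℕ, (‖f ((⇑T)^[i] x)‖₊ : ℝ≥0∞) ≤ Nf :=
      ae_all_iff.mpr fun i => ae_iterate μ hT base i
    have hΦ : ∀ᵐ x ∂μ, lpNormZ p (fun j => (‖win T f x L j‖₊ : ℝ≥0∞)) ≤ Nf := by
      filter_upwards [hall] with x hx
      rw [hptop]
      exact lpNormZ_win_top T f x L Nf fun i _ => hx i
    have hΨ : ∀ x, (lpNormZ q (fun j => (‖win T g x L j‖₊ : ℝ≥0∞))) ^ r.toReal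
        = ∑ i ∈ Finset.range L, (‖g ((⇑T)^[i] x)‖₊ : ℝ≥0∞) ^ q.toReal := by
      intro x
      rw [lpNormZ_win_finite T g hq hqtop x L, ← ENNReal.rpow_mul, hqR,
        one_div, inv_mul_cancel₀ hrR.ne', ENNReal.rpow_one]
    calc ∫⁻ x, (lpNormZ p fun j => (‖win T f x L j‖₊ : ℝ≥0∞)) ^ r.toReal
            * (lpNormZ q fun j => (‖win T g x L j‖₊ : ℝ≥0∞)) ^ r.toReal ∂μ
        ≤ ∫⁻ x, Nf ^ r.toReal
            * ∑ i ∈ Finset.range L, (‖g ((⇑T)^[i] x)‖₊ : ℝ≥0∞) ^ q.toReal ∂μ := by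
          refine lintegral_mono_ae ?_
          filter_upwards [hΦ] with x hx
          rw [← hΨ x]
          exact mul_le_mul_left (ENNReal.rpow_le_rpow hx hrR.le) _
      _ = Nf ^ r.toReal * ((L : ℝ≥0∞) * ∫⁻ x, (‖g x‖₊ : ℝ≥0∞) ^ q.toReal ∂μ) := by
          rw [lintegral_const_mul' _ _ (ENNReal.rpow_ne_top_of_nonneg hrR.le hNf_top),
            lintegral_winsum T μ hT hgm L q.toReal]
      _ = (L : ℝ≥0∞) * Nf ^ r.toReal * Ng ^ r.toReal := by
          rw [lintegral_rpow_eq μ hq hqtop g, hqR]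
          ring
  · by_cases hqtop : q = ⊤
    · -- q = ∞, p = r
      have hpr : p = r := by
        rw [hqtop] at hpqr
        simp only [ENNReal.div_top, add_zero, one_div] at hpqr
        have := congrArg (·⁻¹) hpqr
        simpa using this.symm
      have hpR : p.toReal = r.toReal := by rw [hpr]
      have hNg_top : Ng ≠ ⊤ := hg.eLpNorm_lt_top.ne
      have base : ∀ᵐ y ∂μ, (‖g y‖₊ : ℝ≥0∞) ≤ Ng := by
        rw [hNgdef, hqtop, eLpNorm_exponent_top]
        exact ae_le_eLpNormEssSup
      have hall : ∀ᵐ x ∂μ, ∀ i : ℕ, (‖g ((⇑T)^[i] x)‖₊ : ℝ≥0∞) ≤ Ng :=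
        ae_all_iff.mpr fun i => ae_iterate μ hT base i
      have hΨ : ∀ᵐ x ∂μ, lpNormZ q (fun j => (‖win T g x L j‖₊ : ℝ≥0∞)) ≤ Ng := by
        filter_upwards [hall] with x hx
        rw [hqtop]
        exact lpNormZ_win_top T g x L Ng fun i _ => hx i
      have hΦ : ∀ x, (lpNormZ p (fun j => (‖win T f x L j‖₊ : ℝ≥0∞))) ^ r.toReal
          = ∑ i ∈ Finset.range L, (‖f ((⇑T)^[i] x)‖₊ : ℝ≥0∞) ^ p.toReal := by
        intro x
        rw [lpNormZ_win_finite T f hp hptop x L, ← ENNReal.rpow_mul, hpR,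
          one_div, inv_mul_cancel₀ hrR.ne', ENNReal.rpow_one]
      calc ∫⁻ x, (lpNormZ p fun j => (‖win T f x L j‖₊ : ℝ≥0∞)) ^ r.toReal
              * (lpNormZ q fun j => (‖win T g x L j‖₊ : ℝ≥0∞)) ^ r.toReal ∂μ
          ≤ ∫⁻ x, Ng ^ r.toReal
              * ∑ i ∈ Finset.range L, (‖f ((⇑T)^[i] x)‖₊ : ℝ≥0∞) ^ p.toReal ∂μ := by
            refine lintegral_mono_ae ?_
            filter_upwards [hΨ] with x hx
            rw [← hΦ x]
            calc (lpNormZ p fun j => (‖win T f x L j‖₊ : ℝ≥0∞)) ^ r.toReal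
                  * (lpNormZ q fun j => (‖win T g x L j‖₊ : ℝ≥0∞)) ^ r.toReal
                ≤ (lpNormZ p fun j => (‖win T f x L j‖₊ : ℝ≥0∞)) ^ r.toReal
                  * Ng ^ r.toReal := mul_le_mul_right (ENNReal.rpow_le_rpow hx hrR.le) _
              _ = Ng ^ r.toReal
                  * (lpNormZ p fun j => (‖win T f x L j‖₊ : ℝ≥0∞)) ^ r.toReal := mul_comm _ _
        _ = Ng ^ r.toReal * ((L : ℝ≥0∞) * ∫⁻ x, (‖f x‖₊ : ℝ≥0∞) ^ p.toReal ∂μ) := by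
            rw [lintegral_const_mul' _ _ (ENNReal.rpow_ne_top_of_nonneg hrR.le hNg_top),
              lintegral_winsum T μ hT hfm L p.toReal]
        _ = (L : ℝ≥0∞) * Nf ^ r.toReal * Ng ^ r.toReal := by
            rw [lintegral_rpow_eq μ hp hptop f, hpR]
            ring
    · -- both finite: Hölder
      have hpR : 0 < p.toReal := toReal_pos' hp hptop
      have hqR : 0 < q.toReal := toReal_pos' hq hqtop
      have hc := conj_facts hp hq hr hptop hqtop hrtop hpqr
      set F : X → ℝ≥0∞ := fun x => ∑ i ∈ Finset.range L, (‖f ((⇑T)^[i] x)‖₊ : ℝ≥0∞) ^ p.toReal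
        with hFdef
      set G : X → ℝ≥0∞ := fun x => ∑ i ∈ Finset.range L, (‖g ((⇑T)^[i] x)‖₊ : ℝ≥0∞) ^ q.toReal
        with hGdef
      have hstep : ∫⁻ x, (lpNormZ p fun j => (‖win T f x L j‖₊ : ℝ≥0∞)) ^ r.toReal
          * (lpNormZ q fun j => (‖win T g x L j‖₊ : ℝ≥0∞)) ^ r.toReal ∂μ
          = ∫⁻ x, F x ^ (r.toReal / p.toReal) * G x ^ (r.toReal / q.toReal) ∂μ := by
        refine lintegral_congr fun x => ?_
        rw [lpNormZ_win_finite T f hp hptop x L, lpNormZ_win_finite T g hq hqtop x L,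
          ← ENNReal.rpow_mul, ← ENNReal.rpow_mul]
        congr 2 <;> field_simp
      rw [hstep]
      have e1 : ∀ x : ℝ≥0∞, (x ^ (r.toReal / p.toReal)) ^ (p.toReal / r.toReal) = x := by
        intro x
        rw [← ENNReal.rpow_mul, div_mul_div_comm, mul_comm, div_self (by positivity),
          ENNReal.rpow_one]
      have e2 : ∀ x : ℝ≥0∞, (x ^ (r.toReal / q.toReal)) ^ (q.toReal / r.toReal) = x := by
        intro x
        rw [← ENNReal.rpow_mul, div_mul_div_comm, mul_comm, div_self (by positivity),
          ENNReal.rpow_one]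
      have hmF : AEMeasurable (fun x => F x ^ (r.toReal / p.toReal)) μ :=
        (aemeas_winsum T μ hT hfm L p.toReal).pow_const _
      have hmG : AEMeasurable (fun x => G x ^ (r.toReal / q.toReal)) μ :=
        (aemeas_winsum T μ hT hgm L q.toReal).pow_const _
      have hHolder := ENNReal.lintegral_mul_le_Lp_mul_Lq μ hc hmF hmG
      simp only [Pi.mul_apply, e1, e2, one_div_div] at hHolder
      have hFint : ∫⁻ x, F x ∂μ = (L : ℝ≥0∞) * Nf ^ p.toReal := by
        rw [hFdef]
        rw [lintegral_winsum T μ hT hfm L p.toReal, lintegral_rpow_eq μ hp hptop f]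
      have hGint : ∫⁻ x, G x ∂μ = (L : ℝ≥0∞) * Ng ^ q.toReal := by
        rw [hGdef]
        rw [lintegral_winsum T μ hT hgm L q.toReal, lintegral_rpow_eq μ hq hqtop g]
      rw [hFint, hGint] at hHolder
      refine hHolder.trans (le_of_eq ?_)
      rw [ENNReal.mul_rpow_of_nonneg _ _ (by positivity),
        ENNReal.mul_rpow_of_nonneg _ _ (by positivity),
        ← ENNReal.rpow_mul Nf, ← ENNReal.rpow_mul Ng]
      have ePf : p.toReal * (r.toReal / p.toReal) = r.toReal := by field_simp
      have eQg : q.toReal * (r.toReal / q.toReal) = r.toReal := by field_simp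
      rw [ePf, eQg]
      have hsum : r.toReal / p.toReal + r.toReal / q.toReal = 1 := by
        have := hc.inv_add_inv_eq_one
        rwa [inv_div, inv_div] at this
      calc (L : ℝ≥0∞) ^ (r.toReal / p.toReal) * Nf ^ r.toReal
            * ((L : ℝ≥0∞) ^ (r.toReal / q.toReal) * Ng ^ r.toReal)
          = (L : ℝ≥0∞) ^ (r.toReal / p.toReal) * (L : ℝ≥0∞) ^ (r.toReal / q.toReal)
            * Nf ^ r.toReal * Ng ^ r.toReal := by ring
        _ = (L : ℝ≥0∞) * Nf ^ r.toReal * Ng ^ r.toReal := by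
            rw [← ENNReal.rpow_add _ _ hLne hLtop, hsum, ENNReal.rpow_one]

end Calderon

/-- Calderón transference principle, strong type: a strong `(p,q,r)` bound for the
bilinear maximal function of the weighted averages along polynomials `P, Q` on the
integers transfers to any dynamical system. -/
theorem calderon_transference_strong_type
    {X : Type*} [MeasurableSpace X] (μ : Measure X) [IsProbabilityMeasure μ]
    (T : X ≃ᵐ X) (hT : MeasurePreserving (⇑T) μ μ)
    (a : ℕ → ℂ) (P Q : Polynomial ℤ)
    (hP : 0 < P.natDegree) (hQ : 0 < Q.natDegree)
    (hPnat : ∀ n : ℕ, 0 ≤ P.eval (n : ℤ)) (hQnat : ∀ n : ℕ, 0 ≤ Q.eval (n : ℤ))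
    (p q r : ℝ≥0∞) (hp : 1 ≤ p) (hq : 1 ≤ q) (hr : 1 ≤ r)
    (hpqr : 1 / r = 1 / p + 1 / q)
    (C : ℝ) (hC : 0 < C)
    (hyp : ∀ φ ψ : ℤ → ℂ, (Function.support φ).Finite → (Function.support ψ).Finite →
      lpNormZ r (fun j : ℤ => ⨆ N : ℕ, ⨆ _ : 1 ≤ N,
          (‖(1 / (N : ℂ)) * ∑ n ∈ Finset.Icc 1 N,
              a n * φ (j + P.eval (n : ℤ)) * ψ (j + Q.eval (n : ℤ))‖₊ : ℝ≥0∞))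
        ≤ ENNReal.ofReal C * lpNormZ p (fun j => (‖φ j‖₊ : ℝ≥0∞))
            * lpNormZ q (fun j => (‖ψ j‖₊ : ℝ≥0∞)))
    (f g : X → ℂ) (hf : MemLp f p μ) (hg : MemLp g q μ) :
    lpNormMeasure μ r (fun x : X => ⨆ N : ℕ, ⨆ _ : 1 ≤ N,
        (‖(1 / (N : ℂ)) * ∑ n ∈ Finset.Icc 1 N,
            a n * f ((⇑T)^[(P.eval (n : ℤ)).toNat] x) * g ((⇑T)^[(Q.eval (n : ℤ)).toNat] x)‖₊ : ℝ≥0∞))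
      ≤ ENNReal.ofReal C * eLpNorm f p μ * eLpNorm g q μ := by
  classical
  have hfm : AEMeasurable f μ := hf.1.aemeasurable
  have hgm : AEMeasurable g μ := hg.1.aemeasurable
  have hyp' : ∀ φ ψ : ℤ → ℂ, (Function.support φ).Finite → (Function.support ψ).Finite →
      lpNormZ r (Calderon.Dfun a P Q φ ψ)
        ≤ ENNReal.ofReal C * lpNormZ p (fun j => (‖φ j‖₊ : ℝ≥0∞))
            * lpNormZ q (fun j => (‖ψ j‖₊ : ℝ≥0∞)) := hyp
  show lpNormMeasure μ r
      (fun x : X => ⨆ N : ℕ, ⨆ _ : 1 ≤ N, Calderon.Sfun T a P Q f g x N)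
      ≤ ENNReal.ofReal C * eLpNorm f p μ * eLpNorm g q μ
  by_cases hrtop : r = ⊤
  · -- r = ∞ : then p = q = ∞
    subst hrtop
    have hptop : p = ⊤ := by
      by_contra hpt
      rw [ENNReal.div_top] at hpqr
      have h1 := (add_eq_zero.mp hpqr.symm).1
      exact hpt ((ENNReal.div_eq_zero_iff.mp h1).resolve_left one_ne_zero)
    have hqtop : q = ⊤ := by
      by_contra hqt
      rw [ENNReal.div_top] at hpqr
      have h1 := (add_eq_zero.mp hpqr.symm).2
      exact hqt ((ENNReal.div_eq_zero_iff.mp h1).resolve_left one_ne_zero)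
    subst hptop; subst hqtop
    set Nf := eLpNorm f ⊤ μ with hNfdef
    set Ng := eLpNorm g ⊤ μ with hNgdef
    rw [lpNormMeasure, if_pos rfl]
    have base_f : ∀ᵐ y ∂μ, (‖f y‖₊ : ℝ≥0∞) ≤ Nf := by
      rw [hNfdef, eLpNorm_exponent_top]
      exact ae_le_eLpNormEssSup
    have base_g : ∀ᵐ y ∂μ, (‖g y‖₊ : ℝ≥0∞) ≤ Ng := by
      rw [hNgdef, eLpNorm_exponent_top]
      exact ae_le_eLpNormEssSup
    have hall_f : ∀ᵐ x ∂μ, ∀ i : ℕ, (‖f ((⇑T)^[i] x)‖₊ : ℝ≥0∞) ≤ Nf :=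
      ae_all_iff.mpr fun i => Calderon.ae_iterate μ hT base_f i
    have hall_g : ∀ᵐ x ∂μ, ∀ i : ℕ, (‖g ((⇑T)^[i] x)‖₊ : ℝ≥0∞) ≤ Ng :=
      ae_all_iff.mpr fun i => Calderon.ae_iterate μ hT base_g i
    refine essSup_le_of_ae_le _ ?_
    filter_upwards [hall_f, hall_g] with x hxf hxg
    refine iSup₂_le fun N hN => ?_
    set A : ℕ := Finset.sup (Finset.Icc 1 N)
      (fun n => max (P.eval (n : ℤ)).toNat (Q.eval (n : ℤ)).toNat) with hA
    have hAprop : ∀ n ∈ Finset.Icc 1 N,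
        (P.eval (n : ℤ)).toNat ≤ A ∧ (Q.eval (n : ℤ)).toNat ≤ A := fun n hn =>
      ⟨le_trans (le_max_left _ _) (Finset.le_sup (f := fun n : ℕ => max (P.eval (n : ℤ)).toNat (Q.eval (n : ℤ)).toNat) hn),
       le_trans (le_max_right _ _) (Finset.le_sup (f := fun n : ℕ => max (P.eval (n : ℤ)).toNat (Q.eval (n : ℤ)).toNat) hn)⟩
    have hkey := Calderon.EM_le_D T a P Q f g x A hAprop hPnat hQnat
      (M := N) (J := 0) (i := 0) le_rfl
    simp only [Function.iterate_zero, id_eq] at hkey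
    have h1 : Calderon.Sfun T a P Q f g x N ≤ Calderon.EM T a P Q f g N x :=
      le_iSup₂_of_le N (Finset.mem_Icc.mpr ⟨hN, le_rfl⟩) le_rfl
    calc Calderon.Sfun T a P Q f g x N
        ≤ Calderon.EM T a P Q f g N x := h1
      _ ≤ Calderon.Dfun a P Q (Calderon.win T f x (0 + A + 1))
            (Calderon.win T g x (0 + A + 1)) ((0 : ℕ) : ℤ) := hkey
      _ ≤ ⨆ j : ℤ, Calderon.Dfun a P Q (Calderon.win T f x (0 + A + 1))
            (Calderon.win T g x (0 + A + 1)) j := le_iSup _ _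
      _ = lpNormZ ⊤ (Calderon.Dfun a P Q (Calderon.win T f x (0 + A + 1))
            (Calderon.win T g x (0 + A + 1))) := by rw [lpNormZ, if_pos rfl]
      _ ≤ ENNReal.ofReal C
            * lpNormZ ⊤ (fun j => (‖Calderon.win T f x (0 + A + 1) j‖₊ : ℝ≥0∞))
            * lpNormZ ⊤ (fun j => (‖Calderon.win T g x (0 + A + 1) j‖₊ : ℝ≥0∞)) :=
          hyp' _ _ (Calderon.win_support_finite T f x _) (Calderon.win_support_finite T g x _)
      _ ≤ ENNReal.ofReal C * Nf * Ng := by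
          refine mul_le_mul' (mul_le_mul' le_rfl ?_) ?_
          · exact Calderon.lpNormZ_win_top T f x _ Nf fun i _ => hxf i
          · exact Calderon.lpNormZ_win_top T g x _ Ng fun i _ => hxg i
  · -- r finite
    have hρ : 0 < r.toReal := Calderon.toReal_pos' hr hrtop
    set Nf := eLpNorm f p μ with hNfdef
    set Ng := eLpNorm g q μ with hNgdef
    have hNf_top : Nf ≠ ⊤ := hf.eLpNorm_lt_top.ne
    have hNg_top : Ng ≠ ⊤ := hg.eLpNorm_lt_top.ne
    set K : ℝ≥0∞ := (ENNReal.ofReal C * Nf * Ng) ^ r.toReal with hK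
    have hKtop : K ≠ ⊤ := ENNReal.rpow_ne_top_of_nonneg hρ.le
      (ENNReal.mul_ne_top (ENNReal.mul_ne_top ENNReal.ofReal_ne_top hNf_top) hNg_top)
    have hMbound : ∀ M : ℕ,
        ∫⁻ x, Calderon.EM T a P Q f g M x ^ r.toReal ∂μ ≤ K := by
      intro M
      set A : ℕ := Finset.sup (Finset.Icc 1 M)
        (fun n => max (P.eval (n : ℤ)).toNat (Q.eval (n : ℤ)).toNat) with hA
      have hAprop : ∀ n ∈ Finset.Icc 1 M,
          (P.eval (n : ℤ)).toNat ≤ A ∧ (Q.eval (n : ℤ)).toNat ≤ A := fun n hn =>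
        ⟨le_trans (le_max_left _ _) (Finset.le_sup (f := fun n : ℕ => max (P.eval (n : ℤ)).toNat (Q.eval (n : ℤ)).toNat) hn),
         le_trans (le_max_right _ _) (Finset.le_sup (f := fun n : ℕ => max (P.eval (n : ℤ)).toNat (Q.eval (n : ℤ)).toNat) hn)⟩
      refine Calderon.le_of_grows _ K A hKtop fun J => ?_
      set L : ℕ := J + A + 1 with hLdef
      have hLcast : (L : ℝ≥0∞) = (J : ℝ≥0∞) + (A : ℝ≥0∞) + 1 := by
        rw [hLdef]; push_cast; ring
      have pt : ∀ x, ∑ i ∈ Finset.range (J + 1),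
          Calderon.EM T a P Q f g M ((⇑T)^[i] x) ^ r.toReal
          ≤ (ENNReal.ofReal C * lpNormZ p (fun j => (‖Calderon.win T f x L j‖₊ : ℝ≥0∞))
              * lpNormZ q (fun j => (‖Calderon.win T g x L j‖₊ : ℝ≥0∞))) ^ r.toReal := by
        intro x
        calc ∑ i ∈ Finset.range (J + 1), Calderon.EM T a P Q f g M ((⇑T)^[i] x) ^ r.toReal
            ≤ ∑ i ∈ Finset.range (J + 1),
                Calderon.Dfun a P Q (Calderon.win T f x L) (Calderon.win T g x L) (i : ℤ)
                  ^ r.toReal := by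
              refine Finset.sum_le_sum fun i hi => ENNReal.rpow_le_rpow ?_ hρ.le
              exact Calderon.EM_le_D T a P Q f g x A hAprop hPnat hQnat
                (Finset.mem_range_succ_iff.mp hi)
          _ ≤ lpNormZ r (Calderon.Dfun a P Q (Calderon.win T f x L) (Calderon.win T g x L))
                ^ r.toReal := Calderon.sum_rpow_le hr hrtop _ _
          _ ≤ _ := ENNReal.rpow_le_rpow
              (hyp' _ _ (Calderon.win_support_finite T f x _)
                (Calderon.win_support_finite T g x _)) hρ.le
      have step1 : ((J : ℝ≥0∞) + 1) * ∫⁻ x, Calderon.EM T a P Q f g M x ^ r.toReal ∂μ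
          = ∫⁻ x, ∑ i ∈ Finset.range (J + 1),
              Calderon.EM T a P Q f g M ((⇑T)^[i] x) ^ r.toReal ∂μ := by
        have hmeas : ∀ i : ℕ, AEMeasurable
            (fun x => Calderon.EM T a P Q f g M ((⇑T)^[i] x) ^ r.toReal) μ := fun i =>
          ((Calderon.aemeas_EM T a P Q f g μ hT hfm hgm M).pow_const
            r.toReal).comp_quasiMeasurePreserving (hT.iterate i).quasiMeasurePreserving
        rw [lintegral_finset_sum' _ fun i _ => hmeas i]
        have h1 : ∀ i ∈ Finset.range (J + 1),
            ∫⁻ x, Calderon.EM T a P Q f g M ((⇑T)^[i] x) ^ r.toReal ∂μ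
              = ∫⁻ x, Calderon.EM T a P Q f g M x ^ r.toReal ∂μ := fun i _ =>
          Calderon.lintegral_iterate μ T hT
            (fun y => Calderon.EM T a P Q f g M y ^ r.toReal) i
        rw [Finset.sum_congr rfl h1, Finset.sum_const, Finset.card_range, nsmul_eq_mul]
        push_cast
        ring
      have step3 : ∫⁻ x, (ENNReal.ofReal C
            * lpNormZ p (fun j => (‖Calderon.win T f x L j‖₊ : ℝ≥0∞))
            * lpNormZ q (fun j => (‖Calderon.win T g x L j‖₊ : ℝ≥0∞))) ^ r.toReal ∂μ
          ≤ K * ((J : ℝ≥0∞) + (A : ℝ≥0∞) + 1) := by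
        have expand : ∀ x, (ENNReal.ofReal C
              * lpNormZ p (fun j => (‖Calderon.win T f x L j‖₊ : ℝ≥0∞))
              * lpNormZ q (fun j => (‖Calderon.win T g x L j‖₊ : ℝ≥0∞))) ^ r.toReal
            = ENNReal.ofReal C ^ r.toReal
              * ((lpNormZ p (fun j => (‖Calderon.win T f x L j‖₊ : ℝ≥0∞))) ^ r.toReal
                * (lpNormZ q (fun j => (‖Calderon.win T g x L j‖₊ : ℝ≥0∞))) ^ r.toReal) := by
          intro x
          rw [ENNReal.mul_rpow_of_nonneg _ _ hρ.le, ENNReal.mul_rpow_of_nonneg _ _ hρ.le,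
            mul_assoc]
        rw [lintegral_congr expand,
          lintegral_const_mul' _ _
            (ENNReal.rpow_ne_top_of_nonneg hρ.le ENNReal.ofReal_ne_top)]
        have hwin := Calderon.winint_bound T μ hT f g hp hq hr hrtop hpqr hf hg L
          (by omega)
        calc ENNReal.ofReal C ^ r.toReal
              * ∫⁻ x, (lpNormZ p (fun j => (‖Calderon.win T f x L j‖₊ : ℝ≥0∞))) ^ r.toReal
                * (lpNormZ q (fun j => (‖Calderon.win T g x L j‖₊ : ℝ≥0∞))) ^ r.toReal ∂μ
            ≤ ENNReal.ofReal C ^ r.toReal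
              * ((L : ℝ≥0∞) * Nf ^ r.toReal * Ng ^ r.toReal) := mul_le_mul_right hwin _
          _ = K * (L : ℝ≥0∞) := by
              rw [hK, ENNReal.mul_rpow_of_nonneg _ _ hρ.le,
                ENNReal.mul_rpow_of_nonneg _ _ hρ.le]
              ring
          _ = K * ((J : ℝ≥0∞) + (A : ℝ≥0∞) + 1) := by rw [hLcast]
      calc ((J : ℝ≥0∞) + 1) * ∫⁻ x, Calderon.EM T a P Q f g M x ^ r.toReal ∂μ
          = ∫⁻ x, ∑ i ∈ Finset.range (J + 1),
              Calderon.EM T a P Q f g M ((⇑T)^[i] x) ^ r.toReal ∂μ := step1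
        _ ≤ ∫⁻ x, (ENNReal.ofReal C
              * lpNormZ p (fun j => (‖Calderon.win T f x L j‖₊ : ℝ≥0∞))
              * lpNormZ q (fun j => (‖Calderon.win T g x L j‖₊ : ℝ≥0∞))) ^ r.toReal ∂μ :=
            lintegral_mono pt
        _ ≤ K * ((J : ℝ≥0∞) + (A : ℝ≥0∞) + 1) := step3
    -- monotone convergence
    have hEeq : ∀ x, (⨆ N : ℕ, ⨆ _ : 1 ≤ N, Calderon.Sfun T a P Q f g x N)
        = ⨆ M : ℕ, Calderon.EM T a P Q f g M x := by
      intro x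
      apply le_antisymm
      · refine iSup₂_le fun N hN => ?_
        exact le_iSup_of_le N (le_iSup₂_of_le N (Finset.mem_Icc.mpr ⟨hN, le_rfl⟩) le_rfl)
      · refine iSup_le fun M => iSup₂_le fun N hN => ?_
        exact le_iSup₂_of_le N (Finset.mem_Icc.mp hN).1 le_rfl
    have hmono : ∀ x, Monotone fun M => Calderon.EM T a P Q f g M x := by
      intro x M M' h
      exact iSup₂_le fun N hN => le_iSup₂_of_le N
        (Finset.Icc_subset_Icc_right h hN) le_rfl
    rw [lpNormMeasure, if_neg hrtop]
    have hint : ∫⁻ x, (⨆ N : ℕ, ⨆ _ : 1 ≤ N, Calderon.Sfun T a P Q f g x N) ^ r.toReal ∂μ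
        = ⨆ M : ℕ, ∫⁻ x, Calderon.EM T a P Q f g M x ^ r.toReal ∂μ := by
      have hpw : ∀ x, (⨆ N : ℕ, ⨆ _ : 1 ≤ N, Calderon.Sfun T a P Q f g x N) ^ r.toReal
          = ⨆ M : ℕ, Calderon.EM T a P Q f g M x ^ r.toReal := by
        intro x
        rw [hEeq x]
        exact OrderIso.map_iSup (ENNReal.orderIsoRpow r.toReal hρ) _
      rw [lintegral_congr hpw]
      exact lintegral_iSup'
        (fun M => (Calderon.aemeas_EM T a P Q f g μ hT hfm hgm M).pow_const r.toReal)
        (ae_of_all _ fun x M M' h => ENNReal.rpow_le_rpow (hmono x h) hρ.le)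
    rw [hint]
    calc (⨆ M : ℕ, ∫⁻ x, Calderon.EM T a P Q f g M x ^ r.toReal ∂μ) ^ (1 / r.toReal)
        ≤ K ^ (1 / r.toReal) :=
          ENNReal.rpow_le_rpow (iSup_le hMbound) (by positivity)
      _ = ENNReal.ofReal C * Nf * Ng := by
          rw [hK, ← ENNReal.rpow_mul, mul_one_div, div_self hρ.ne', ENNReal.rpow_one]
end

section
/- (Calderón transference, weak type.) Let (a_n)_{n≥1} be a sequence of complex numbers, let P and Q be non-constant polynomials with integer coefficients mapping the natural numbers into the natural numbers, and let C > 0. Assume that for all finitely supported functions φ, ψ : ℤ → ℂ, every λ > 0 and every integer J ≥ 2, λ · #{ j ∈ ℤ : 1 ≤ j ≤ J and sup_{N ≥ 1} |(1/N) ∑_{n=1}^{N} a_n φ(j + P(n)) ψ(j + Q(n))| > λ } ≤ C ‖φ‖_{ℓ²(ℤ)} ‖ψ‖_{ℓ²(ℤ)}. Then for any dynamical system (X, 𝒜, μ, T) and any f, g ∈ L²(X, μ), sup_{λ > 0} ( λ · μ{ x ∈ X : sup_{N ≥ 1} |(1/N) ∑_{n=1}^{N} a_n f(T^{P(n)} x)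 g(T^{Q(n)} x)| > λ } ) ≤ C ‖f‖_{L²(μ)} ‖g‖_{L²(μ)}. -/
open MeasureTheory Filter Finset
open scoped ENNReal NNReal

/-- The `ℓ²(ℤ)` norm (valued in `ℝ≥0∞`) of a function `φ : ℤ → ℂ`. -/
noncomputable def l2NormZ (φ : ℤ → ℂ) : ℝ≥0∞ :=
  (∑' j : ℤ, (‖φ j‖₊ : ℝ≥0∞) ^ (2 : ℝ)) ^ ((1 : ℝ) / 2)

private theorem calderon_core
    {X : Type*} [MeasurableSpace X] (μ : Measure X) [IsProbabilityMeasure μ]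
    (T : X ≃ᵐ X) (hT : MeasurePreserving (⇑T) μ μ)
    (a : ℕ → ℂ) (P Q : Polynomial ℤ)
    (hPnat : ∀ n : ℕ, 0 ≤ P.eval (n : ℤ)) (hQnat : ∀ n : ℕ, 0 ≤ Q.eval (n : ℤ))
    (C : ℝ)
    (hyp : ∀ φ ψ : ℤ → ℂ, (Function.support φ).Finite → (Function.support ψ).Finite →
      ∀ lam : ℝ, 0 < lam → ∀ J : ℕ, 2 ≤ J →
      ENNReal.ofReal lam *
          (Set.ncard {j : ℤ | 1 ≤ j ∧ j ≤ (J : ℤ) ∧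
            ENNReal.ofReal lam < ⨆ N : ℕ, ⨆ _ : 1 ≤ N,
              (‖(1 / (N : ℂ)) * ∑ n ∈ Finset.Icc 1 N,
                  a n * φ (j + P.eval (n : ℤ)) * ψ (j + Q.eval (n : ℤ))‖₊ : ℝ≥0∞)} : ℕ)
        ≤ ENNReal.ofReal C * l2NormZ φ * l2NormZ ψ)
    (f g : X → ℂ) (hf : Measurable f) (hg : Measurable g)
    (hfL : eLpNorm f 2 μ ≠ ∞) (hgL : eLpNorm g 2 μ ≠ ∞)
    (lam : ℝ) (hlam : 0 < lam) :
    ENNReal.ofReal lam *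
        μ {x : X | ENNReal.ofReal lam < ⨆ N : ℕ, ⨆ _ : 1 ≤ N,
            (‖(1 / (N : ℂ)) * ∑ n ∈ Finset.Icc 1 N,
                a n * f ((⇑T)^[(P.eval (n : ℤ)).toNat] x)
                  * g ((⇑T)^[(Q.eval (n : ℤ)).toNat] x)‖₊ : ℝ≥0∞)}
      ≤ ENNReal.ofReal C * eLpNorm f 2 μ * eLpNorm g 2 μ := by
  classical
  set Avg : ℕ → X → ℝ≥0∞ := fun N x =>
    (‖(1 / (N : ℂ)) * ∑ n ∈ Finset.Icc 1 N,
        a n * f ((⇑T)^[(P.eval (n : ℤ)).toNat] x)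
          * g ((⇑T)^[(Q.eval (n : ℤ)).toNat] x)‖₊ : ℝ≥0∞) with hAvg
  have hTit : ∀ k : ℕ, Measurable ((⇑T)^[k]) := fun k => T.measurable.iterate k
  have hAvgM : ∀ N, Measurable (Avg N) := by
    intro N
    apply Measurable.coe_nnreal_ennreal
    apply Measurable.nnnorm
    apply Measurable.const_mul
    exact Finset.measurable_sum _ fun n _ =>
      (measurable_const.mul (hf.comp (hTit _))).mul (hg.comp (hTit _))
  set E : ℕ → Set X := fun N₀ =>
    {x | ENNReal.ofReal lam < ⨆ N, ⨆ _ : N ∈ Finset.Icc 1 N₀, Avg N x} with hE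
  have hEmeas : ∀ N₀, MeasurableSet (E N₀) := fun N₀ =>
    measurableSet_lt measurable_const
      (Measurable.iSup fun N => Measurable.iSup fun _ => hAvgM N)
  have hset : {x : X | ENNReal.ofReal lam < ⨆ N : ℕ, ⨆ _ : 1 ≤ N, Avg N x} = ⋃ N₀, E N₀ := by
    ext x
    simp only [hE, Set.mem_iUnion, Set.mem_setOf_eq, lt_iSup_iff, Finset.mem_Icc]
    constructor
    · rintro ⟨N, h1, hlt⟩
      exact ⟨N, N, ⟨h1, le_rfl⟩, hlt⟩
    · rintro ⟨N₀, N, ⟨h1, _⟩, hlt⟩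
      exact ⟨N, h1, hlt⟩
  have hEmono : Monotone E := by
    intro m n hmn x hx
    simp only [hE, Set.mem_setOf_eq] at hx ⊢
    refine lt_of_lt_of_le hx (iSup_le fun N => iSup_le fun hN => ?_)
    exact le_iSup_of_le N (le_iSup_of_le (Finset.Icc_subset_Icc le_rfl hmn hN) le_rfl)
  rw [hset, Directed.measure_iUnion hEmono.directed_le, ENNReal.mul_iSup]
  refine iSup_le fun N₀ => ?_
  -- key quantities
  set A := eLpNorm f 2 μ with hA
  set B := eLpNorm g 2 μ with hB
  set K := ENNReal.ofReal C * A * B with hKdef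
  have hKne : K ≠ ∞ :=
    ENNReal.mul_ne_top (ENNReal.mul_ne_top ENNReal.ofReal_ne_top hfL) hgL
  set If := ∫⁻ x, (‖f x‖₊ : ℝ≥0∞) ^ (2 : ℝ) ∂μ with hIf
  set Ig := ∫⁻ x, (‖g x‖₊ : ℝ≥0∞) ^ (2 : ℝ) ∂μ with hIg
  have hAeq : A = If ^ ((1 : ℝ) / 2) := by
    rw [hA, eLpNorm_eq_lintegral_rpow_enorm_toReal two_ne_zero ENNReal.ofNat_ne_top, hIf]
    simp only [enorm_eq_nnnorm]
    norm_num
  have hBeq : B = Ig ^ ((1 : ℝ) / 2) := by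
    rw [hB, eLpNorm_eq_lintegral_rpow_enorm_toReal two_ne_zero ENNReal.ofNat_ne_top, hIg]
    simp only [enorm_eq_nnnorm]
    norm_num
  set R := Finset.sup (Finset.Icc 1 N₀)
    (fun n => (P.eval (n : ℤ)).toNat ⊔ (Q.eval (n : ℤ)).toNat) with hR
  -- main estimate for each J
  have hJmain : ∀ J : ℕ, 2 ≤ J →
      (J : ℝ≥0∞) * (ENNReal.ofReal lam * μ (E N₀)) ≤ ((J + R : ℕ) : ℝ≥0∞) * K := by
    intro J hJ2
    set φ : X → ℤ → ℂ := fun x j =>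
      if j ∈ Finset.Icc (1 : ℤ) ((J : ℤ) + (R : ℤ)) then f ((⇑T)^[j.toNat] x) else 0 with hφ
    set ψ : X → ℤ → ℂ := fun x j =>
      if j ∈ Finset.Icc (1 : ℤ) ((J : ℤ) + (R : ℤ)) then g ((⇑T)^[j.toNat] x) else 0 with hψ
    have hφfin : ∀ x, (Function.support (φ x)).Finite := by
      intro x
      refine Set.Finite.subset (Finset.Icc (1 : ℤ) ((J : ℤ) + (R : ℤ))).finite_toSet ?_
      intro j hj
      by_contra hmem
      exact hj (if_neg (by simpa using hmem))
    have hψfin : ∀ x, (Function.support (ψ x)).Finite := by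
      intro x
      refine Set.Finite.subset (Finset.Icc (1 : ℤ) ((J : ℤ) + (R : ℤ))).finite_toSet ?_
      intro j hj
      by_contra hmem
      exact hj (if_neg (by simpa using hmem))
    -- the transfer inequality pointwise in x
    have key : ∀ x, ∀ j : ℤ, 1 ≤ j → j ≤ (J : ℤ) → (⇑T)^[j.toNat] x ∈ E N₀ →
        j ∈ {j : ℤ | 1 ≤ j ∧ j ≤ (J : ℤ) ∧
          ENNReal.ofReal lam < ⨆ N : ℕ, ⨆ _ : 1 ≤ N,
            (‖(1 / (N : ℂ)) * ∑ n ∈ Finset.Icc 1 N,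
                a n * φ x (j + P.eval (n : ℤ)) * ψ x (j + Q.eval (n : ℤ))‖₊ : ℝ≥0∞)} := by
      intro x j hj1 hjJ hx
      refine ⟨hj1, hjJ, ?_⟩
      simp only [hE, Set.mem_setOf_eq] at hx
      refine lt_of_lt_of_le hx (iSup_le fun N => iSup_le fun hN => ?_)
      obtain ⟨hN1, hNN₀⟩ := Finset.mem_Icc.mp hN
      refine le_iSup_of_le N (le_iSup_of_le hN1 (le_of_eq ?_))
      have hsum : ∀ n ∈ Finset.Icc 1 N,
          a n * f ((⇑T)^[(P.eval (n : ℤ)).toNat] ((⇑T)^[j.toNat] x))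
            * g ((⇑T)^[(Q.eval (n : ℤ)).toNat] ((⇑T)^[j.toNat] x))
          = a n * φ x (j + P.eval (n : ℤ)) * ψ x (j + Q.eval (n : ℤ)) := by
        intro n hn
        obtain ⟨hn1, hnN⟩ := Finset.mem_Icc.mp hn
        have hnN₀ : n ∈ Finset.Icc 1 N₀ := Finset.mem_Icc.mpr ⟨hn1, hnN.trans hNN₀⟩
        have hpR : (P.eval (n : ℤ)).toNat ≤ R :=
          le_trans (le_max_left _ _) (Finset.le_sup (f := fun n : ℕ => (P.eval (n : ℤ)).toNat ⊔ (Q.eval (n : ℤ)).toNat) hnN₀)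
        have hqR : (Q.eval (n : ℤ)).toNat ≤ R :=
          le_trans (le_max_right _ _) (Finset.le_sup (f := fun n : ℕ => (P.eval (n : ℤ)).toNat ⊔ (Q.eval (n : ℤ)).toNat) hnN₀)
        have h0j : (0 : ℤ) ≤ j := le_trans zero_le_one hj1
        have hφeq : φ x (j + P.eval (n : ℤ))
            = f ((⇑T)^[(P.eval (n : ℤ)).toNat] ((⇑T)^[j.toNat] x)) := by
          have hmem : j + P.eval (n : ℤ) ∈ Finset.Icc (1 : ℤ) ((J : ℤ) + (R : ℤ)) := by
            rw [Finset.mem_Icc]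
            have h1 : P.eval (n : ℤ) ≤ (R : ℤ) := by
              have := Int.toNat_of_nonneg (hPnat n)
              omega
            constructor
            · linarith [hPnat n]
            · linarith
          rw [hφ]
          simp only
          rw [if_pos hmem]
          congr 1
          rw [Int.toNat_add h0j (hPnat n), add_comm, Function.iterate_add_apply]
        have hψeq : ψ x (j + Q.eval (n : ℤ))
            = g ((⇑T)^[(Q.eval (n : ℤ)).toNat] ((⇑T)^[j.toNat] x)) := by
          have hmem : j + Q.eval (n : ℤ) ∈ Finset.Icc (1 : ℤ) ((J : ℤ) + (R : ℤ)) := by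
            rw [Finset.mem_Icc]
            have h1 : Q.eval (n : ℤ) ≤ (R : ℤ) := by
              have := Int.toNat_of_nonneg (hQnat n)
              omega
            constructor
            · linarith [hQnat n]
            · linarith
          rw [hψ]
          simp only
          rw [if_pos hmem]
          congr 1
          rw [Int.toNat_add h0j (hQnat n), add_comm, Function.iterate_add_apply]
        rw [hφeq, hψeq]
      rw [hAvg]
      simp only
      congr 2
      exact congrArg (fun s => 1 / (N : ℂ) * s) (Finset.sum_congr rfl hsum)
    -- counting function
    set cnt : X → ℕ := fun x =>
      ((Finset.Icc (1 : ℤ) (J : ℤ)).filter (fun j => (⇑T)^[j.toNat] x ∈ E N₀)).card with hcntdef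
    have hpt : ∀ x, ENNReal.ofReal lam * (cnt x : ℝ≥0∞)
        ≤ ENNReal.ofReal C * (l2NormZ (φ x) * l2NormZ (ψ x)) := by
      intro x
      have h1 := hyp (φ x) (ψ x) (hφfin x) (hψfin x) lam hlam J hJ2
      rw [← mul_assoc]
      refine le_trans ?_ h1
      apply mul_le_mul_right
      have hSfin : ({j : ℤ | 1 ≤ j ∧ j ≤ (J : ℤ) ∧
          ENNReal.ofReal lam < ⨆ N : ℕ, ⨆ _ : 1 ≤ N,
            (‖(1 / (N : ℂ)) * ∑ n ∈ Finset.Icc 1 N,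
                a n * φ x (j + P.eval (n : ℤ)) * ψ x (j + Q.eval (n : ℤ))‖₊ : ℝ≥0∞)}).Finite := by
        refine Set.Finite.subset (Set.finite_Icc (1 : ℤ) (J : ℤ)) ?_
        intro j hj
        exact Set.mem_Icc.mpr ⟨hj.1, hj.2.1⟩
      have hsub : (((Finset.Icc (1 : ℤ) (J : ℤ)).filter
            (fun j => (⇑T)^[j.toNat] x ∈ E N₀)) : Set ℤ) ⊆
          {j : ℤ | 1 ≤ j ∧ j ≤ (J : ℤ) ∧
            ENNReal.ofReal lam < ⨆ N : ℕ, ⨆ _ : 1 ≤ N,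
              (‖(1 / (N : ℂ)) * ∑ n ∈ Finset.Icc 1 N,
                  a n * φ x (j + P.eval (n : ℤ)) * ψ x (j + Q.eval (n : ℤ))‖₊ : ℝ≥0∞)} := by
        intro j hj
        rw [Finset.mem_coe, Finset.mem_filter, Finset.mem_Icc] at hj
        exact key x j hj.1.1 hj.1.2 hj.2
      have : cnt x ≤ Set.ncard {j : ℤ | 1 ≤ j ∧ j ≤ (J : ℤ) ∧
          ENNReal.ofReal lam < ⨆ N : ℕ, ⨆ _ : 1 ≤ N,
            (‖(1 / (N : ℂ)) * ∑ n ∈ Finset.Icc 1 N,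
                a n * φ x (j + P.eval (n : ℤ)) * ψ x (j + Q.eval (n : ℤ))‖₊ : ℝ≥0∞)} := by
        rw [hcntdef]
        simp only
        rw [← Set.ncard_coe_finset]
        exact Set.ncard_le_ncard hsub hSfin
      exact_mod_cast Nat.cast_le.mpr this
    -- integrate the counting function
    have hcnt_eq : ∀ x, (cnt x : ℝ≥0∞) = ∑ j ∈ Finset.Icc (1 : ℤ) (J : ℤ),
        Set.indicator ((⇑T)^[j.toNat] ⁻¹' E N₀) (1 : X → ℝ≥0∞) x := by
      intro x
      rw [hcntdef]
      simp only
      rw [Finset.card_filter, Nat.cast_sum]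
      refine Finset.sum_congr rfl fun j _ => ?_
      by_cases h : (⇑T)^[j.toNat] x ∈ E N₀
      · simp [h, Set.indicator_of_mem, Set.mem_preimage]
      · simp [h]
    have hint1 : ∫⁻ x, (cnt x : ℝ≥0∞) ∂μ = (J : ℝ≥0∞) * μ (E N₀) := by
      simp_rw [hcnt_eq]
      have hs : ∫⁻ x, ∑ j ∈ Finset.Icc (1 : ℤ) (J : ℤ),
            Set.indicator ((⇑T)^[j.toNat] ⁻¹' E N₀) (1 : X → ℝ≥0∞) x ∂μ
          = ∑ j ∈ Finset.Icc (1 : ℤ) (J : ℤ),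
            ∫⁻ x, Set.indicator ((⇑T)^[j.toNat] ⁻¹' E N₀) (1 : X → ℝ≥0∞) x ∂μ :=
        lintegral_finset_sum _ (fun j _ =>
          measurable_const.indicator ((hEmeas N₀).preimage (hTit j.toNat)))
      rw [hs]
      have heach : ∀ j ∈ Finset.Icc (1 : ℤ) (J : ℤ),
          ∫⁻ x, Set.indicator ((⇑T)^[j.toNat] ⁻¹' E N₀) (1 : X → ℝ≥0∞) x ∂μ
            = μ (E N₀) := by
        intro j _
        rw [lintegral_indicator_one ((hEmeas N₀).preimage (hTit j.toNat))]
        exact (hT.iterate j.toNat).measure_preimage (hEmeas N₀).nullMeasurableSet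
      rw [Finset.sum_congr rfl heach, Finset.sum_const, Int.card_Icc]
      have hcard : ((J : ℤ) + 1 - 1).toNat = J := by omega
      rw [hcard, nsmul_eq_mul]
    -- l2 norms
    have hl2φ : ∀ x, l2NormZ (φ x) = (∑ j ∈ Finset.Icc (1 : ℤ) ((J : ℤ) + (R : ℤ)),
        (‖f ((⇑T)^[j.toNat] x)‖₊ : ℝ≥0∞) ^ (2 : ℝ)) ^ ((1 : ℝ) / 2) := by
      intro x
      rw [l2NormZ]
      congr 1
      rw [tsum_eq_sum (s := Finset.Icc (1 : ℤ) ((J : ℤ) + (R : ℤ)))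
        (fun j hj => by rw [hφ]; simp only; rw [if_neg hj]; simp)]
      exact Finset.sum_congr rfl fun j hj => by rw [hφ]; simp only; rw [if_pos hj]
    have hl2ψ : ∀ x, l2NormZ (ψ x) = (∑ j ∈ Finset.Icc (1 : ℤ) ((J : ℤ) + (R : ℤ)),
        (‖g ((⇑T)^[j.toNat] x)‖₊ : ℝ≥0∞) ^ (2 : ℝ)) ^ ((1 : ℝ) / 2) := by
      intro x
      rw [l2NormZ]
      congr 1
      rw [tsum_eq_sum (s := Finset.Icc (1 : ℤ) ((J : ℤ) + (R : ℤ)))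
        (fun j hj => by rw [hψ]; simp only; rw [if_neg hj]; simp)]
      exact Finset.sum_congr rfl fun j hj => by rw [hψ]; simp only; rw [if_pos hj]
    set F : X → ℝ≥0∞ := fun x => ∑ j ∈ Finset.Icc (1 : ℤ) ((J : ℤ) + (R : ℤ)),
      (‖f ((⇑T)^[j.toNat] x)‖₊ : ℝ≥0∞) ^ (2 : ℝ) with hF
    set G : X → ℝ≥0∞ := fun x => ∑ j ∈ Finset.Icc (1 : ℤ) ((J : ℤ) + (R : ℤ)),
      (‖g ((⇑T)^[j.toNat] x)‖₊ : ℝ≥0∞) ^ (2 : ℝ) with hG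
    have hFm : Measurable F := Finset.measurable_sum _ fun j _ =>
      ((hf.comp (hTit _)).nnnorm.coe_nnreal_ennreal).pow_const _
    have hGm : Measurable G := Finset.measurable_sum _ fun j _ =>
      ((hg.comp (hTit _)).nnnorm.coe_nnreal_ennreal).pow_const _
    have hintF : ∫⁻ x, F x ∂μ = ((J + R : ℕ) : ℝ≥0∞) * If := by
      have hs : ∫⁻ x, F x ∂μ = ∑ j ∈ Finset.Icc (1 : ℤ) ((J : ℤ) + (R : ℤ)),
            ∫⁻ x, (‖f ((⇑T)^[j.toNat] x)‖₊ : ℝ≥0∞) ^ (2 : ℝ) ∂μ :=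
        lintegral_finset_sum _ (fun j _ =>
          ((hf.comp (hTit _)).nnnorm.coe_nnreal_ennreal).pow_const _)
      rw [hs]
      have heach : ∀ j ∈ Finset.Icc (1 : ℤ) ((J : ℤ) + (R : ℤ)),
          ∫⁻ x, (‖f ((⇑T)^[j.toNat] x)‖₊ : ℝ≥0∞) ^ (2 : ℝ) ∂μ = If := fun j _ =>
        (hT.iterate j.toNat).lintegral_comp (hf.nnnorm.coe_nnreal_ennreal.pow_const _)
      rw [Finset.sum_congr rfl heach, Finset.sum_const, Int.card_Icc]
      have hcard : ((J : ℤ) + (R : ℤ) + 1 - 1).toNat = J + R := by omega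
      rw [hcard, nsmul_eq_mul]
    have hintG : ∫⁻ x, G x ∂μ = ((J + R : ℕ) : ℝ≥0∞) * Ig := by
      have hs : ∫⁻ x, G x ∂μ = ∑ j ∈ Finset.Icc (1 : ℤ) ((J : ℤ) + (R : ℤ)),
            ∫⁻ x, (‖g ((⇑T)^[j.toNat] x)‖₊ : ℝ≥0∞) ^ (2 : ℝ) ∂μ :=
        lintegral_finset_sum _ (fun j _ =>
          ((hg.comp (hTit _)).nnnorm.coe_nnreal_ennreal).pow_const _)
      rw [hs]
      have heach : ∀ j ∈ Finset.Icc (1 : ℤ) ((J : ℤ) + (R : ℤ)),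
          ∫⁻ x, (‖g ((⇑T)^[j.toNat] x)‖₊ : ℝ≥0∞) ^ (2 : ℝ) ∂μ = Ig := fun j _ =>
        (hT.iterate j.toNat).lintegral_comp (hg.nnnorm.coe_nnreal_ennreal.pow_const _)
      rw [Finset.sum_congr rfl heach, Finset.sum_const, Int.card_Icc]
      have hcard : ((J : ℤ) + (R : ℤ) + 1 - 1).toNat = J + R := by omega
      rw [hcard, nsmul_eq_mul]
    -- Hölder
    have hconj : (2 : ℝ).HolderConjugate 2 := Real.HolderConjugate.two_two
    have hsimp : ∀ y : ℝ≥0∞, (y ^ ((1 : ℝ) / 2)) ^ (2 : ℝ) = y := fun y => by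
      rw [← ENNReal.rpow_mul]; norm_num
    have hHolder : ∫⁻ x, l2NormZ (φ x) * l2NormZ (ψ x) ∂μ
        ≤ ((J + R : ℕ) : ℝ≥0∞) * (A * B) := by
      have h1 : ∫⁻ x, l2NormZ (φ x) * l2NormZ (ψ x) ∂μ
          = ∫⁻ x, ((fun x => F x ^ ((1:ℝ)/2)) * (fun x => G x ^ ((1:ℝ)/2))) x ∂μ := by
        refine lintegral_congr fun x => ?_
        simp only [Pi.mul_apply]
        rw [hl2φ x, hl2ψ x]
      rw [h1]
      refine le_trans (ENNReal.lintegral_mul_le_Lp_mul_Lq μ hconj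
        ((hFm.pow_const _).aemeasurable) ((hGm.pow_const _).aemeasurable)) ?_
      simp_rw [hsimp]
      rw [hintF, hintG]
      rw [ENNReal.mul_rpow_of_nonneg _ _ (by norm_num : (0:ℝ) ≤ 1/2),
        ENNReal.mul_rpow_of_nonneg _ _ (by norm_num : (0:ℝ) ≤ 1/2)]
    -- casting: the constant
      have hc0 : ((J + R : ℕ) : ℝ≥0∞) ≠ 0 := by
        simp only [ne_eq, Nat.cast_eq_zero]
        omega
      have hcc : ((J + R : ℕ) : ℝ≥0∞) ^ ((1:ℝ)/2) * ((J + R : ℕ) : ℝ≥0∞) ^ ((1:ℝ)/2)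
          = ((J + R : ℕ) : ℝ≥0∞) := by
        rw [← ENNReal.rpow_add _ _ hc0 (ENNReal.natCast_ne_top _)]
        norm_num
      calc ((J + R : ℕ) : ℝ≥0∞) ^ ((1:ℝ)/2) * If ^ ((1:ℝ)/2) *
            (((J + R : ℕ) : ℝ≥0∞) ^ ((1:ℝ)/2) * Ig ^ ((1:ℝ)/2))
          = (((J + R : ℕ) : ℝ≥0∞) ^ ((1:ℝ)/2) * ((J + R : ℕ) : ℝ≥0∞) ^ ((1:ℝ)/2)) *
            (If ^ ((1:ℝ)/2) * Ig ^ ((1:ℝ)/2)) := by ring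
        _ = ((J + R : ℕ) : ℝ≥0∞) * (A * B) := by rw [hcc, hAeq, hBeq]
        _ ≤ ((J + R : ℕ) : ℝ≥0∞) * (A * B) := le_rfl
    -- put it together
    calc (J : ℝ≥0∞) * (ENNReal.ofReal lam * μ (E N₀))
        = ENNReal.ofReal lam * ((J : ℝ≥0∞) * μ (E N₀)) := by ring
      _ = ENNReal.ofReal lam * ∫⁻ x, (cnt x : ℝ≥0∞) ∂μ := by rw [hint1]
      _ = ∫⁻ x, ENNReal.ofReal lam * (cnt x : ℝ≥0∞) ∂μ := by
          rw [lintegral_const_mul' _ _ ENNReal.ofReal_ne_top]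
      _ ≤ ∫⁻ x, ENNReal.ofReal C * (l2NormZ (φ x) * l2NormZ (ψ x)) ∂μ :=
          lintegral_mono fun x => hpt x
      _ = ENNReal.ofReal C * ∫⁻ x, l2NormZ (φ x) * l2NormZ (ψ x) ∂μ := by
          rw [lintegral_const_mul' _ _ ENNReal.ofReal_ne_top]
      _ ≤ ENNReal.ofReal C * (((J + R : ℕ) : ℝ≥0∞) * (A * B)) :=
          mul_le_mul_right hHolder _
      _ = ((J + R : ℕ) : ℝ≥0∞) * K := by rw [hKdef]; ring
  -- take J → ∞
  set L := ENNReal.ofReal lam * μ (E N₀) with hL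
  have hLne : L ≠ ∞ := ENNReal.mul_ne_top ENNReal.ofReal_ne_top (measure_ne_top μ _)
  show L ≤ K
  by_contra hcon
  push_neg at hcon
  have hKL : K.toReal < L.toReal := (ENNReal.toReal_lt_toReal hKne hLne).mpr hcon
  have hK0 : 0 ≤ K.toReal := ENNReal.toReal_nonneg
  obtain ⟨J₀, hJ₀⟩ := exists_nat_gt (((R : ℝ) * K.toReal) / (L.toReal - K.toReal))
  set J := max J₀ 2 with hJdef
  have hJ2 : 2 ≤ J := le_max_right _ _
  have hJJ₀ : (J₀ : ℝ) ≤ J := by exact_mod_cast le_max_left _ _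
  have hineq := hJmain J hJ2
  have hreal : (J : ℝ) * L.toReal ≤ ((J : ℝ) + (R : ℝ)) * K.toReal := by
    have h1 : ((J : ℝ≥0∞) * L).toReal ≤ (((J + R : ℕ) : ℝ≥0∞) * K).toReal := by
      refine (ENNReal.toReal_le_toReal ?_ ?_).mpr hineq
      · exact ENNReal.mul_ne_top (ENNReal.natCast_ne_top _) hLne
      · exact ENNReal.mul_ne_top (ENNReal.natCast_ne_top _) hKne
    have h2 : ((J : ℝ≥0∞) * L).toReal = (J : ℝ) * L.toReal := by
      rw [ENNReal.toReal_mul, ENNReal.toReal_natCast]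
    have h3 : ((((J + R : ℕ)) : ℝ≥0∞) * K).toReal = ((J : ℝ) + (R : ℝ)) * K.toReal := by
      rw [ENNReal.toReal_mul, ENNReal.toReal_natCast]
      push_cast
      ring
    rw [h2, h3] at h1
    exact h1
  have hpos : 0 < L.toReal - K.toReal := by linarith
  have hgt : ((R : ℝ) * K.toReal) / (L.toReal - K.toReal) < (J : ℝ) := lt_of_lt_of_le hJ₀ hJJ₀
  rw [div_lt_iff₀ hpos] at hgt
  nlinarith [hgt, hreal]

/-- Calderón transference principle, weak type: a weak type `(2,2)` bound for the
bilinear maximal function of the weighted averages along polynomials `P, Q` on the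
integers transfers to any dynamical system. -/
theorem calderon_transference_weak_type
    {X : Type*} [MeasurableSpace X] (μ : Measure X) [IsProbabilityMeasure μ]
    (T : X ≃ᵐ X) (hT : MeasurePreserving (⇑T) μ μ)
    (a : ℕ → ℂ) (P Q : Polynomial ℤ)
    (hP : 0 < P.natDegree) (hQ : 0 < Q.natDegree)
    (hPnat : ∀ n : ℕ, 0 ≤ P.eval (n : ℤ)) (hQnat : ∀ n : ℕ, 0 ≤ Q.eval (n : ℤ))
    (C : ℝ) (hC : 0 < C)
    (hyp : ∀ φ ψ : ℤ → ℂ, (Function.support φ).Finite → (Function.support ψ).Finite →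
      ∀ lam : ℝ, 0 < lam → ∀ J : ℕ, 2 ≤ J →
      ENNReal.ofReal lam *
          (Set.ncard {j : ℤ | 1 ≤ j ∧ j ≤ (J : ℤ) ∧
            ENNReal.ofReal lam < ⨆ N : ℕ, ⨆ _ : 1 ≤ N,
              (‖(1 / (N : ℂ)) * ∑ n ∈ Finset.Icc 1 N,
                  a n * φ (j + P.eval (n : ℤ)) * ψ (j + Q.eval (n : ℤ))‖₊ : ℝ≥0∞)} : ℕ)
        ≤ ENNReal.ofReal C * l2NormZ φ * l2NormZ ψ)
    (f g : X → ℂ) (hf : MemLp f 2 μ) (hg : MemLp g 2 μ) :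
    ∀ lam : ℝ, 0 < lam →
      ENNReal.ofReal lam *
          μ {x : X | ENNReal.ofReal lam < ⨆ N : ℕ, ⨆ _ : 1 ≤ N,
              (‖(1 / (N : ℂ)) * ∑ n ∈ Finset.Icc 1 N,
                  a n * f ((⇑T)^[(P.eval (n : ℤ)).toNat] x)
                    * g ((⇑T)^[(Q.eval (n : ℤ)).toNat] x)‖₊ : ℝ≥0∞)}
        ≤ ENNReal.ofReal C * eLpNorm f 2 μ * eLpNorm g 2 μ := by
  intro lam hlam
  classical
  set f' := hf.1.mk f with hf'def
  set g' := hg.1.mk g with hg'def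
  have hf'm : Measurable f' := hf.1.stronglyMeasurable_mk.measurable
  have hg'm : Measurable g' := hg.1.stronglyMeasurable_mk.measurable
  have hff' : f =ᵐ[μ] f' := hf.1.ae_eq_mk
  have hgg' : g =ᵐ[μ] g' := hg.1.ae_eq_mk
  have hf'L : eLpNorm f' 2 μ ≠ ∞ := by
    rw [← eLpNorm_congr_ae hff']; exact hf.2.ne
  have hg'L : eLpNorm g' 2 μ ≠ ∞ := by
    rw [← eLpNorm_congr_ae hgg']; exact hg.2.ne
  -- bad set
  have hfnull : μ {x | f x ≠ f' x} = 0 := ae_iff.mp hff'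
  have hgnull : μ {x | g x ≠ g' x} = 0 := ae_iff.mp hgg'
  obtain ⟨Nf, hNfsub, hNfm, hNf0⟩ := exists_measurable_superset_of_null hfnull
  obtain ⟨Ng, hNgsub, hNgm, hNg0⟩ := exists_measurable_superset_of_null hgnull
  set Bad := ⋃ k : ℕ, (⇑T)^[k] ⁻¹' (Nf ∪ Ng) with hBad
  have hBad0 : μ Bad = 0 := by
    refine measure_iUnion_null fun k => ?_
    rw [(hT.iterate k).measure_preimage (hNfm.union hNgm).nullMeasurableSet]
    exact measure_union_null hNf0 hNg0
  have hagree : ∀ x ∉ Bad, ∀ k : ℕ, f ((⇑T)^[k] x) = f' ((⇑T)^[k] x)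
      ∧ g ((⇑T)^[k] x) = g' ((⇑T)^[k] x) := by
    intro x hx k
    constructor
    · by_contra h
      exact hx (Set.mem_iUnion.mpr ⟨k, Set.mem_preimage.mpr
        (Set.mem_union_left _ (hNfsub h))⟩)
    · by_contra h
      exact hx (Set.mem_iUnion.mpr ⟨k, Set.mem_preimage.mpr
        (Set.mem_union_right _ (hNgsub h))⟩)
  have hseteq : μ {x : X | ENNReal.ofReal lam < ⨆ N : ℕ, ⨆ _ : 1 ≤ N,
        (‖(1 / (N : ℂ)) * ∑ n ∈ Finset.Icc 1 N,
            a n * f ((⇑T)^[(P.eval (n : ℤ)).toNat] x)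
              * g ((⇑T)^[(Q.eval (n : ℤ)).toNat] x)‖₊ : ℝ≥0∞)}
      = μ {x : X | ENNReal.ofReal lam < ⨆ N : ℕ, ⨆ _ : 1 ≤ N,
        (‖(1 / (N : ℂ)) * ∑ n ∈ Finset.Icc 1 N,
            a n * f' ((⇑T)^[(P.eval (n : ℤ)).toNat] x)
              * g' ((⇑T)^[(Q.eval (n : ℤ)).toNat] x)‖₊ : ℝ≥0∞)} := by
    apply measure_congr
    rw [Filter.eventuallyEq_set]
    have hnotbad : ∀ᵐ x ∂μ, x ∉ Bad := by
      rw [ae_iff]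
      simpa using hBad0
    filter_upwards [hnotbad] with x hx
    have heq : ∀ N : ℕ, (‖(1 / (N : ℂ)) * ∑ n ∈ Finset.Icc 1 N,
        a n * f ((⇑T)^[(P.eval (n : ℤ)).toNat] x)
          * g ((⇑T)^[(Q.eval (n : ℤ)).toNat] x)‖₊ : ℝ≥0∞)
        = (‖(1 / (N : ℂ)) * ∑ n ∈ Finset.Icc 1 N,
        a n * f' ((⇑T)^[(P.eval (n : ℤ)).toNat] x)
          * g' ((⇑T)^[(Q.eval (n : ℤ)).toNat] x)‖₊ : ℝ≥0∞) := by
      intro N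
      have hsum : (∑ n ∈ Finset.Icc 1 N,
          a n * f ((⇑T)^[(P.eval (n : ℤ)).toNat] x)
            * g ((⇑T)^[(Q.eval (n : ℤ)).toNat] x))
          = ∑ n ∈ Finset.Icc 1 N,
          a n * f' ((⇑T)^[(P.eval (n : ℤ)).toNat] x)
            * g' ((⇑T)^[(Q.eval (n : ℤ)).toNat] x) :=
        Finset.sum_congr rfl fun n _ => by
          rw [(hagree x hx _).1, (hagree x hx _).2]
      rw [hsum]
    constructor
    · intro h
      refine lt_of_lt_of_le h (iSup_le fun N => iSup_le fun hN => ?_)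
      rw [heq N]
      exact le_iSup_of_le N (le_iSup_of_le hN le_rfl)
    · intro h
      refine lt_of_lt_of_le h (iSup_le fun N => iSup_le fun hN => ?_)
      rw [← heq N]
      exact le_iSup_of_le N (le_iSup_of_le hN le_rfl)
  rw [hseteq, eLpNorm_congr_ae hff', eLpNorm_congr_ae hgg']
  exact calderon_core μ T hT a P Q hPnat hQnat C hyp f' g' hf'm hg'm hf'L hg'L lam hlam
end

section
/- There exist absolute constants c, C > 0 such that for every positive integer J, every δ > 0, and every 1-bounded function ψ : {1, …, J} → ℂ (i.e. |ψ(n)| ≤ 1 for all n), there is a finite set E₀ ⊂ 𝕋 = ℝ/ℤ such that: (1) any two distinct points λ, γ ∈ E₀ satisfy |λ − γ| ≥ c/J; (2) |E₀| ≤ C δ^{−2}; (3) { λ ∈ 𝕋 : |∑_{n=1}^{J} ψ(n) e^{2πinλ}| > δ J } ⊆ E₀(c/J). -/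
open scoped Real

open Complex MeasureTheory intervalIntegral Finset

noncomputable def mzP (J : ℕ) (φ : ℕ → ℂ) (x : ℝ) : ℂ :=
  ∑ n ∈ Finset.Icc 1 J, φ n * Complex.exp (2 * Real.pi * Complex.I * n * x)

lemma mzP_continuous (J : ℕ) (φ : ℕ → ℂ) : Continuous (mzP J φ) := by
  unfold mzP; fun_prop

lemma mzP_periodic (J : ℕ) (φ : ℕ → ℂ) : Function.Periodic (mzP J φ) 1 := by
  intro x
  unfold mzP
  refine Finset.sum_congr rfl fun n hn => ?_
  congr 1
  rw [show ((x + 1 : ℝ) : ℂ) = (x : ℂ) + 1 by push_cast; ring]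
  rw [show (2 * Real.pi * Complex.I * n * ((x:ℂ)+1) : ℂ)
      = 2 * Real.pi * Complex.I * n * x + (n : ℤ) * (2 * Real.pi * Complex.I) by push_cast; ring,
    Complex.exp_add, Complex.exp_int_mul_two_pi_mul_I (n : ℤ), mul_one]

lemma mzP_hasDerivAt (J : ℕ) (φ : ℕ → ℂ) (x : ℝ) :
    HasDerivAt (mzP J φ) (mzP J (fun n => 2 * Real.pi * Complex.I * n * φ n) x) x := by
  unfold mzP
  apply HasDerivAt.fun_sum
  intro n _
  have h1 : HasDerivAt (fun y : ℝ => Complex.exp (2 * Real.pi * Complex.I * n * y))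
      (2 * Real.pi * Complex.I * n * Complex.exp (2 * Real.pi * Complex.I * n * x)) x := by
    have := ((hasDerivAt_id (x : ℂ)).const_mul (2 * Real.pi * Complex.I * n)).cexp.comp_ofReal
    simpa [mul_one, mul_comm] using this
  have := h1.const_mul (φ n)
  convert this using 1
  · rfl
  ring

lemma mz_orth (k : ℤ) :
    (∫ x in (0:ℝ)..1, Complex.exp ((2 * Real.pi * Complex.I * k) * x))
      = if k = 0 then 1 else 0 := by
  rcases eq_or_ne k 0 with hk | hk
  · simp [hk]
  · have hc : (2 * Real.pi * Complex.I * k : ℂ) ≠ 0 := by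
      simp [Real.pi_ne_zero, Complex.I_ne_zero, hk]
    rw [if_neg hk, integral_exp_mul_complex hc]
    rw [show (2 * Real.pi * Complex.I * k * (1:ℝ) : ℂ) = (k:ℤ) * (2 * Real.pi * Complex.I) by
      push_cast; ring]
    simp [Complex.exp_int_mul_two_pi_mul_I k]

set_option maxHeartbeats 1000000 in
lemma mz_parseval (J : ℕ) (φ : ℕ → ℂ) :
    (∫ x in (0:ℝ)..1, ‖mzP J φ x‖ ^ 2) = ∑ n ∈ Finset.Icc 1 J, ‖φ n‖ ^ 2 := by
  have key : (∫ x in (0:ℝ)..1, (mzP J φ x) * (starRingEnd ℂ) (mzP J φ x))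
      = ∑ n ∈ Finset.Icc 1 J, (φ n) * (starRingEnd ℂ) (φ n) := by
    have expand : ∀ x : ℝ, (mzP J φ x) * (starRingEnd ℂ) (mzP J φ x)
        = ∑ n ∈ Finset.Icc 1 J, ∑ m ∈ Finset.Icc 1 J,
            (φ n * (starRingEnd ℂ) (φ m)) *
              Complex.exp ((2 * Real.pi * Complex.I * ((((n : ℤ) - (m : ℤ)) : ℤ) : ℂ)) * x) := by
      intro x
      unfold mzP
      rw [map_sum, Finset.sum_mul_sum]
      refine Finset.sum_congr rfl fun n _ => Finset.sum_congr rfl fun m _ => ?_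
      rw [map_mul, ← Complex.exp_conj]
      rw [show (starRingEnd ℂ) (2 * Real.pi * Complex.I * m * x)
          = -(2 * Real.pi * Complex.I * m * x) by
        simp only [map_mul, Complex.conj_I, Complex.conj_ofReal, map_ofNat,
          Complex.conj_natCast]
        ring]
      rw [show φ n * Complex.exp (2 * Real.pi * Complex.I * n * x) *
          ((starRingEnd ℂ) (φ m) * Complex.exp (-(2 * Real.pi * Complex.I * m * x)))
          = (φ n * (starRingEnd ℂ) (φ m)) *
            (Complex.exp (2 * Real.pi * Complex.I * n * x) *
             Complex.exp (-(2 * Real.pi * Complex.I * m * x))) by ring]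
      rw [← Complex.exp_add]
      congr 2
      push_cast
      ring
    have hint : ∀ n m : ℕ, IntervalIntegrable (fun x : ℝ =>
        (φ n * (starRingEnd ℂ) (φ m)) *
          Complex.exp ((2 * Real.pi * Complex.I * ((((n : ℤ) - (m : ℤ)) : ℤ) : ℂ)) * x))
        MeasureTheory.volume 0 1 := by
      intro n m
      apply Continuous.intervalIntegrable
      fun_prop
    have hsum : ∀ n ∈ Finset.Icc 1 J, IntervalIntegrable (fun x : ℝ =>
        ∑ m ∈ Finset.Icc 1 J, (φ n * (starRingEnd ℂ) (φ m)) *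
          Complex.exp ((2 * Real.pi * Complex.I * ((((n : ℤ) - (m : ℤ)) : ℤ) : ℂ)) * x))
        MeasureTheory.volume 0 1 := by
      intro n _
      apply Continuous.intervalIntegrable
      fun_prop
    simp_rw [expand]
    rw [intervalIntegral.integral_finset_sum
      (f := fun n x => ∑ m ∈ Finset.Icc 1 J, (φ n * (starRingEnd ℂ) (φ m)) *
        Complex.exp ((2 * Real.pi * Complex.I * ((((n : ℤ) - (m : ℤ)) : ℤ) : ℂ)) * x)) hsum]
    calc
      ∑ n ∈ Finset.Icc 1 J, ∫ x in (0:ℝ)..1, ∑ m ∈ Finset.Icc 1 J,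
          (φ n * (starRingEnd ℂ) (φ m)) *
            Complex.exp ((2 * Real.pi * Complex.I * ((((n : ℤ) - (m : ℤ)) : ℤ) : ℂ)) * x)
        = ∑ n ∈ Finset.Icc 1 J, ∑ m ∈ Finset.Icc 1 J, (φ n * (starRingEnd ℂ) (φ m)) *
            (if ((n : ℤ) - (m : ℤ)) = 0 then 1 else 0) := by
          refine Finset.sum_congr rfl fun n _ => ?_
          rw [intervalIntegral.integral_finset_sum (fun m _ => hint n m)]
          refine Finset.sum_congr rfl fun m _ => ?_
          rw [intervalIntegral.integral_const_mul, mz_orth]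
      _ = ∑ n ∈ Finset.Icc 1 J, (φ n) * (starRingEnd ℂ) (φ n) := by
          refine Finset.sum_congr rfl fun n hn => ?_
          simp only [sub_eq_zero, Int.natCast_inj, mul_ite, mul_one, mul_zero]
          rw [Finset.sum_ite_eq (Finset.Icc 1 J) n (fun m => φ n * (starRingEnd ℂ) (φ m)),
            if_pos hn]
  have h1 : ∀ z : ℂ, z * (starRingEnd ℂ) z = ((‖z‖ ^ 2 : ℝ) : ℂ) := by
    intro z
    rw [Complex.mul_conj]
    norm_cast
    rw [Complex.normSq_eq_norm_sq]
  simp_rw [h1] at key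
  rw [intervalIntegral.integral_ofReal] at key
  rw [show (∑ n ∈ Finset.Icc 1 J, ((‖φ n‖ ^ 2 : ℝ) : ℂ))
      = ((∑ n ∈ Finset.Icc 1 J, (‖φ n‖ ^ 2 : ℝ) : ℝ) : ℂ) by push_cast; ring] at key
  exact_mod_cast key

lemma mz_normsq_hasDerivAt {F : ℝ → ℂ} {F' : ℂ} {x : ℝ} (hF : HasDerivAt F F' x) :
    HasDerivAt (fun y => ‖F y‖ ^ 2)
      ((F' * (starRingEnd ℂ) (F x) + F x * (starRingEnd ℂ) F').re) x := by
  have hconj : HasDerivAt (fun y => (starRingEnd ℂ) (F y)) ((starRingEnd ℂ) F') x := by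
    simpa [Function.comp_def] using (Complex.conjCLE.hasFDerivAt.comp_hasDerivAt x hF)
  have hmul : HasDerivAt (fun y => F y * (starRingEnd ℂ) (F y))
      (F' * (starRingEnd ℂ) (F x) + F x * (starRingEnd ℂ) F') x := hF.mul hconj
  have hre := Complex.reCLM.hasFDerivAt.comp_hasDerivAt x hmul
  have heq : (⇑Complex.reCLM ∘ fun y => F y * (starRingEnd ℂ) (F y))
      = fun y => ‖F y‖ ^ 2 := by
    funext y
    simp only [Function.comp_apply, Complex.reCLM_apply, Complex.mul_conj, Complex.ofReal_re]
    rw [Complex.normSq_eq_norm_sq]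
  rw [heq] at hre
  simpa using hre

lemma mz_re_bound (z w : ℂ) : |(z * (starRingEnd ℂ) w + w * (starRingEnd ℂ) z).re|
    ≤ 2 * ‖w‖ * ‖z‖ := by
  have h1 : (w * (starRingEnd ℂ) z) = (starRingEnd ℂ) (z * (starRingEnd ℂ) w) := by
    rw [map_mul, Complex.conj_conj]; ring
  rw [h1, Complex.add_re, Complex.conj_re, ← two_mul, abs_mul]
  have h2 : |(z * (starRingEnd ℂ) w).re| ≤ ‖z * (starRingEnd ℂ) w‖ := Complex.abs_re_le_norm _
  have h3 : ‖z * (starRingEnd ℂ) w‖ = ‖z‖ * ‖w‖ := by rw [norm_mul]; simp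
  have h4 : |(z * (starRingEnd ℂ) w).re| ≤ ‖z‖ * ‖w‖ := h3 ▸ h2
  have h5 : |(2:ℝ)| = 2 := by norm_num
  rw [h5]
  nlinarith [h4]

lemma mz_sobolev {f g : ℝ → ℝ} (hf : ∀ x, HasDerivAt f (g x) x)
    (hg : Continuous g) (x₀ h : ℝ) (hh : 0 < h) :
    f x₀ ≤ (1/(2*h)) * (∫ y in (x₀-h)..(x₀+h), f y) + ∫ y in (x₀-h)..(x₀+h), |g y| := by
  have hfc : Continuous f := by
    have hd : Differentiable ℝ f := fun x => (hf x).differentiableAt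
    exact hd.continuous
  set A := ∫ y in (x₀-h)..(x₀+h), |g y| with hA
  have hle : x₀ - h ≤ x₀ + h := by linarith
  have hgi : MeasureTheory.IntegrableOn (fun y => |g y|) (Set.Ioc (x₀-h) (x₀+h))
      MeasureTheory.volume := hg.abs.integrableOn_Ioc
  have key : ∀ y ∈ Set.Icc (x₀-h) (x₀+h), f x₀ - A ≤ f y := by
    intro y hy
    have hftc : ∫ t in y..x₀, g t = f x₀ - f y :=
      intervalIntegral.integral_eq_sub_of_hasDerivAt (fun t _ => hf t)
        (hg.intervalIntegrable _ _)
    have hb : |∫ t in y..x₀, g t| ≤ A := by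
      have h1 : |∫ t in y..x₀, g t| ≤ ∫ t in Set.uIoc y x₀, |g t| := by
        simpa [Real.norm_eq_abs] using
          intervalIntegral.norm_integral_le_integral_norm_uIoc (f := g) (a := y) (b := x₀)
      have h2 : (∫ t in Set.uIoc y x₀, |g t|) ≤ ∫ t in Set.Ioc (x₀-h) (x₀+h), |g t| := by
        apply MeasureTheory.setIntegral_mono_set hgi
        · exact Filter.Eventually.of_forall (fun t => abs_nonneg _)
        · apply HasSubset.Subset.eventuallyLE
          rw [Set.uIoc]
          apply Set.Ioc_subset_Ioc
          · exact le_min hy.1 (by linarith)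
          · exact max_le hy.2 (by linarith)
      rw [hA, intervalIntegral.integral_of_le hle]
      exact h1.trans h2
    have := (abs_le.mp (hftc ▸ hb)).2
    linarith
  have hmono : (∫ _ in (x₀-h)..(x₀+h), (f x₀ - A)) ≤ ∫ y in (x₀-h)..(x₀+h), f y := by
    apply intervalIntegral.integral_mono_on hle
    · exact intervalIntegrable_const
    · exact hfc.intervalIntegrable _ _
    · exact key
  rw [intervalIntegral.integral_const, show (x₀ + h - (x₀ - h)) = 2*h by ring,
    smul_eq_mul] at hmono
  have hhpos : (0:ℝ) < 2*h := by linarith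
  have h6 : f x₀ - A ≤ (∫ y in (x₀-h)..(x₀+h), f y) / (2*h) := by
    rw [le_div_iff₀ hhpos]
    linarith
  rw [one_div, inv_mul_eq_div]
  linarith

lemma mz_disjoint_sum (E : Finset (AddCircle (1:ℝ))) (x : AddCircle (1:ℝ) → ℝ)
    (hx : ∀ lam ∈ E, x lam ∈ Set.Ico (0:ℝ) 1)
    (h : ℝ) (hh : 0 < h) (hh2 : h ≤ 1/2)
    (hsep : ∀ lam ∈ E, ∀ gam ∈ E, lam ≠ gam → 2*h ≤ |x lam - x gam|)
    {g : ℝ → ℝ} (hg : Continuous g) (hgpos : ∀ y, 0 ≤ g y)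
    (hgper : Function.Periodic g 1) :
    (∑ lam ∈ E, ∫ y in (x lam - h)..(x lam + h), g y) ≤ 3 * ∫ y in (0:ℝ)..1, g y := by
  have hdisj : (↑E : Set (AddCircle (1:ℝ))).PairwiseDisjoint
      (fun lam => Set.Ioc (x lam - h) (x lam + h)) := by
    intro lam hlam gam hgam hne
    have hs := hsep lam (by exact_mod_cast hlam) gam (by exact_mod_cast hgam) hne
    rw [Function.onFun, Set.Ioc_disjoint_Ioc]
    rcases abs_cases (x lam - x gam) with ⟨h1, _⟩ | ⟨h1, _⟩
    · calc min (x lam + h) (x gam + h) ≤ x gam + h := min_le_right _ _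
        _ ≤ x lam - h := by linarith
        _ ≤ max (x lam - h) (x gam - h) := le_max_left _ _
    · calc min (x lam + h) (x gam + h) ≤ x lam + h := min_le_left _ _
        _ ≤ x gam - h := by linarith
        _ ≤ max (x lam - h) (x gam - h) := le_max_right _ _
  have hsum : (∑ lam ∈ E, ∫ y in (x lam - h)..(x lam + h), g y)
      = ∫ y in (⋃ lam ∈ E, Set.Ioc (x lam - h) (x lam + h)), g y := by
    rw [MeasureTheory.integral_biUnion_finset E (fun lam _ => measurableSet_Ioc) hdisj
      (fun lam _ => hg.integrableOn_Ioc)]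
    refine Finset.sum_congr rfl fun lam hlam => ?_
    rw [intervalIntegral.integral_of_le (by linarith)]
  have hsub : (⋃ lam ∈ E, Set.Ioc (x lam - h) (x lam + h)) ⊆ Set.Ioc (-1 : ℝ) 2 := by
    intro y hy
    simp only [Set.mem_iUnion] at hy
    obtain ⟨lam, hlam, hy⟩ := hy
    have hxl := hx lam hlam
    exact ⟨by linarith [hy.1, hxl.1], by linarith [hy.2, hxl.2.le]⟩
  have hmono : (∫ y in (⋃ lam ∈ E, Set.Ioc (x lam - h) (x lam + h)), g y)
      ≤ ∫ y in Set.Ioc (-1:ℝ) 2, g y :=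
    MeasureTheory.setIntegral_mono_set hg.integrableOn_Ioc
      (Filter.Eventually.of_forall fun y => hgpos y) (HasSubset.Subset.eventuallyLE hsub)
  have e1 : (∫ y in (-1:ℝ)..0, g y) = ∫ y in (0:ℝ)..1, g y := by
    simpa using hgper.intervalIntegral_add_eq (-1) 0
  have e2 : (∫ y in (1:ℝ)..2, g y) = ∫ y in (0:ℝ)..1, g y := by
    rw [show (2:ℝ) = 1 + 1 by norm_num]
    simpa using hgper.intervalIntegral_add_eq 1 0
  have hper : (∫ y in Set.Ioc (-1:ℝ) 2, g y) = 3 * ∫ y in (0:ℝ)..1, g y := by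
    rw [← intervalIntegral.integral_of_le (by norm_num : (-1:ℝ) ≤ 2)]
    rw [← intervalIntegral.integral_add_adjacent_intervals (b := 0)
      (hg.intervalIntegrable _ _) (hg.intervalIntegrable _ _),
      ← intervalIntegral.integral_add_adjacent_intervals (a := 0) (b := 1)
      (hg.intervalIntegrable _ _) (hg.intervalIntegrable _ _), e1, e2]
    ring
  rw [hsum]
  linarith [hmono, hper.le, hper.ge]

noncomputable def mzRep (lam : AddCircle (1:ℝ)) : ℝ := Int.fract (Quotient.out (lam : ℝ ⧸ AddSubgroup.zmultiples (1:ℝ)))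

lemma mzRep_mem (lam : AddCircle (1:ℝ)) : mzRep lam ∈ Set.Ico (0:ℝ) 1 :=
  ⟨Int.fract_nonneg _, Int.fract_lt_one _⟩

lemma mz_coe_fract (y : ℝ) : ((Int.fract y : ℝ) : AddCircle (1:ℝ)) = (y : AddCircle (1:ℝ)) := by
  rw [Int.fract]
  rw [QuotientAddGroup.mk_sub]
  have : (((⌊y⌋ : ℝ) : AddCircle (1:ℝ))) = 0 := by
    rw [QuotientAddGroup.eq_zero_iff]
    exact AddSubgroup.intCast_mem_zmultiples_one _
  rw [this, sub_zero]

lemma mzRep_coe (lam : AddCircle (1:ℝ)) : ((mzRep lam : ℝ) : AddCircle (1:ℝ)) = lam := by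
  rw [mzRep, mz_coe_fract]
  exact QuotientAddGroup.out_eq' lam

lemma mz_dist_le (x y : ℝ) :
    dist ((x : ℝ) : AddCircle (1:ℝ)) ((y : ℝ) : AddCircle (1:ℝ)) ≤ |x - y| := by
  rw [dist_eq_norm]
  rw [← QuotientAddGroup.mk_sub]
  rw [AddCircle.norm_eq]
  simpa using round_le (x - y) 0

lemma mz_card_le (J : ℕ) (hJ : 1 ≤ J) (E : Finset (AddCircle (1:ℝ)))
    (hsep : ∀ lam ∈ E, ∀ gam ∈ E, lam ≠ gam → 1/(J:ℝ) ≤ dist lam gam) :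
    E.card ≤ J := by
  classical
  have hJ0 : (0:ℝ) < J := by exact_mod_cast hJ
  have hmaps : ∀ lam ∈ E, (⌊mzRep lam * J⌋).toNat ∈ Finset.range J := by
    intro lam _
    have h1 : mzRep lam * J < J := by
      have := (mzRep_mem lam).2
      nlinarith
    have h2 : ⌊mzRep lam * J⌋ < (J:ℤ) := by
      exact_mod_cast Int.floor_lt.mpr (by exact_mod_cast h1)
    rw [Finset.mem_range]
    omega
  have : E.card ≤ (Finset.range J).card :=
    Finset.card_le_card_of_injOn (fun lam => (⌊mzRep lam * J⌋).toNat) hmaps ?_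
  · simpa using this
  intro lam hlam gam hgam heq
  by_contra hne
  have hnn : ∀ mu : AddCircle (1:ℝ), (0:ℤ) ≤ ⌊mzRep mu * J⌋ := by
    intro mu
    apply Int.floor_nonneg.mpr
    have := (mzRep_mem mu).1
    positivity
  dsimp only at heq
  have heq' : ⌊mzRep lam * J⌋ = ⌊mzRep gam * J⌋ := by
    have h1 := hnn lam
    have h2 := hnn gam
    omega
  have habs : |mzRep lam * J - mzRep gam * J| < 1 := by
    have l1 := Int.floor_le (mzRep lam * J)
    have l2 := Int.lt_floor_add_one (mzRep lam * J)
    have l3 := Int.floor_le (mzRep gam * J)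
    have l4 := Int.lt_floor_add_one (mzRep gam * J)
    rw [abs_lt]
    rw [heq'] at l1 l2
    constructor <;> linarith
  have hdle : dist lam gam ≤ |mzRep lam - mzRep gam| := by
    have := mz_dist_le (mzRep lam) (mzRep gam)
    rwa [mzRep_coe, mzRep_coe] at this
  have hsep' := hsep lam hlam gam hgam hne
  have : |mzRep lam - mzRep gam| * J < 1 := by
    have : |(mzRep lam - mzRep gam) * J| < 1 := by
      rw [show (mzRep lam - mzRep gam) * J = mzRep lam * J - mzRep gam * J by ring]
      exact habs
    rwa [abs_mul, abs_of_pos hJ0] at this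
  have : (1:ℝ)/J ≤ |mzRep lam - mzRep gam| := le_trans hsep' hdle
  rw [div_le_iff₀ hJ0] at this
  linarith

lemma mz_amgm (a u v : ℝ) (ha : 0 < a) :
    2 * u * v ≤ a * u ^ 2 + v ^ 2 / a := by
  rw [div_eq_mul_inv, ← sub_nonneg]
  have h2 : (0:ℝ) < a⁻¹ := by positivity
  have h3 : 0 ≤ (a * u - v) ^ 2 * a⁻¹ := by positivity
  have he : a * u ^ 2 + v ^ 2 * a⁻¹ - 2 * u * v = (a * u - v) ^ 2 * a⁻¹ := by
    field_simp
    ring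
  rw [he]
  exact h3


set_option maxHeartbeats 800000 in
/-- Marcinkiewicz–Zygmund-type level set localization: there are absolute constants
`c, C > 0` such that for every `J ≥ 1`, `δ > 0` and 1-bounded `ψ : {1,…,J} → ℂ`, there
is a finite set `E₀` in the circle `𝕋 = ℝ/ℤ` whose points are `c/J`-separated, with
`|E₀| ≤ C δ⁻²`, and such that the level set
`{λ : |∑_{n=1}^J ψ(n) e^{2πinλ}| > δJ}` is contained in the `c/J`-neighbourhood of `E₀`. -/
theorem level_set_in_neighbourhood_of_separated_set :
    ∃ c : ℝ, 0 < c ∧ ∃ C : ℝ, 0 < C ∧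
      ∀ (J : ℕ), 1 ≤ J → ∀ (δ : ℝ), 0 < δ → ∀ ψ : ℕ → ℂ,
        (∀ n ∈ Finset.Icc 1 J, ‖ψ n‖ ≤ 1) →
        ∃ E₀ : Finset (AddCircle (1 : ℝ)),
          (∀ lam ∈ E₀, ∀ gam ∈ E₀, lam ≠ gam → c / J ≤ dist lam gam) ∧
          (E₀.card : ℝ) ≤ C / δ ^ 2 ∧
          {lam : AddCircle (1 : ℝ) |
              δ * J < ‖∑ n ∈ Finset.Icc 1 J, ψ n * fourier (n : ℤ) lam‖}
            ⊆ {lam : AddCircle (1 : ℝ) | ∃ gam ∈ E₀, dist lam gam < c / J} := by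
  classical
  refine ⟨1, one_pos, 64, by norm_num, ?_⟩
  intro J hJ δ hδ ψ hψ
  have hJ0 : (0:ℝ) < J := by exact_mod_cast hJ
  have hJ1 : (1:ℝ) ≤ J := by exact_mod_cast hJ
  set L : Set (AddCircle (1:ℝ)) :=
    {lam | δ * J < ‖∑ n ∈ Finset.Icc 1 J, ψ n * fourier (n : ℤ) lam‖} with hLdef
  set P : ℕ → Prop := fun k => ∃ E : Finset (AddCircle (1:ℝ)),
    (↑E ⊆ L) ∧ (∀ lam ∈ E, ∀ gam ∈ E, lam ≠ gam → 1/(J:ℝ) ≤ dist lam gam) ∧ E.card = k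
    with hPdef
  have hP0 : P 0 := ⟨∅, by simp, by simp, rfl⟩
  have hPbound : ∀ k, P k → k ≤ J := by
    rintro k ⟨E, _, hsepE, hcard⟩
    exact hcard ▸ mz_card_le J hJ E hsepE
  set K := Nat.findGreatest P J with hKdef
  have hPK : P K := Nat.findGreatest_spec (Nat.zero_le J) hP0
  obtain ⟨E₀, hEL, hEsep, hEcard⟩ := hPK
  have hEsep' : ∀ lam ∈ E₀, ∀ gam ∈ E₀, lam ≠ gam → (1:ℝ) / J ≤ dist lam gam := by
    intro lam hlam gam hgam hne
    simpa using hEsep lam hlam gam hgam hne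
  refine ⟨E₀, by exact_mod_cast hEsep', ?_, ?_⟩
  · -- cardinality bound
    set ψd : ℕ → ℂ := fun n => 2 * Real.pi * Complex.I * n * ψ n with hψd
    set h : ℝ := 1 / (2 * (J:ℝ)) with hhdef
    have hh : 0 < h := by positivity
    have hπ := Real.pi_pos
    have hπ4 := Real.pi_le_four
    set G : ℝ → ℝ := fun y => ((J:ℝ) + 2 * Real.pi * J) * ‖mzP J ψ y‖ ^ 2
      + (1 / (2 * Real.pi * J)) * ‖mzP J ψd y‖ ^ 2 with hGdef
    have hcψ := mzP_continuous J ψ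
    have hcψd := mzP_continuous J ψd
    have hGcont : Continuous G := by
      rw [hGdef]
      fun_prop
    have hGpos : ∀ y, 0 ≤ G y := by
      intro y
      rw [hGdef]
      have h1 : (0:ℝ) ≤ (J:ℝ) + 2 * Real.pi * J := by positivity
      have h2 : (0:ℝ) ≤ 1 / (2 * Real.pi * J) := by positivity
      positivity
    have hGper : Function.Periodic G 1 := by
      intro y
      rw [hGdef]
      simp only
      rw [mzP_periodic J ψ y, mzP_periodic J ψd y]
    have hfour : ∀ mu : AddCircle (1:ℝ),
        (∑ n ∈ Finset.Icc 1 J, ψ n * fourier (n : ℤ) mu) = mzP J ψ (mzRep mu) := by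
      intro mu
      conv_lhs => rw [← mzRep_coe mu]
      unfold mzP
      refine Finset.sum_congr rfl fun n _ => ?_
      congr 1
      rw [fourier_coe_apply]
      push_cast
      ring
    have hFlevel : ∀ lam ∈ E₀, (δ * J) ^ 2 ≤ ‖mzP J ψ (mzRep lam)‖ ^ 2 := by
      intro lam hlam
      have hmem : lam ∈ L := hEL hlam
      rw [hLdef, Set.mem_setOf_eq, hfour lam] at hmem
      nlinarith [hmem, norm_nonneg (mzP J ψ (mzRep lam)), mul_pos hδ hJ0]
    have hkey : ∀ lam ∈ E₀,
        (δ * J) ^ 2 ≤ ∫ y in (mzRep lam - h)..(mzRep lam + h), G y := by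
      intro lam hlam
      set x₀ := mzRep lam with hx₀
      set fd : ℝ → ℝ := fun x => (mzP J ψd x * (starRingEnd ℂ) (mzP J ψ x)
            + mzP J ψ x * (starRingEnd ℂ) (mzP J ψd x)).re with hfd
      have hda : ∀ x : ℝ, HasDerivAt (fun y => ‖mzP J ψ y‖ ^ 2) (fd x) x := by
        intro x
        have := mz_normsq_hasDerivAt (mzP_hasDerivAt J ψ x)
        exact this
      have hfdcont : Continuous fd := by
        rw [hfd]
        fun_prop
      have hsob := mz_sobolev hda hfdcont x₀ h hh
      have h2h : 1 / (2 * h) = (J:ℝ) := by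
        rw [hhdef]
        field_simp
      have hptw : ∀ y, |fd y| ≤ 2 * Real.pi * J * ‖mzP J ψ y‖ ^ 2
          + ‖mzP J ψd y‖ ^ 2 / (2 * Real.pi * J) := by
        intro y
        have h1 : |fd y| ≤ 2 * ‖mzP J ψ y‖ * ‖mzP J ψd y‖ := mz_re_bound _ _
        have h2 := mz_amgm (2 * Real.pi * J) (‖mzP J ψ y‖) (‖mzP J ψd y‖) (by positivity)
        calc |fd y| ≤ 2 * ‖mzP J ψ y‖ * ‖mzP J ψd y‖ := h1
          _ ≤ _ := h2
      have hmono : (∫ y in (x₀ - h)..(x₀ + h), |fd y|)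
          ≤ ∫ y in (x₀ - h)..(x₀ + h),
              (2 * Real.pi * J * ‖mzP J ψ y‖ ^ 2
                + ‖mzP J ψd y‖ ^ 2 / (2 * Real.pi * J)) := by
        apply intervalIntegral.integral_mono_on (by linarith)
        · exact (hfdcont.abs).intervalIntegrable _ _
        · apply Continuous.intervalIntegrable
          fun_prop
        · exact fun y _ => hptw y
      have hcomb : (J:ℝ) * (∫ y in (x₀ - h)..(x₀ + h), ‖mzP J ψ y‖ ^ 2)
          + (∫ y in (x₀ - h)..(x₀ + h),
              (2 * Real.pi * J * ‖mzP J ψ y‖ ^ 2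
                + ‖mzP J ψd y‖ ^ 2 / (2 * Real.pi * J)))
          = ∫ y in (x₀ - h)..(x₀ + h), G y := by
        rw [← intervalIntegral.integral_const_mul]
        rw [← intervalIntegral.integral_add
          (by apply Continuous.intervalIntegrable; fun_prop)
          (by apply Continuous.intervalIntegrable; fun_prop)]
        refine intervalIntegral.integral_congr fun y _ => ?_
        rw [hGdef]
        simp only
        field_simp
        ring
      calc (δ * J) ^ 2 ≤ ‖mzP J ψ x₀‖ ^ 2 := hFlevel lam hlam
        _ ≤ (1 / (2 * h)) * (∫ y in (x₀ - h)..(x₀ + h), ‖mzP J ψ y‖ ^ 2)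
            + ∫ y in (x₀ - h)..(x₀ + h), |fd y| := hsob
        _ ≤ (J:ℝ) * (∫ y in (x₀ - h)..(x₀ + h), ‖mzP J ψ y‖ ^ 2)
            + ∫ y in (x₀ - h)..(x₀ + h),
              (2 * Real.pi * J * ‖mzP J ψ y‖ ^ 2
                + ‖mzP J ψd y‖ ^ 2 / (2 * Real.pi * J)) := by
            rw [h2h]
            linarith
        _ = ∫ y in (x₀ - h)..(x₀ + h), G y := hcomb
    have hsep2 : ∀ lam ∈ E₀, ∀ gam ∈ E₀, lam ≠ gam →
        2 * h ≤ |mzRep lam - mzRep gam| := by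
      intro lam hlam gam hgam hne
      have hd := hEsep' lam hlam gam hgam hne
      have hdle : dist lam gam ≤ |mzRep lam - mzRep gam| := by
        have := mz_dist_le (mzRep lam) (mzRep gam)
        rwa [mzRep_coe, mzRep_coe] at this
      have h2h' : 2 * h = 1 / (J:ℝ) := by
        rw [hhdef]
        field_simp
      rw [h2h']
      linarith
    have hsum : (E₀.card : ℝ) * (δ * J) ^ 2 ≤ 3 * ∫ y in (0:ℝ)..1, G y := by
      have hs1 : (E₀.card : ℝ) * (δ * J) ^ 2
          ≤ ∑ lam ∈ E₀, ∫ y in (mzRep lam - h)..(mzRep lam + h), G y := by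
        calc (E₀.card : ℝ) * (δ * J) ^ 2 = ∑ _lam ∈ E₀, (δ * J) ^ 2 := by
              rw [Finset.sum_const, nsmul_eq_mul]
          _ ≤ _ := Finset.sum_le_sum hkey
      have hs2 := mz_disjoint_sum E₀ mzRep (fun lam _ => mzRep_mem lam) h hh
        (by rw [hhdef]; rw [div_le_div_iff₀ (by positivity) (by norm_num)]; nlinarith [hJ1])
        hsep2 hGcont hGpos hGper
      linarith
    have hSψ : (∑ n ∈ Finset.Icc 1 J, ‖ψ n‖ ^ 2) ≤ (J:ℝ) := by
      calc (∑ n ∈ Finset.Icc 1 J, ‖ψ n‖ ^ 2) ≤ ∑ _n ∈ Finset.Icc 1 J, (1:ℝ) := by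
            apply Finset.sum_le_sum
            intro n hn
            have := hψ n hn
            nlinarith [norm_nonneg (ψ n)]
        _ = (J:ℝ) := by
            rw [Finset.sum_const, nsmul_eq_mul, Nat.card_Icc]
            simp
    have hSψd : (∑ n ∈ Finset.Icc 1 J, ‖ψd n‖ ^ 2) ≤ (2 * Real.pi * J) ^ 2 * J := by
      calc (∑ n ∈ Finset.Icc 1 J, ‖ψd n‖ ^ 2)
          ≤ ∑ _n ∈ Finset.Icc 1 J, (2 * Real.pi * (J:ℝ)) ^ 2 := by
            apply Finset.sum_le_sum
            intro n hn
            have hn2 : (n:ℝ) ≤ J := by exact_mod_cast (Finset.mem_Icc.mp hn).2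
            have hb := hψ n hn
            have h0n : (0:ℝ) ≤ (n:ℝ) := Nat.cast_nonneg n
            have hnorm : ‖ψd n‖ = 2 * Real.pi * n * ‖ψ n‖ := by
              rw [hψd]
              simp only
              rw [norm_mul, norm_mul, norm_mul, norm_mul]
              simp [abs_of_pos hπ]
            rw [hnorm]
            have hle : 2 * Real.pi * (n:ℝ) * ‖ψ n‖ ≤ 2 * Real.pi * (J:ℝ) := by
              have b1 : 2 * Real.pi * (n:ℝ) * ‖ψ n‖ ≤ 2 * Real.pi * (n:ℝ) * 1 :=
                mul_le_mul_of_nonneg_left hb (by positivity)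
              have b2 : 2 * Real.pi * (n:ℝ) ≤ 2 * Real.pi * (J:ℝ) :=
                mul_le_mul_of_nonneg_left hn2 (by positivity)
              linarith
            have h0 : (0:ℝ) ≤ 2 * Real.pi * (n:ℝ) * ‖ψ n‖ := by positivity
            exact pow_le_pow_left₀ h0 hle 2
        _ = (2 * Real.pi * J) ^ 2 * J := by
            rw [Finset.sum_const, nsmul_eq_mul, Nat.card_Icc]
            simp
            ring
    have hGint : (∫ y in (0:ℝ)..1, G y)
        = ((J:ℝ) + 2 * Real.pi * J) * (∑ n ∈ Finset.Icc 1 J, ‖ψ n‖ ^ 2)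
          + (1 / (2 * Real.pi * J)) * (∑ n ∈ Finset.Icc 1 J, ‖ψd n‖ ^ 2) := by
      rw [hGdef]
      simp only
      rw [intervalIntegral.integral_add
        (by apply Continuous.intervalIntegrable; fun_prop)
        (by apply Continuous.intervalIntegrable; fun_prop),
        intervalIntegral.integral_const_mul, intervalIntegral.integral_const_mul,
        mz_parseval, mz_parseval]
    have hfin : (E₀.card : ℝ) * (δ * J) ^ 2 ≤ 51 * (J:ℝ) ^ 2 := by
      have t1 : ((J:ℝ) + 2 * Real.pi * J) * (∑ n ∈ Finset.Icc 1 J, ‖ψ n‖ ^ 2)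
          ≤ ((J:ℝ) + 2 * Real.pi * J) * J :=
        mul_le_mul_of_nonneg_left hSψ (by positivity)
      have t2 : (1 / (2 * Real.pi * J)) * (∑ n ∈ Finset.Icc 1 J, ‖ψd n‖ ^ 2)
          ≤ (1 / (2 * Real.pi * J)) * ((2 * Real.pi * J) ^ 2 * J) :=
        mul_le_mul_of_nonneg_left hSψd (by positivity)
      have t3 : (1 / (2 * Real.pi * J)) * ((2 * Real.pi * J) ^ 2 * J)
          = 2 * Real.pi * J * J := by
        field_simp
      have t4 : (∫ y in (0:ℝ)..1, G y) ≤ (1 + 4 * Real.pi) * (J:ℝ) ^ 2 := by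
        rw [hGint]
        nlinarith [t1, t2, t3]
      nlinarith [hsum, t4]
    have hδ2 : (0:ℝ) < δ ^ 2 := by positivity
    rw [le_div_iff₀ hδ2]
    have hJ2 : (0:ℝ) < (J:ℝ) ^ 2 := by positivity
    have h51 : (E₀.card : ℝ) * δ ^ 2 ≤ 51 := by
      have hshape : (E₀.card : ℝ) * (δ * J) ^ 2 = ((E₀.card : ℝ) * δ ^ 2) * (J:ℝ) ^ 2 := by
        ring
      rw [hshape] at hfin
      have := le_of_mul_le_mul_right (by linarith [hfin] : ((E₀.card : ℝ) * δ ^ 2) * (J:ℝ) ^ 2 ≤ 51 * (J:ℝ) ^ 2) hJ2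
      exact this
    linarith
  · -- covering
    intro lam hlam
    by_contra hcon
    simp only [Set.mem_setOf_eq, not_exists, not_and, not_lt] at hcon
    have hnotmem : lam ∉ E₀ := by
      intro hmem
      have h1 := hcon lam hmem
      rw [dist_self] at h1
      have h2 : (0:ℝ) < 1 / J := by positivity
      linarith
    have hP' : P (K + 1) := by
      refine ⟨insert lam E₀, ?_, ?_, ?_⟩
      · intro mu hmu
        rw [Finset.coe_insert] at hmu
        rcases hmu with rfl | h
        · exact hlam
        · exact hEL h
      · intro mu hmu nu hnu hne
        rcases Finset.mem_insert.mp hmu with rfl | hmu' <;>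
          rcases Finset.mem_insert.mp hnu with rfl | hnu'
        · exact absurd rfl hne
        · exact hcon nu hnu'
        · rw [dist_comm]; exact hcon mu hmu'
        · exact hEsep' mu hmu' nu hnu' hne
      · rw [Finset.card_insert_of_notMem hnotmem, hEcard]
    have h1 : K + 1 ≤ J := hPbound _ hP'
    have h2 : K + 1 ≤ K := Nat.le_findGreatest h1 hP'
    omega
end
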